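/- arXiv:1602.02345 — 4 statements merged into one kernel-verified Lean document; each statement's English description precedes it below -/
import Mathlib

section
/- Suppose θ_i > 0 for all i = 1,…,n, the family {F_θ} satisfies the MLR assumption, and T_1,…,T_n are positively regression dependent (Assumption 3). For j ∈ {1,…,n−1}, let E_{n−j} = ⋃_{m=j+1}^{n} {T_{j+1} > c_2, …, T_{m−1} > c_2, T_m < c_1} be the event that at least one type 3 error is made when testing H_{j+1},…,H_n with the directional fixed sequence procedure at constant level α. Then, whenever Pr(T_1 > c_2, …, T_j > c_2) > 0, Pr(E_{n−j} | T_1 > c_2, …, T_j > c_2) ≤ α. -/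
open MeasureTheory ProbabilityTheory
open Set

lemma mlr_marginal
    (g h : ℝ → ℝ)
    (hg0 : ∀ x, 0 ≤ g x)
    (c₁ c₂ : ℝ) (hc : c₁ < c₂)
    (hgint : IntegrableOn g (Iic c₂)) (hhint : IntegrableOn h (Iic c₂))
    (hmlr : ∀ x y : ℝ, x < y → g x * h y ≤ g y * h x)
    (α : ℝ) (hα0 : 0 < α) (hα1 : α < 1)
    (hh1 : ∫ t in Iic c₁, h t = α / 2)
    (hh2 : ∫ t in Iic c₂, h t = 1 - α / 2) :
    ∫ t in Iic c₁, g t ≤ α * ∫ t in Iic c₂, g t := by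
  have hsub1 : Iic c₁ ⊆ Iic c₂ := Iic_subset_Iic.2 hc.le
  have hgi1 : IntegrableOn g (Iic c₁) := hgint.mono_set hsub1
  have hhi1 : IntegrableOn h (Iic c₁) := hhint.mono_set hsub1
  have hgi2 : IntegrableOn g (Ioc c₁ c₂) := hgint.mono_set Ioc_subset_Iic_self
  have hhi2 : IntegrableOn h (Ioc c₁ c₂) := hhint.mono_set Ioc_subset_Iic_self
  set a : ℝ := ∫ t in Iic c₁, g t with ha
  set b : ℝ := ∫ t in Ioc c₁ c₂, g t with hb
  set b' : ℝ := ∫ t in Ioc c₁ c₂, h t with hb'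
  have hsplit : ∀ (φ : ℝ → ℝ), IntegrableOn φ (Iic c₁) → IntegrableOn φ (Ioc c₁ c₂) →
      (∫ t in Iic c₂, φ t) = (∫ t in Iic c₁, φ t) + ∫ t in Ioc c₁ c₂, φ t := by
    intro φ h1 h2
    rw [← Set.Iic_union_Ioc_eq_Iic hc.le,
      setIntegral_union (Set.Iic_disjoint_Ioc le_rfl) measurableSet_Ioc h1 h2]
  have hbval : b' = 1 - α := by
    have := hsplit h hhi1 hhi2
    rw [hh2, hh1] at this; linarith [this]
  have hgsplit : (∫ t in Iic c₂, g t) = a + b := hsplit g hgi1 hgi2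
  have ha0 : 0 ≤ a := setIntegral_nonneg measurableSet_Iic (fun x _ => hg0 x)
  have hb0 : 0 ≤ b := setIntegral_nonneg measurableSet_Ioc (fun x _ => hg0 x)
  have key : a * b' ≤ (α / 2) * b := by
    have step : ∀ x ∈ Iic c₁, g x * b' ≤ h x * b := by
      intro x hx
      have h1 : (∫ t in Ioc c₁ c₂, g x * h t) ≤ ∫ t in Ioc c₁ c₂, g t * h x := by
        apply setIntegral_mono_on (hhi2.const_mul _) (hgi2.mul_const _) measurableSet_Ioc
        intro y hy
        exact hmlr x y (lt_of_le_of_lt hx hy.1)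
      calc g x * b' = ∫ t in Ioc c₁ c₂, g x * h t := by
            rw [MeasureTheory.integral_const_mul]
        _ ≤ ∫ t in Ioc c₁ c₂, g t * h x := h1
        _ = h x * b := by rw [MeasureTheory.integral_mul_const]; ring
    calc a * b' = ∫ x in Iic c₁, g x * b' := by rw [MeasureTheory.integral_mul_const]
      _ ≤ ∫ x in Iic c₁, h x * b :=
          setIntegral_mono_on (hgi1.mul_const _) (hhi1.mul_const _) measurableSet_Iic step
      _ = (α/2) * b := by rw [MeasureTheory.integral_mul_const, hh1]
  have hfin : a * (1 - α) ≤ (α / 2) * b := hbval ▸ key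
  rw [hgsplit]
  nlinarith [hfin, ha0, hb0]

lemma no_atom {Ω : Type*} [MeasurableSpace Ω] (Pr : Measure Ω) [IsProbabilityMeasure Pr]
    (T : Ω → ℝ) (G : ℝ → ℝ) (hG : Continuous G)
    (hcdf : ∀ x, (Pr {ω | T ω ≤ x}).toReal = G x) (x : ℝ) :
    Pr {ω | T ω < x} = Pr {ω | T ω ≤ x} := by
  refine le_antisymm (measure_mono fun ω (h : T ω < x) => le_of_lt h) ?_
  rw [← ENNReal.toReal_le_toReal (measure_ne_top _ _) (measure_ne_top _ _), hcdf]
  refine le_of_forall_pos_le_add fun ε hε => ?_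
  obtain ⟨δ, hδ, hball⟩ := Metric.continuousAt_iff.1 (hG.continuousAt (x := x)) ε hε
  have h1 : dist (x - δ/2) x < δ := by
    rw [Real.dist_eq]; rw [abs_of_nonpos] <;> [skip; linarith]; linarith
  have h2 := hball h1
  rw [Real.dist_eq, abs_lt] at h2
  have h3 : G (x - δ/2) ≤ (Pr {ω | T ω < x}).toReal := by
    rw [← hcdf]
    exact ENNReal.toReal_mono (measure_ne_top _ _) (measure_mono fun ω h => by
      simp only [Set.mem_setOf_eq] at *; linarith)
  linarith

lemma ind_int {Ω β : Type*} [MeasurableSpace Ω] [MeasurableSpace β] (Pr : Measure Ω)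
    [IsProbabilityMeasure Pr]
    (S : Set β) (hS : MeasurableSet S) (h : Ω → β) (hh : Measurable h)
    (A : Set Ω) :
    ∫ ω in A, S.indicator (fun _ => (1:ℝ)) (h ω) ∂Pr = (Pr (A ∩ h ⁻¹' S)).toReal := by
  have heq : ∀ ω, S.indicator (fun _ => (1:ℝ)) (h ω)
      = (h ⁻¹' S).indicator (fun _ => (1:ℝ)) ω := by
    intro ω
    by_cases hw : h ω ∈ S
    · rw [Set.indicator_of_mem hw, Set.indicator_of_mem (show ω ∈ h ⁻¹' S from hw)]
    · rw [Set.indicator_of_notMem hw, Set.indicator_of_notMem (show ω ∉ h ⁻¹' S from hw)]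
  simp only [heq]
  rw [setIntegral_indicator (hh hS), setIntegral_const, smul_eq_mul, mul_one]; rfl

lemma tel_sum (p : ℕ → ℝ) (j : ℕ) : ∀ n : ℕ,
    (∑ k ∈ Finset.range n, (if j < k then p k - p (k+1) else 0))
      = if j + 1 ≤ n then p (j+1) - p n else 0 := by
  intro n
  induction n with
  | zero => simp
  | succ n ih =>
    rw [Finset.sum_range_succ, ih]
    rcases lt_trichotomy j n with h | h | h
    · rw [if_pos h, if_pos (by omega), if_pos (by omega)]; ring
    · subst h; rw [if_neg (by omega), if_neg (by omega), if_pos (by omega)]; ring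
    · rw [if_neg (by omega), if_neg (by omega), if_neg (by omega)]; ring


/-- Lemma 4: If all θ_i > 0, the family satisfies MLR and the
statistics are positively regression dependent, then conditionally on
T₁ > c₂,…,T_j > c₂, the probability of making at least one type 3 error when
testing the remaining hypotheses at constant level α is at most α. -/
theorem conditional_type3_error_bound_lemma4
    {Ω : Type*} [MeasurableSpace Ω] (Pr : Measure Ω) [IsProbabilityMeasure Pr]
    (F : ℝ → ℝ → ℝ)
    (hFcont : ∀ θ, Continuous (F θ))
    (hFmono : ∀ θ, Monotone (F θ))
    (hF0strict : StrictMono (F 0))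
    (hFsym : ∀ x : ℝ, F 0 (-x) = 1 - F 0 x)
    (hstoch : ∀ θ θ' : ℝ, θ ≤ θ' → ∀ x, F θ' x ≤ F θ x)
    -- MLR assumption (Assumption 2)
    (f : ℝ → ℝ → ℝ)
    (hf_nonneg : ∀ θ x, 0 ≤ f θ x)
    (hf_meas : ∀ θ, Measurable (f θ))
    (hf_cdf : ∀ θ x, F θ x = ∫ t in Set.Iic x, f θ t)
    (hMLR : ∀ θ θ' : ℝ, θ < θ' → ∀ x₁ x₂ : ℝ, x₁ < x₂ →
      f θ' x₁ * f θ x₂ ≤ f θ' x₂ * f θ x₁)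
    (n : ℕ) (θ : Fin n → ℝ) (hθpos : ∀ i, 0 < θ i)
    (T : Fin n → Ω → ℝ) (hT : ∀ i, Measurable (T i))
    (hcdf : ∀ i x, (Pr {ω | T i ω ≤ x}).toReal = F (θ i) x)
    -- Positive regression dependence (Assumption 3, all nulls false with θ_i > 0)
    (hPRD : ∀ k : Fin n, ∀ φ : (Fin n → ℝ) → ℝ,
      Measurable φ → Monotone φ → (∃ C, ∀ x, |φ x| ≤ C) →
      ∀ u u' : ℝ, u ≤ u' →
        (Pr {ω | u ≤ T k ω} ≠ 0 → Pr {ω | u' ≤ T k ω} ≠ 0 →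
          (∫ ω in {ω | u ≤ T k ω}, φ (fun i => T i ω) ∂Pr)
              / (Pr {ω | u ≤ T k ω}).toReal
            ≤ (∫ ω in {ω | u' ≤ T k ω}, φ (fun i => T i ω) ∂Pr)
              / (Pr {ω | u' ≤ T k ω}).toReal) ∧
        (Pr {ω | T k ω < u} ≠ 0 → Pr {ω | T k ω < u'} ≠ 0 →
          (∫ ω in {ω | T k ω < u}, φ (fun i => T i ω) ∂Pr)
              / (Pr {ω | T k ω < u}).toReal
            ≤ (∫ ω in {ω | T k ω < u'}, φ (fun i => T i ω) ∂Pr)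
              / (Pr {ω | T k ω < u'}).toReal))
    (α : ℝ) (hα : α ∈ Set.Ioo (0 : ℝ) 1)
    (c₁ c₂ : ℝ) (hc₁ : F 0 c₁ = α / 2) (hc₂ : F 0 c₂ = 1 - α / 2) :
    ∀ j : Fin n, (j : ℕ) + 1 < n →
      Pr {ω | ∀ l : Fin n, l ≤ j → c₂ < T l ω} ≠ 0 →
      (Pr ({ω | ∃ m : Fin n, j < m ∧ (∀ l : Fin n, j < l → l < m → c₂ < T l ω) ∧
              T m ω < c₁}
            ∩ {ω | ∀ l : Fin n, l ≤ j → c₂ < T l ω})).toReal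
          / (Pr {ω | ∀ l : Fin n, l ≤ j → c₂ < T l ω}).toReal
        ≤ α := by
  obtain ⟨hα0, hα1⟩ := hα
  intro j hjn hPos
  -- c₁ < c₂
  have hc : c₁ < c₂ := by
    by_contra hcon
    push_neg at hcon
    have := hFmono 0 hcon
    rw [hc₁, hc₂] at this; linarith
  -- the nested events
  set Gk : ℕ → Set Ω := fun k => {ω | ∀ l : Fin n, (l : ℕ) < k → c₂ < T l ω} with hGk
  have hGkmeas : ∀ k, MeasurableSet (Gk k) := by
    intro k
    have : Gk k = ⋂ (l : Fin n), ⋂ (_ : (l : ℕ) < k), T l ⁻¹' Ioi c₂ := by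
      ext ω; simp [hGk, Set.mem_iInter, Set.mem_preimage]
    rw [this]
    exact MeasurableSet.iInter fun l => MeasurableSet.iInter fun _ =>
      (hT l) measurableSet_Ioi
  set p : ℕ → ℝ := fun k => (Pr (Gk k)).toReal with hp
  have hpanti : ∀ k, p (k + 1) ≤ p k := by
    intro k
    exact ENNReal.toReal_mono (measure_ne_top _ _)
      (measure_mono fun ω hω l hl => hω l (Nat.lt_succ_of_lt hl))
  have hpnn : ∀ k, 0 ≤ p k := fun k => ENNReal.toReal_nonneg
  -- A_j equals Gk (j+1)
  have hAj : {ω | ∀ l : Fin n, l ≤ j → c₂ < T l ω} = Gk ((j : ℕ) + 1) := by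
    ext ω
    simp only [hGk, Set.mem_setOf_eq]
    constructor
    · intro hω l hl
      exact hω l (by rw [Fin.le_def]; omega)
    · intro hω l hl
      exact hω l (by rw [Fin.le_def] at hl; omega)
  -- no atoms
  have hltcdf : ∀ (i : Fin n) (x : ℝ), (Pr {ω | T i ω < x}).toReal = F (θ i) x := by
    intro i x
    rw [no_atom Pr (T i) (F (θ i)) (hFcont _) (hcdf i) x, hcdf]
  -- marginal MLR bound
  have hmarg : ∀ i : Fin n, F (θ i) c₁ ≤ α * F (θ i) c₂ := by
    intro i
    have hnn1 : 0 ≤ F (θ i) c₁ := by rw [← hcdf]; exact ENNReal.toReal_nonneg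
    have hnn2 : 0 ≤ F (θ i) c₂ := by rw [← hcdf]; exact ENNReal.toReal_nonneg
    by_cases hz : F (θ i) c₂ = 0
    · have := hFmono (θ i) hc.le
      nlinarith
    · have hint : IntegrableOn (f (θ i)) (Iic c₂) := by
        by_contra hni
        exact hz (by rw [hf_cdf, MeasureTheory.integral_undef hni])
      have hint0 : IntegrableOn (f 0) (Iic c₂) := by
        by_contra hni
        have h0 := hf_cdf 0 c₂
        rw [MeasureTheory.integral_undef hni] at h0
        rw [hc₂] at h0; linarith
      have := mlr_marginal (f (θ i)) (f 0) (hf_nonneg _) c₁ c₂ hc hint hint0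
        (fun x y hxy => hMLR 0 (θ i) (hθpos i) x y hxy) α hα0 hα1
        (by rw [← hf_cdf, hc₁]) (by rw [← hf_cdf, hc₂])
      rwa [← hf_cdf, ← hf_cdf] at this
  -- key per-m inequality
  have hkey : ∀ m : Fin n,
      (Pr (Gk (m : ℕ) ∩ {ω | T m ω < c₁})).toReal
        ≤ α * ((Pr (Gk (m : ℕ) ∩ {ω | T m ω ≤ c₂})).toReal) := by
    intro m
    by_cases h₁ : Pr {ω | T m ω < c₁} = 0
    · have : Pr (Gk (m : ℕ) ∩ {ω | T m ω < c₁}) = 0 :=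
        measure_mono_null Set.inter_subset_right h₁
      rw [this]
      exact mul_nonneg hα0.le ENNReal.toReal_nonneg |>.trans_eq' (by simp)
    · have h₂ : Pr {ω | T m ω < c₂} ≠ 0 := by
        intro hz
        exact h₁ (measure_mono_null (fun ω (hω : T m ω < c₁) => hω.trans hc) hz)
      -- monotone indicator test function
      set S : Set (Fin n → ℝ) := {y | ∀ l : Fin n, (l : ℕ) < (m : ℕ) → c₂ < y l} with hSdef
      have hS : MeasurableSet S := by
        have : S = ⋂ (l : Fin n), ⋂ (_ : (l : ℕ) < (m : ℕ)),
            (fun y : Fin n → ℝ => y l) ⁻¹' Ioi c₂ := by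
          ext y; simp [hSdef, Set.mem_iInter, Set.mem_preimage]
        rw [this]
        exact MeasurableSet.iInter fun l => MeasurableSet.iInter fun _ =>
          (measurable_pi_apply l) measurableSet_Ioi
      set φ : (Fin n → ℝ) → ℝ := S.indicator (fun _ => 1) with hφdef
      have hφmeas : Measurable φ := measurable_const.indicator hS
      have hφmono : Monotone φ := by
        intro x y hxy
        by_cases hx : x ∈ S
        · have hy : y ∈ S := fun l hl => lt_of_lt_of_le (hx l hl) (hxy l)
          rw [hφdef, Set.indicator_of_mem hx, Set.indicator_of_mem hy]
        · rw [hφdef, Set.indicator_of_notMem hx]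
          exact Set.indicator_nonneg (fun _ _ => zero_le_one) y
      have hφbdd : ∃ C, ∀ x, |φ x| ≤ C := by
        refine ⟨1, fun x => ?_⟩
        by_cases hx : x ∈ S
        · rw [hφdef, Set.indicator_of_mem hx]; norm_num
        · rw [hφdef, Set.indicator_of_notMem hx]; norm_num
      have happ := (hPRD m φ hφmeas hφmono hφbdd c₁ c₂ hc.le).2 h₁ h₂
      -- rewrite the integrals as probabilities
      have hTm : Measurable (fun ω => fun i => T i ω) :=
        measurable_pi_lambda _ hT
      have hpre : (fun ω => fun i => T i ω) ⁻¹' S = Gk (m : ℕ) := rfl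
      have hI : ∀ u : ℝ, (∫ ω in {ω | T m ω < u}, φ (fun i => T i ω) ∂Pr)
          = (Pr ({ω | T m ω < u} ∩ Gk (m : ℕ))).toReal := by
        intro u
        rw [hφdef]
        rw [ind_int Pr S hS _ hTm, hpre]
      rw [hI, hI] at happ
      set I₁ : ℝ := (Pr ({ω | T m ω < c₁} ∩ Gk (m : ℕ))).toReal with hI₁
      set I₂ : ℝ := (Pr ({ω | T m ω < c₂} ∩ Gk (m : ℕ))).toReal with hI₂
      set P₁ : ℝ := (Pr {ω | T m ω < c₁}).toReal with hP₁
      set P₂ : ℝ := (Pr {ω | T m ω < c₂}).toReal with hP₂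
      have hP₁pos : 0 < P₁ := ENNReal.toReal_pos h₁ (measure_ne_top _ _)
      have hP₂pos : 0 < P₂ := ENNReal.toReal_pos h₂ (measure_ne_top _ _)
      have hI₂nn : 0 ≤ I₂ := ENNReal.toReal_nonneg
      have hPbound : P₁ ≤ α * P₂ := by
        rw [hP₁, hP₂, hltcdf, hltcdf]; exact hmarg m
      have step1 : I₁ ≤ I₂ / P₂ * P₁ := (div_le_iff₀ hP₁pos).1 happ
      have step2 : I₂ / P₂ * P₁ ≤ I₂ / P₂ * (α * P₂) :=
        mul_le_mul_of_nonneg_left hPbound (div_nonneg hI₂nn hP₂pos.le)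
      have step3 : I₂ / P₂ * (α * P₂) = α * I₂ := by
        field_simp
      have step4 : I₂ ≤ (Pr (Gk (m : ℕ) ∩ {ω | T m ω ≤ c₂})).toReal := by
        apply ENNReal.toReal_mono (measure_ne_top _ _)
        apply measure_mono
        rintro ω ⟨hω1, hω2⟩
        have h1 : T m ω < c₂ := hω1
        exact ⟨hω2, show T m ω ≤ c₂ from le_of_lt h1⟩
      have : (Pr (Gk (m : ℕ) ∩ {ω | T m ω < c₁})).toReal = I₁ := by
        rw [hI₁, Set.inter_comm]
      rw [this]
      calc I₁ ≤ I₂ / P₂ * P₁ := step1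
        _ ≤ I₂ / P₂ * (α * P₂) := step2
        _ = α * I₂ := step3
        _ ≤ α * (Pr (Gk (m : ℕ) ∩ {ω | T m ω ≤ c₂})).toReal :=
            mul_le_mul_of_nonneg_left step4 hα0.le
  -- telescoping identity: Gk m ∩ {T m ≤ c₂} relates p m and p (m+1)
  have hstepeq : ∀ m : Fin n,
      (Pr (Gk (m : ℕ) ∩ {ω | T m ω ≤ c₂})).toReal = p (m : ℕ) - p ((m : ℕ) + 1) := by
    intro m
    have hGsucc : Gk ((m : ℕ) + 1) = Gk (m : ℕ) ∩ {ω | c₂ < T m ω} := by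
      ext ω
      simp only [hGk, Set.mem_setOf_eq, Set.mem_inter_iff]
      constructor
      · intro hω
        exact ⟨fun l hl => hω l (Nat.lt_succ_of_lt hl), hω m (Nat.lt_succ_self _)⟩
      · intro ⟨hω1, hω2⟩ l hl
        rcases Nat.lt_succ_iff_lt_or_eq.1 hl with h | h
        · exact hω1 l h
        · have : l = m := Fin.ext h
          rw [this]; exact hω2
    have hunion : Gk (m : ℕ) = (Gk (m : ℕ) ∩ {ω | c₂ < T m ω})
        ∪ (Gk (m : ℕ) ∩ {ω | T m ω ≤ c₂}) := by
      ext ω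
      constructor
      · intro hω
        rcases lt_or_ge c₂ (T m ω) with h | h
        · exact Or.inl ⟨hω, h⟩
        · exact Or.inr ⟨hω, h⟩
      · rintro (⟨h, _⟩ | ⟨h, _⟩) <;> exact h
    have hdisj : Disjoint (Gk (m : ℕ) ∩ {ω | c₂ < T m ω})
        (Gk (m : ℕ) ∩ {ω | T m ω ≤ c₂}) := by
      rw [Set.disjoint_iff_inter_eq_empty]
      ext ω
      simp only [Set.mem_inter_iff, Set.mem_setOf_eq, Set.mem_empty_iff_false, iff_false]
      rintro ⟨⟨_, h1⟩, ⟨_, h2⟩⟩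
      exact absurd h2 (not_le.2 h1)
    have hmeas2 : MeasurableSet (Gk (m : ℕ) ∩ {ω | T m ω ≤ c₂}) :=
      (hGkmeas _).inter ((hT m) measurableSet_Iic)
    have hPr : Pr (Gk (m : ℕ)) = Pr (Gk (m : ℕ) ∩ {ω | c₂ < T m ω})
        + Pr (Gk (m : ℕ) ∩ {ω | T m ω ≤ c₂}) := by
      rw [← measure_union hdisj hmeas2, ← hunion]
    have := congrArg ENNReal.toReal hPr
    rw [ENNReal.toReal_add (measure_ne_top _ _) (measure_ne_top _ _)] at this
    rw [hp]
    simp only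
    rw [hGsucc]
    linarith [this]
  -- union bound
  set E : Set Ω := {ω | ∃ m : Fin n, j < m ∧ (∀ l : Fin n, j < l → l < m → c₂ < T l ω) ∧
      T m ω < c₁} with hE
  set D : Fin n → Set Ω := fun m =>
    if (j : ℕ) < (m : ℕ) then Gk (m : ℕ) ∩ {ω | T m ω < c₁} else ∅ with hD
  have hsub : E ∩ {ω | ∀ l : Fin n, l ≤ j → c₂ < T l ω} ⊆ ⋃ m, D m := by
    rintro ω ⟨⟨m, hjm, hbet, hltm⟩, hA⟩
    refine Set.mem_iUnion.2 ⟨m, ?_⟩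
    rw [hD]
    simp only
    rw [if_pos (Fin.lt_def.1 hjm)]
    refine ⟨fun l hl => ?_, hltm⟩
    rcases le_or_gt l j with h | h
    · exact hA l h
    · exact hbet l h (Fin.lt_def.2 hl)
  have hunionle : Pr (E ∩ {ω | ∀ l : Fin n, l ≤ j → c₂ < T l ω})
      ≤ ∑ m : Fin n, Pr (D m) :=
    le_trans (measure_mono hsub) (measure_iUnion_fintype_le _ _)
  have hsumfin : (∑ m : Fin n, Pr (D m)) ≠ ⊤ :=
    ENNReal.sum_ne_top.2 fun m _ => measure_ne_top _ _
  have htoreal : (Pr (E ∩ {ω | ∀ l : Fin n, l ≤ j → c₂ < T l ω})).toReal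
      ≤ ∑ m : Fin n, (Pr (D m)).toReal := by
    calc (Pr (E ∩ {ω | ∀ l : Fin n, l ≤ j → c₂ < T l ω})).toReal
        ≤ (∑ m : Fin n, Pr (D m)).toReal := ENNReal.toReal_mono hsumfin hunionle
      _ = ∑ m : Fin n, (Pr (D m)).toReal :=
          ENNReal.toReal_sum fun m _ => measure_ne_top _ _
  have hperm : ∀ m : Fin n, (Pr (D m)).toReal
      ≤ α * (if (j : ℕ) < (m : ℕ) then p (m : ℕ) - p ((m : ℕ) + 1) else 0) := by
    intro m
    rw [hD]
    simp only
    by_cases h : (j : ℕ) < (m : ℕ)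
    · rw [if_pos h, if_pos h]
      rw [← hstepeq m]
      exact hkey m
    · rw [if_neg h, if_neg h]
      simp
  have hsum2 : (∑ m : Fin n, (Pr (D m)).toReal)
      ≤ α * (p ((j : ℕ) + 1) - p n) := by
    calc (∑ m : Fin n, (Pr (D m)).toReal)
        ≤ ∑ m : Fin n, α * (if (j : ℕ) < (m : ℕ) then p (m : ℕ) - p ((m : ℕ) + 1) else 0) :=
          Finset.sum_le_sum fun m _ => hperm m
      _ = α * ∑ m : Fin n, (if (j : ℕ) < (m : ℕ) then p (m : ℕ) - p ((m : ℕ) + 1) else 0) := by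
          rw [Finset.mul_sum]
      _ = α * ∑ k ∈ Finset.range n, (if (j : ℕ) < k then p k - p (k + 1) else 0) := by
          rw [Fin.sum_univ_eq_sum_range (fun k => if (j : ℕ) < k then p k - p (k + 1) else 0)]
      _ = α * (p ((j : ℕ) + 1) - p n) := by
          rw [tel_sum p (j : ℕ) n, if_pos (by omega)]
  -- final assembly
  rw [hAj] at hPos ⊢
  have hPA : 0 < (Pr (Gk ((j : ℕ) + 1))).toReal :=
    ENNReal.toReal_pos hPos (measure_ne_top _ _)
  rw [div_le_iff₀ hPA]
  have hfinal : (Pr (E ∩ Gk ((j : ℕ) + 1))).toReal ≤ α * p ((j : ℕ) + 1) := by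
    have h1 : (Pr (E ∩ Gk ((j : ℕ) + 1))).toReal ≤ α * (p ((j : ℕ) + 1) - p n) := by
      rw [← hAj]
      exact le_trans htoreal hsum2
    have h2 : α * (p ((j : ℕ) + 1) - p n) ≤ α * p ((j : ℕ) + 1) := by
      have := hpnn n
      nlinarith
    linarith
  calc (Pr (E ∩ Gk ((j : ℕ) + 1))).toReal ≤ α * p ((j : ℕ) + 1) := hfinal
    _ = α * (Pr (Gk ((j : ℕ) + 1))).toReal := rfl
end

section
/- Suppose the family {F_θ} satisfies the MLR assumption (Assumption 2), the signed false-null statistics are positively regression dependent (Assumption 3), and, with i_0 the smallest index such that θ_{i_0} = 0 (i_0 = n+1 if all θ_i ≠ 0), the first true-null statistic T_{i_0} is independent of the random vector of false-null statistics (T_{i_k} : i_k < i_0) (Assumption 4). Then Procedure 2 (the directional fixed sequence procedure with constant critical value α) satisfies mdFWER ≤ α. -/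
open MeasureTheory ProbabilityTheory

section AuxLemmas
open Filter

/-- Comparison of products of set integrals via a pointwise "rearrangement" inequality. -/
lemma aux_prod_integral_mono {g h : ℝ → ℝ} (A B : Set ℝ)
    (hA : MeasurableSet A) (hB : MeasurableSet B)
    (hgA : IntegrableOn g A) (hhA : IntegrableOn h A)
    (hgB : IntegrableOn g B) (hhB : IntegrableOn h B)
    (hpt : ∀ s ∈ A, ∀ t ∈ B, h s * g t ≤ g s * h t) :
    (∫ s in A, h s) * (∫ t in B, g t) ≤ (∫ s in A, g s) * (∫ t in B, h t) := by
  have e1 : (∫ s in A, h s) * (∫ t in B, g t)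
      = ∫ z : ℝ × ℝ, h z.1 * g z.2 ∂((volume.restrict A).prod (volume.restrict B)) :=
    (integral_prod_mul h g).symm
  have e2 : (∫ s in A, g s) * (∫ t in B, h t)
      = ∫ z : ℝ × ℝ, g z.1 * h z.2 ∂((volume.restrict A).prod (volume.restrict B)) :=
    (integral_prod_mul g h).symm
  rw [e1, e2]
  apply integral_mono_ae (Integrable.mul_prod hhA hgB) (Integrable.mul_prod hgA hhB)
  have : ∀ᵐ z : ℝ × ℝ ∂((volume.restrict A).prod (volume.restrict B)), z ∈ A ×ˢ B := by
    rw [Measure.prod_restrict]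
    exact ae_restrict_mem (hA.prod hB)
  filter_upwards [this] with z hz
  exact hpt z.1 hz.1 z.2 hz.2

variable {Ω : Type*} [MeasurableSpace Ω] (Pr : Measure Ω) [IsProbabilityMeasure Pr]

lemma aux_meas_lt {X : Ω → ℝ} (hX : Measurable X) {G : ℝ → ℝ} (hGc : Continuous G)
    (hG : ∀ x, (Pr {ω | X ω ≤ x}).toReal = G x) (x : ℝ) :
    (Pr {ω | X ω < x}).toReal = G x := by
  have hle : (Pr {ω | X ω < x}).toReal ≤ G x := by
    rw [← hG x]
    exact ENNReal.toReal_mono (measure_ne_top _ _)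
      (measure_mono (fun ω (hω : X ω < x) => show X ω ≤ x from le_of_lt hω))
  have hge : ∀ ε > (0:ℝ), G (x - ε) ≤ (Pr {ω | X ω < x}).toReal := by
    intro ε hε
    rw [← hG (x - ε)]
    exact ENNReal.toReal_mono (measure_ne_top _ _)
      (measure_mono (fun ω (hω : X ω ≤ x - ε) => show X ω < x by linarith))
  have : G x ≤ (Pr {ω | X ω < x}).toReal := by
    have h1 : Tendsto (fun ε : ℝ => G (x - ε)) (nhdsWithin 0 (Set.Ioi 0)) (nhds (G x)) := by
      have h2 : Tendsto (fun ε : ℝ => x - ε) (nhdsWithin 0 (Set.Ioi 0)) (nhds x) := by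
        have h3 : Tendsto (fun ε : ℝ => x - ε) (nhds 0) (nhds (x - 0)) :=
          Filter.Tendsto.sub tendsto_const_nhds tendsto_id
        simpa using h3.mono_left nhdsWithin_le_nhds
      exact (hGc.tendsto x).comp h2
    refine le_of_tendsto h1 ?_
    filter_upwards [self_mem_nhdsWithin] with ε hε using hge ε hε
  linarith

lemma aux_meas_eq_zero {X : Ω → ℝ} (hX : Measurable X) {G : ℝ → ℝ} (hGc : Continuous G)
    (hG : ∀ x, (Pr {ω | X ω ≤ x}).toReal = G x) (x : ℝ) :
    Pr {ω | X ω = x} = 0 := by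
  have hU : {ω | X ω ≤ x} = {ω | X ω < x} ∪ {ω | X ω = x} := by
    ext ω; simp only [Set.mem_setOf_eq, Set.mem_union]; exact le_iff_lt_or_eq
  have hdisj : Disjoint {ω | X ω < x} {ω | X ω = x} := by
    rw [Set.disjoint_left]
    intro ω h1 h2
    exact absurd (h2 : X ω = x) (ne_of_lt (h1 : X ω < x))
  have hsplit : Pr {ω | X ω ≤ x} = Pr {ω | X ω < x} + Pr {ω | X ω = x} := by
    rw [hU]; exact measure_union hdisj (hX (measurableSet_singleton x))
  have h1 : (Pr {ω | X ω ≤ x}).toReal = (Pr {ω | X ω < x}).toReal + (Pr {ω | X ω = x}).toReal := by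
    rw [hsplit, ENNReal.toReal_add (measure_ne_top _ _) (measure_ne_top _ _)]
  rw [hG x, aux_meas_lt Pr hX hGc hG x] at h1
  have h2 : (Pr {ω | X ω = x}).toReal = 0 := by linarith
  exact ((ENNReal.toReal_eq_zero_iff _).mp h2).resolve_right (measure_ne_top _ _)

lemma aux_meas_gt {X : Ω → ℝ} (hX : Measurable X) {G : ℝ → ℝ} (hGc : Continuous G)
    (hG : ∀ x, (Pr {ω | X ω ≤ x}).toReal = G x) (x : ℝ) :
    (Pr {ω | x < X ω}).toReal = 1 - G x := by
  have hc : {ω | x < X ω} = {ω | X ω ≤ x}ᶜ := by ext ω; simp [not_le]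
  rw [hc, measure_compl (measurableSet_le hX measurable_const) (measure_ne_top _ _)]
  rw [ENNReal.toReal_sub_of_le (measure_mono (Set.subset_univ _)) (measure_ne_top _ _)]
  simp [hG x]

lemma aux_meas_ge {X : Ω → ℝ} (hX : Measurable X) {G : ℝ → ℝ} (hGc : Continuous G)
    (hG : ∀ x, (Pr {ω | X ω ≤ x}).toReal = G x) (x : ℝ) :
    (Pr {ω | x ≤ X ω}).toReal = 1 - G x := by
  have hc : {ω | x ≤ X ω} = {ω | X ω < x}ᶜ := by ext ω; simp [not_lt]
  rw [hc, measure_compl (measurableSet_lt hX measurable_const) (measure_ne_top _ _)]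
  rw [ENNReal.toReal_sub_of_le (measure_mono (Set.subset_univ _)) (measure_ne_top _ _)]
  simp [aux_meas_lt Pr hX hGc hG x]

lemma aux_cdf_tendsto_one {X : Ω → ℝ} (hX : Measurable X) {G : ℝ → ℝ}
    (hG : ∀ x, (Pr {ω | X ω ≤ x}).toReal = G x) :
    Tendsto (fun n : ℕ => G n) atTop (nhds 1) := by
  have hmono : Monotone (fun n : ℕ => {ω | X ω ≤ (n:ℝ)}) := by
    intro a b hab ω (hω : X ω ≤ (a:ℝ))
    exact show X ω ≤ (b:ℝ) from le_trans hω (by exact_mod_cast hab)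
  have h1 := tendsto_measure_iUnion_atTop (μ := Pr) hmono
  have huniv : (⋃ n : ℕ, {ω | X ω ≤ (n:ℝ)}) = Set.univ := by
    ext ω; simp only [Set.mem_iUnion, Set.mem_setOf_eq, Set.mem_univ, iff_true]
    obtain ⟨n, hn⟩ := exists_nat_ge (X ω)
    exact ⟨n, hn⟩
  rw [huniv, measure_univ] at h1
  have h2 : Tendsto (fun n : ℕ => (Pr {ω | X ω ≤ (n:ℝ)}).toReal) atTop (nhds 1) := by
    have := (ENNReal.tendsto_toReal (show (1:ENNReal) ≠ ⊤ by simp)).comp h1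
    exact this
  simpa only [hG] using h2

variable {f' F' : ℝ → ℝ}

lemma aux_nonint (hF : ∀ x, F' x = ∫ t in Set.Iic x, f' t) {x : ℝ}
    (h : ¬ IntegrableOn f' (Set.Iic x)) : ∀ y, x ≤ y → F' y = 0 := by
  intro y hxy
  have h2 : ¬ IntegrableOn f' (Set.Iic y) := fun hy => h (hy.mono_set (Set.Iic_subset_Iic.mpr hxy))
  rw [hF y, integral_undef h2]

lemma aux_Ioc (hF : ∀ x, F' x = ∫ t in Set.Iic x, f' t)
    (hint : ∀ x, IntegrableOn f' (Set.Iic x)) {a b : ℝ} (hab : a ≤ b) :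
    ∫ t in Set.Ioc a b, f' t = F' b - F' a := by
  have h1 : ∫ t in Set.Iic a ∪ Set.Ioc a b, f' t
      = (∫ t in Set.Iic a, f' t) + ∫ t in Set.Ioc a b, f' t :=
    setIntegral_union (Set.Iic_disjoint_Ioc le_rfl) measurableSet_Ioc (hint a)
      ((hint b).mono_set Set.Ioc_subset_Iic_self)
  rw [Set.Iic_union_Ioc_eq_Iic hab] at h1
  rw [hF a, hF b, h1]; ring

lemma aux_mass (hmeas : Measurable f') (hnn : ∀ x, 0 ≤ f' x)
    (hF : ∀ x, F' x = ∫ t in Set.Iic x, f' t)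
    (hint : ∀ x, IntegrableOn f' (Set.Iic x))
    (hFle : ∀ x, F' x ≤ 1)
    (htop : Tendsto (fun n : ℕ => F' n) atTop (nhds 1)) :
    Integrable f' (volume : Measure ℝ) ∧ (∀ x, ∫ t in Set.Ioi x, f' t = 1 - F' x) := by
  have hInt : Integrable f' (volume : Measure ℝ) := by
    constructor
    · exact hmeas.aestronglyMeasurable
    · rw [hasFiniteIntegral_iff_norm]
      have hsup : ∀ t : ℝ, ENNReal.ofReal ‖f' t‖ = ⨆ n : ℕ, (Set.Iic (n:ℝ)).indicator (fun s => ENNReal.ofReal (f' s)) t := by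
        intro t
        obtain ⟨n, hn⟩ := exists_nat_ge t
        apply le_antisymm
        · refine le_iSup_of_le n ?_
          rw [Set.indicator_of_mem (by exact hn : t ∈ Set.Iic (n:ℝ))]
          rw [Real.norm_of_nonneg (hnn t)]
        · refine iSup_le fun m => ?_
          by_cases hm : t ∈ Set.Iic (m:ℝ)
          · rw [Set.indicator_of_mem hm, Real.norm_of_nonneg (hnn t)]
          · rw [Set.indicator_of_notMem hm]; exact zero_le
      calc ∫⁻ t, ENNReal.ofReal ‖f' t‖
          = ∫⁻ t, ⨆ n : ℕ, (Set.Iic (n:ℝ)).indicator (fun s => ENNReal.ofReal (f' s)) t := by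
            exact lintegral_congr hsup
        _ = ⨆ n : ℕ, ∫⁻ t, (Set.Iic (n:ℝ)).indicator (fun s => ENNReal.ofReal (f' s)) t := by
            refine lintegral_iSup (fun n => ((ENNReal.measurable_ofReal.comp hmeas).indicator measurableSet_Iic)) ?_
            intro a b hab t
            dsimp only
            by_cases ha : t ∈ Set.Iic (a:ℝ)
            · rw [Set.indicator_of_mem ha, Set.indicator_of_mem
                (Set.mem_Iic.mpr (le_trans (Set.mem_Iic.mp ha) (Nat.cast_le.mpr hab)))]
            · rw [Set.indicator_of_notMem ha]; exact zero_le
        _ ≤ 1 := by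
            refine iSup_le fun n => ?_
            rw [lintegral_indicator measurableSet_Iic]
            have : ∫⁻ t in Set.Iic (n:ℝ), ENNReal.ofReal (f' t) = ENNReal.ofReal (F' n) := by
              rw [hF n, ofReal_integral_eq_lintegral_ofReal (hint n)
                (Filter.Eventually.of_forall (fun t => hnn t))]
            rw [this]
            exact ENNReal.ofReal_le_one.mpr (hFle n)
        _ < ⊤ := by simp
  refine ⟨hInt, fun x => ?_⟩
  have htot : ∫ t, f' t = 1 := by
    have hconv : Tendsto (fun n : ℕ => ∫ t in Set.Iic (n:ℝ), f' t) atTop (nhds (∫ t, f' t)) := by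
      have := MeasureTheory.tendsto_integral_of_dominated_convergence
        (F := fun (n : ℕ) (t : ℝ) => (Set.Iic (n:ℝ)).indicator f' t)
        (f := f') (bound := fun t => |f' t|)
        (fun n => (hmeas.indicator measurableSet_Iic).aestronglyMeasurable)
        (by simpa [abs_of_nonneg, hnn] using hInt.abs)
        (fun n => Filter.Eventually.of_forall (fun t => by
          by_cases h : t ∈ Set.Iic (n:ℝ)
          · rw [Set.indicator_of_mem h, Real.norm_of_nonneg (hnn t)]; exact le_abs_self _
          · rw [Set.indicator_of_notMem h]; simp [abs_nonneg]))
        (Filter.Eventually.of_forall (fun t => by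
          obtain ⟨N, hN⟩ := exists_nat_ge t
          refine tendsto_const_nhds.congr' ?_
          filter_upwards [eventually_ge_atTop N] with m hm
          exact (Set.indicator_of_mem (show t ∈ Set.Iic (m:ℝ) from le_trans hN (by exact_mod_cast hm)) _).symm))
      simpa [integral_indicator measurableSet_Iic] using this
    have := htop
    rw [show (fun n : ℕ => F' (n:ℝ)) = (fun n : ℕ => ∫ t in Set.Iic ((n:ℕ):ℝ), f' t) from funext (fun n => hF n)] at this
    exact tendsto_nhds_unique hconv this
  have hsplit := integral_add_compl (measurableSet_Iic (a := x)) hInt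
  rw [Set.compl_Iic] at hsplit
  rw [htot, ← hF x] at hsplit
  linarith

lemma aux_atBot (hmeas : Measurable f') (hnn : ∀ x, 0 ≤ f' x)
    (hF : ∀ x, F' x = ∫ t in Set.Iic x, f' t)
    (hint : ∀ x, IntegrableOn f' (Set.Iic x)) :
    Tendsto (fun n : ℕ => F' (-(n:ℝ))) atTop (nhds 0) := by
  have hconv : Tendsto (fun n : ℕ => ∫ t in Set.Iic (-(n:ℝ)), f' t) atTop (nhds (∫ t : ℝ, (0:ℝ))) := by
    have := MeasureTheory.tendsto_integral_of_dominated_convergence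
      (F := fun (n : ℕ) (t : ℝ) => (Set.Iic (-(n:ℝ))).indicator f' t)
      (f := fun _ => (0:ℝ)) (bound := fun t => (Set.Iic (0:ℝ)).indicator f' t)
      (fun n => (hmeas.indicator measurableSet_Iic).aestronglyMeasurable)
      (by
        rw [integrable_indicator_iff measurableSet_Iic]
        exact hint 0)
      (fun n => Filter.Eventually.of_forall (fun t => by
        by_cases h : t ∈ Set.Iic (-(n:ℝ))
        · rw [Set.indicator_of_mem h, Real.norm_of_nonneg (hnn t),
            Set.indicator_of_mem (Set.mem_Iic.mpr (le_trans (Set.mem_Iic.mp h) (by simp)))]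
        · rw [Set.indicator_of_notMem h]
          simpa using Set.indicator_nonneg (fun s (_ : s ∈ Set.Iic (0:ℝ)) => hnn s) t))
      (Filter.Eventually.of_forall (fun t => by
        obtain ⟨N, hN⟩ := exists_nat_ge (-t)
        refine tendsto_const_nhds.congr' ?_
        filter_upwards [eventually_ge_atTop (N+1)] with m hm
        refine (Set.indicator_of_notMem ?_ _).symm
        intro hmem
        have h1 : (m:ℝ) ≥ (N:ℝ) + 1 := by exact_mod_cast hm
        have h2 : t ≤ -(m:ℝ) := hmem
        linarith))
    simpa [integral_indicator measurableSet_Iic] using this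
  simp only [integral_zero] at hconv
  exact hconv.congr (fun n => (hF _).symm)

open Filter

/-- The event that the first `m` signed statistics are all at least `c₂`. -/
def auxC {Ω : Type*} {n : ℕ} (θ : Fin n → ℝ) (T : Fin n → Ω → ℝ) (c₂ : ℝ) (m : ℕ) : Set Ω :=
  ⋂ (j : Fin n), ⋂ (_ : (j:ℕ) < m), {ω | c₂ ≤ Real.sign (θ j) * T j ω}

lemma auxC_mem {Ω : Type*} {n : ℕ} {θ : Fin n → ℝ} {T : Fin n → Ω → ℝ} {c₂ : ℝ} {m : ℕ} {ω : Ω} :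
    ω ∈ auxC θ T c₂ m ↔ ∀ j : Fin n, (j:ℕ) < m → c₂ ≤ Real.sign (θ j) * T j ω := by
  simp [auxC]

lemma auxC_zero {Ω : Type*} {n : ℕ} {θ : Fin n → ℝ} {T : Fin n → Ω → ℝ} {c₂ : ℝ} :
    auxC θ T c₂ 0 = Set.univ := by
  ext ω; simp [auxC]

lemma auxC_succ {Ω : Type*} {n : ℕ} {θ : Fin n → ℝ} {T : Fin n → Ω → ℝ} {c₂ : ℝ} {k : Fin n} :
    auxC θ T c₂ ((k:ℕ)+1) = auxC θ T c₂ (k:ℕ) ∩ {ω | c₂ ≤ Real.sign (θ k) * T k ω} := by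
  ext ω
  simp only [auxC_mem, Set.mem_inter_iff, Set.mem_setOf_eq]
  constructor
  · intro h
    exact ⟨fun j hj => h j (Nat.lt_succ_of_lt hj), h k (Nat.lt_succ_self _)⟩
  · rintro ⟨h1, h2⟩ j hj
    rcases Nat.lt_succ_iff_lt_or_eq.mp hj with hj' | hj'
    · exact h1 j hj'
    · have hjk : j = k := Fin.ext hj'
      rw [hjk]; exact h2

lemma auxC_measurable {Ω : Type*} [MeasurableSpace Ω] {n : ℕ} {θ : Fin n → ℝ}
    {T : Fin n → Ω → ℝ} (hT : ∀ i, Measurable (T i)) (c₂ : ℝ) (m : ℕ) :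
    MeasurableSet (auxC θ T c₂ m) :=
  MeasurableSet.iInter fun j => MeasurableSet.iInter fun _ =>
    measurableSet_le measurable_const ((hT j).const_mul _)

end AuxLemmas
/-- Theorem 3: Under MLR (Assumption 2), positive regression dependence
of the signed false-null statistics (Assumption 3), and independence of the first
true-null statistic from the preceding false-null statistics (Assumption 4),
Procedure 2 (constant critical value α) satisfies mdFWER ≤ α. -/
theorem procedure2_controls_mdFWER_positive_dependence
    {Ω : Type*} [MeasurableSpace Ω] (Pr : Measure Ω) [IsProbabilityMeasure Pr]
    (F : ℝ → ℝ → ℝ)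
    (hFcont : ∀ θ', Continuous (F θ'))
    (hFmono : ∀ θ', Monotone (F θ'))
    (hF0strict : StrictMono (F 0))
    (hFsym : ∀ x : ℝ, F 0 (-x) = 1 - F 0 x)
    (hstoch : ∀ θ' θ'' : ℝ, θ' ≤ θ'' → ∀ x, F θ'' x ≤ F θ' x)
    -- MLR assumption (Assumption 2)
    (f : ℝ → ℝ → ℝ)
    (hf_nonneg : ∀ θ' x, 0 ≤ f θ' x)
    (hf_meas : ∀ θ', Measurable (f θ'))
    (hf_cdf : ∀ θ' x, F θ' x = ∫ t in Set.Iic x, f θ' t)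
    (hMLR : ∀ θ' θ'' : ℝ, θ' < θ'' → ∀ x₁ x₂ : ℝ, x₁ < x₂ →
      f θ'' x₁ * f θ' x₂ ≤ f θ'' x₂ * f θ' x₁)
    (n : ℕ) (θ : Fin n → ℝ)
    (T : Fin n → Ω → ℝ) (hT : ∀ i, Measurable (T i))
    (hcdf : ∀ i x, (Pr {ω | T i ω ≤ x}).toReal = F (θ i) x)
    -- Assumption 3: positive regression dependence of the signed false-null statistics
    (hPRD : ∀ k : {i : Fin n // θ i ≠ 0},
      ∀ φ : ({i : Fin n // θ i ≠ 0} → ℝ) → ℝ,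
      Measurable φ → Monotone φ → (∃ C, ∀ x, |φ x| ≤ C) →
      ∀ u u' : ℝ, u ≤ u' →
        (Pr {ω | u ≤ Real.sign (θ k.1) * T k.1 ω} ≠ 0 →
         Pr {ω | u' ≤ Real.sign (θ k.1) * T k.1 ω} ≠ 0 →
          (∫ ω in {ω | u ≤ Real.sign (θ k.1) * T k.1 ω},
              φ (fun i => Real.sign (θ i.1) * T i.1 ω) ∂Pr)
              / (Pr {ω | u ≤ Real.sign (θ k.1) * T k.1 ω}).toReal
            ≤ (∫ ω in {ω | u' ≤ Real.sign (θ k.1) * T k.1 ω},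
              φ (fun i => Real.sign (θ i.1) * T i.1 ω) ∂Pr)
              / (Pr {ω | u' ≤ Real.sign (θ k.1) * T k.1 ω}).toReal) ∧
        (Pr {ω | Real.sign (θ k.1) * T k.1 ω < u} ≠ 0 →
         Pr {ω | Real.sign (θ k.1) * T k.1 ω < u'} ≠ 0 →
          (∫ ω in {ω | Real.sign (θ k.1) * T k.1 ω < u},
              φ (fun i => Real.sign (θ i.1) * T i.1 ω) ∂Pr)
              / (Pr {ω | Real.sign (θ k.1) * T k.1 ω < u}).toReal
            ≤ (∫ ω in {ω | Real.sign (θ k.1) * T k.1 ω < u'},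
              φ (fun i => Real.sign (θ i.1) * T i.1 ω) ∂Pr)
              / (Pr {ω | Real.sign (θ k.1) * T k.1 ω < u'}).toReal))
    -- Assumption 4: the first true-null statistic is independent of the
    -- false-null statistics preceding it
    (hindep : ∀ i₀ : Fin n, θ i₀ = 0 → (∀ j, j < i₀ → θ j ≠ 0) →
      IndepFun (T i₀) (fun ω => fun j : {j : Fin n // j < i₀} => T j.1 ω) Pr)
    (α : ℝ) (hα : α ∈ Set.Ioo (0 : ℝ) 1) :
    (Pr {ω | ∃ i : Fin n,
        (∀ j : Fin n, j ≤ i →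
          2 * min (F 0 (T j ω)) (1 - F 0 (T j ω)) ≤ α) ∧
        (θ i = 0 ∨ (θ i ≠ 0 ∧ θ i * T i ω < 0))}).toReal ≤ α := by
  classical
  obtain ⟨hα0, hα1⟩ := hα
  -- ### Part 1 : basic facts about F 0 and the critical value c₂
  have hF0int : ∀ x, IntegrableOn (f 0) (Set.Iic x) := by
    intro x
    by_contra hni
    have h0 := aux_nonint (fun y => hf_cdf 0 y) hni
    have h1 := hF0strict (show x < x + 1 by linarith)
    rw [h0 x le_rfl, h0 (x+1) (by linarith)] at h1
    exact lt_irrefl _ h1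
  have hF0nonneg : ∀ x, 0 ≤ F 0 x := by
    intro x
    rw [hf_cdf 0 x]
    exact setIntegral_nonneg measurableSet_Iic (fun t _ => hf_nonneg 0 t)
  have hF0le1 : ∀ x, F 0 x ≤ 1 := by
    intro x
    have h1 := hFsym x
    have h2 := hF0nonneg (-x)
    linarith
  have hF0bot := aux_atBot (hf_meas 0) (hf_nonneg 0) (fun y => hf_cdf 0 y) hF0int
  have hF0top : Filter.Tendsto (fun nn : ℕ => F 0 nn) Filter.atTop (nhds 1) := by
    have h1 : (fun nn : ℕ => F 0 nn) = fun nn : ℕ => 1 - F 0 (-(nn:ℝ)) := by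
      funext nn
      have h := hFsym (nn:ℝ)
      linarith
    rw [h1]
    have h2 := hF0bot.const_sub (1:ℝ)
    simpa using h2
  have hF0mass := aux_mass (hf_meas 0) (hf_nonneg 0) (fun y => hf_cdf 0 y) hF0int hF0le1 hF0top
  -- critical value c₂
  obtain ⟨c₂, hc2, hc2', hc2pos⟩ :
      ∃ c₂ : ℝ, F 0 c₂ = 1 - α/2 ∧ F 0 (-c₂) = α/2 ∧ 0 < c₂ := by
    obtain ⟨N, hN⟩ := (hF0bot.eventually (eventually_lt_nhds (show (0:ℝ) < α/2 by linarith))).exists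
    have hab : -(N:ℝ) ≤ (N:ℝ) := neg_le_self (Nat.cast_nonneg N)
    have hFb : 1 - α/2 ≤ F 0 (N:ℝ) := by
      have h1 := hFsym (N:ℝ)
      linarith
    have hIVT := intermediate_value_Icc hab (hFcont 0).continuousOn
    have hmem : (1 - α/2) ∈ Set.Icc (F 0 (-(N:ℝ))) (F 0 (N:ℝ)) := ⟨by linarith, hFb⟩
    obtain ⟨c₂, _, hc₂⟩ := hIVT hmem
    have hsym := hFsym c₂
    have h0half : F 0 0 = 1/2 := by
      have h := hFsym 0
      rw [neg_zero] at h
      linarith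
    refine ⟨c₂, hc₂, by linarith, ?_⟩
    have : F 0 0 < F 0 c₂ := by rw [h0half, hc₂]; linarith
    exact hF0strict.lt_iff_lt.mp this
  -- p-value characterization
  have pchar : ∀ t : ℝ, (2 * min (F 0 t) (1 - F 0 t) ≤ α) ↔ (t ≤ -c₂ ∨ c₂ ≤ t) := by
    intro t
    have h1 : (2 * min (F 0 t) (1 - F 0 t) ≤ α) ↔ min (F 0 t) (1 - F 0 t) ≤ α/2 := by
      constructor <;> intro h <;> linarith
    rw [h1, min_le_iff]
    constructor
    · rintro (h | h)
      · left
        exact hF0strict.le_iff_le.mp (by rw [hc2']; exact h)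
      · right
        exact hF0strict.le_iff_le.mp (by rw [hc2]; linarith)
    · rintro (h | h)
      · left
        have := hF0strict.le_iff_le.mpr h
        rw [hc2'] at this
        linarith
      · right
        have := hF0strict.le_iff_le.mpr h
        rw [hc2] at this
        linarith
  -- ### Part 2 : facts about each F (θ i)
  have hFitop : ∀ i : Fin n, Filter.Tendsto (fun nn : ℕ => F (θ i) nn) Filter.atTop (nhds 1) :=
    fun i => aux_cdf_tendsto_one Pr (hT i) (hcdf i)
  have hFiint : ∀ i : Fin n, ∀ x, IntegrableOn (f (θ i)) (Set.Iic x) := by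
    intro i x
    by_contra hni
    have h0 := aux_nonint (fun y => hf_cdf (θ i) y) hni
    have h1 : ∀ᶠ nn : ℕ in Filter.atTop, (1:ℝ)/2 < F (θ i) nn :=
      (hFitop i).eventually (eventually_gt_nhds (by norm_num))
    have h2 : ∀ᶠ nn : ℕ in Filter.atTop, x ≤ (nn:ℝ) :=
      tendsto_natCast_atTop_atTop.eventually (Filter.eventually_ge_atTop x)
    obtain ⟨nn, hnn1, hnn2⟩ := (h1.and h2).exists
    rw [h0 _ hnn2] at hnn1
    norm_num at hnn1
  have hFile1 : ∀ i : Fin n, ∀ x, F (θ i) x ≤ 1 := by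
    intro i x
    rw [← hcdf i x]
    have h1 : Pr {ω | T i ω ≤ x} ≤ 1 := prob_le_one
    have := ENNReal.toReal_mono (by simp) h1
    simpa using this
  have hFimass : ∀ i : Fin n,
      Integrable (f (θ i)) (volume : Measure ℝ) ∧
        (∀ x, ∫ t in Set.Ioi x, f (θ i) t = 1 - F (θ i) x) :=
    fun i => aux_mass (hf_meas _) (hf_nonneg _) (fun y => hf_cdf _ y) (hFiint i)
      (hFile1 i) (hFitop i)
  -- ### Part 3 : the single-test MLR inequality p ≤ α q
  have hkey : ∀ k : Fin n, θ k ≠ 0 →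
      (Pr {ω | Real.sign (θ k) * T k ω < -c₂}).toReal
        ≤ α * (Pr {ω | Real.sign (θ k) * T k ω < c₂}).toReal := by
    intro k hk
    rcases lt_or_gt_of_ne hk with hneg | hpos
    · -- θ k < 0 : sign = -1, use upper tails
      have hs : Real.sign (θ k) = -1 := Real.sign_of_neg hneg
      have e1 : {ω | Real.sign (θ k) * T k ω < -c₂} = {ω | c₂ < T k ω} := by
        ext ω; simp only [Set.mem_setOf_eq, hs]; constructor <;> intro h <;> linarith
      have e2 : {ω | Real.sign (θ k) * T k ω < c₂} = {ω | -c₂ < T k ω} := by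
        ext ω; simp only [Set.mem_setOf_eq, hs]; constructor <;> intro h <;> linarith
      rw [e1, e2, aux_meas_gt Pr (hT k) (hFcont (θ k)) (hcdf k),
        aux_meas_gt Pr (hT k) (hFcont (θ k)) (hcdf k)]
      have hq0 : 0 ≤ 1 - F (θ k) (-c₂) := by
        rw [← aux_meas_gt Pr (hT k) (hFcont (θ k)) (hcdf k)]
        exact ENNReal.toReal_nonneg
      have hprod := aux_prod_integral_mono (g := f 0) (h := f (θ k))
        (Set.Ioi c₂) (Set.Ioc (-c₂) c₂) measurableSet_Ioi measurableSet_Ioc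
        (hF0mass.1.integrableOn) ((hFimass k).1.integrableOn)
        ((hF0int c₂).mono_set Set.Ioc_subset_Iic_self)
        ((hFiint k c₂).mono_set Set.Ioc_subset_Iic_self)
        (fun s hs' t ht' => by
          have hts : t < s := lt_of_le_of_lt ht'.2 hs'
          have h3 := hMLR (θ k) 0 hneg t s hts
          calc f (θ k) s * f 0 t = f 0 t * f (θ k) s := mul_comm _ _
            _ ≤ f 0 s * f (θ k) t := h3)
      rw [aux_Ioc (fun y => hf_cdf 0 y) hF0int (by linarith : -c₂ ≤ c₂),
        aux_Ioc (fun y => hf_cdf (θ k) y) (hFiint k) (by linarith : -c₂ ≤ c₂),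
        hF0mass.2 c₂, (hFimass k).2 c₂, hc2, hc2'] at hprod
      nlinarith [hprod, hq0, mul_nonneg (mul_nonneg hα0.le hq0) (by linarith : (0:ℝ) ≤ 1 - α)]
    · -- θ k > 0 : sign = 1, use lower tails
      have hs : Real.sign (θ k) = 1 := Real.sign_of_pos hpos
      have e1 : {ω | Real.sign (θ k) * T k ω < -c₂} = {ω | T k ω < -c₂} := by
        ext ω; simp only [Set.mem_setOf_eq, hs, one_mul]
      have e2 : {ω | Real.sign (θ k) * T k ω < c₂} = {ω | T k ω < c₂} := by
        ext ω; simp only [Set.mem_setOf_eq, hs, one_mul]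
      rw [e1, e2, aux_meas_lt Pr (hT k) (hFcont (θ k)) (hcdf k),
        aux_meas_lt Pr (hT k) (hFcont (θ k)) (hcdf k)]
      have hq0 : 0 ≤ F (θ k) c₂ := by
        rw [← aux_meas_lt Pr (hT k) (hFcont (θ k)) (hcdf k)]
        exact ENNReal.toReal_nonneg
      have hprod := aux_prod_integral_mono (g := f 0) (h := f (θ k))
        (Set.Iic (-c₂)) (Set.Ioc (-c₂) c₂) measurableSet_Iic measurableSet_Ioc
        (hF0int (-c₂)) (hFiint k (-c₂))
        ((hF0int c₂).mono_set Set.Ioc_subset_Iic_self)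
        ((hFiint k c₂).mono_set Set.Ioc_subset_Iic_self)
        (fun s hs' t ht' => by
          have hst : s < t := lt_of_le_of_lt hs' ht'.1
          have h3 := hMLR 0 (θ k) hpos s t hst
          calc f (θ k) s * f 0 t ≤ f (θ k) t * f 0 s := h3
            _ = f 0 s * f (θ k) t := mul_comm _ _)
      rw [aux_Ioc (fun y => hf_cdf 0 y) hF0int (by linarith : -c₂ ≤ c₂),
        aux_Ioc (fun y => hf_cdf (θ k) y) (hFiint k) (by linarith : -c₂ ≤ c₂)] at hprod
      rw [← hf_cdf 0 (-c₂), ← hf_cdf (θ k) (-c₂), hc2, hc2'] at hprod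
      nlinarith [hprod, hq0, mul_nonneg (mul_nonneg hα0.le hq0) (by linarith : (0:ℝ) ≤ 1 - α)]

  -- ### Part 4 : the per-index PRD step
  have hstep : ∀ k : Fin n, θ k ≠ 0 → (∀ j : Fin n, (j:ℕ) < (k:ℕ) → θ j ≠ 0) →
      (Pr (auxC θ T c₂ (k:ℕ) ∩ {ω | Real.sign (θ k) * T k ω ≤ -c₂})).toReal
        ≤ α * ((Pr (auxC θ T c₂ (k:ℕ))).toReal - (Pr (auxC θ T c₂ ((k:ℕ)+1))).toReal) := by
    intro k hk hprev
    have hSmeas : Measurable (fun ω => Real.sign (θ k) * T k ω) := (hT k).const_mul _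
    have hCmeas : MeasurableSet (auxC θ T c₂ (k:ℕ)) := auxC_measurable hT c₂ _
    -- the difference of the C-probabilities
    have hdiff : (Pr (auxC θ T c₂ (k:ℕ))).toReal - (Pr (auxC θ T c₂ ((k:ℕ)+1))).toReal
        = (Pr (auxC θ T c₂ (k:ℕ) ∩ {ω | Real.sign (θ k) * T k ω < c₂})).toReal := by
      have hsp := measure_inter_add_diff (μ := Pr) (auxC θ T c₂ (k:ℕ))
        (measurableSet_le measurable_const hSmeas :
          MeasurableSet {ω | c₂ ≤ Real.sign (θ k) * T k ω})
      have hdeq : auxC θ T c₂ (k:ℕ) \ {ω | c₂ ≤ Real.sign (θ k) * T k ω}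
          = auxC θ T c₂ (k:ℕ) ∩ {ω | Real.sign (θ k) * T k ω < c₂} := by
        rw [Set.diff_eq]
        congr 1
        ext ω; simp [not_le]
      rw [hdeq] at hsp
      rw [auxC_succ]
      have h7 := congrArg ENNReal.toReal hsp
      rw [ENNReal.toReal_add (measure_ne_top _ _) (measure_ne_top _ _)] at h7
      linarith
    rw [hdiff]
    -- the atom at -c₂ is null
    have hatom : Pr {ω | Real.sign (θ k) * T k ω = -c₂} = 0 := by
      rcases lt_or_gt_of_ne hk with hneg | hpos
      · have hs : Real.sign (θ k) = -1 := Real.sign_of_neg hneg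
        have e : {ω | Real.sign (θ k) * T k ω = -c₂} = {ω | T k ω = c₂} := by
          ext ω; simp only [Set.mem_setOf_eq, hs]; constructor <;> intro h <;> linarith
        rw [e]
        exact aux_meas_eq_zero Pr (hT k) (hFcont (θ k)) (hcdf k) c₂
      · have hs : Real.sign (θ k) = 1 := Real.sign_of_pos hpos
        have e : {ω | Real.sign (θ k) * T k ω = -c₂} = {ω | T k ω = -c₂} := by
          ext ω; simp only [Set.mem_setOf_eq, hs, one_mul]
        rw [e]
        exact aux_meas_eq_zero Pr (hT k) (hFcont (θ k)) (hcdf k) (-c₂)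
    -- replace ≤ -c₂ by < -c₂
    have hle1 : (Pr (auxC θ T c₂ (k:ℕ) ∩ {ω | Real.sign (θ k) * T k ω ≤ -c₂})).toReal
        ≤ (Pr (auxC θ T c₂ (k:ℕ) ∩ {ω | Real.sign (θ k) * T k ω < -c₂})).toReal := by
      have hsub : auxC θ T c₂ (k:ℕ) ∩ {ω | Real.sign (θ k) * T k ω ≤ -c₂}
          ⊆ (auxC θ T c₂ (k:ℕ) ∩ {ω | Real.sign (θ k) * T k ω < -c₂})
            ∪ {ω | Real.sign (θ k) * T k ω = -c₂} := by
        rintro ω ⟨h1, h2⟩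
        rcases lt_or_eq_of_le (show Real.sign (θ k) * T k ω ≤ -c₂ from h2) with h | h
        · exact Or.inl ⟨h1, h⟩
        · exact Or.inr h
      have h8 : Pr (auxC θ T c₂ (k:ℕ) ∩ {ω | Real.sign (θ k) * T k ω ≤ -c₂})
          ≤ Pr (auxC θ T c₂ (k:ℕ) ∩ {ω | Real.sign (θ k) * T k ω < -c₂}) := by
        refine le_trans (measure_mono hsub) ?_
        refine le_trans (measure_union_le _ _) ?_
        rw [hatom, add_zero]
      exact ENNReal.toReal_mono (measure_ne_top _ _) h8
    refine le_trans hle1 ?_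
    by_cases hz : Pr {ω | Real.sign (θ k) * T k ω < -c₂} = 0
    · have h9 : Pr (auxC θ T c₂ (k:ℕ) ∩ {ω | Real.sign (θ k) * T k ω < -c₂}) = 0 :=
        measure_mono_null Set.inter_subset_right hz
      rw [h9]
      simp only [ENNReal.toReal_zero]
      exact mul_nonneg hα0.le ENNReal.toReal_nonneg
    · have hz' : Pr {ω | Real.sign (θ k) * T k ω < c₂} ≠ 0 := by
        intro h0
        exact hz (measure_mono_null
          (fun ω (hω : Real.sign (θ k) * T k ω < -c₂) =>
            show Real.sign (θ k) * T k ω < c₂ by linarith) h0)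
      -- the monotone indicator functional
      set U : Set ({i : Fin n // θ i ≠ 0} → ℝ) :=
        {y | ∀ j : {i : Fin n // θ i ≠ 0}, ((j.1 : Fin n) : ℕ) < (k:ℕ) → c₂ ≤ y j} with hUdef
      have hUmeas : MeasurableSet U := by
        have hU2 : U = ⋂ (j : {i : Fin n // θ i ≠ 0}), ⋂ (_ : ((j.1 : Fin n) : ℕ) < (k:ℕ)),
            {y : {i : Fin n // θ i ≠ 0} → ℝ | c₂ ≤ y j} := by
          ext y; simp [hUdef]
        rw [hU2]
        exact MeasurableSet.iInter fun j => MeasurableSet.iInter fun _ =>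
          measurableSet_le measurable_const (measurable_pi_apply j)
      set φ : ({i : Fin n // θ i ≠ 0} → ℝ) → ℝ := U.indicator (fun _ => 1) with hφdef
      have hφmeas : Measurable φ := measurable_const.indicator hUmeas
      have hφmono : Monotone φ := by
        intro x y hxy
        by_cases hx : x ∈ U
        · have hy : y ∈ U := fun j hj => le_trans (hx j hj) (hxy j)
          rw [hφdef, Set.indicator_of_mem hx, Set.indicator_of_mem hy]
        · rw [hφdef, Set.indicator_of_notMem hx]
          exact Set.indicator_apply_nonneg (fun _ => zero_le_one)
      have hφbd : ∃ C, ∀ x, |φ x| ≤ C := by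
        refine ⟨1, fun x => ?_⟩
        rw [hφdef]
        by_cases hx : x ∈ U
        · rw [Set.indicator_of_mem hx]; norm_num
        · rw [Set.indicator_of_notMem hx]; norm_num
      have hSind : ∀ ω : Ω, φ (fun i : {i : Fin n // θ i ≠ 0} => Real.sign (θ i.1) * T i.1 ω)
          = (auxC θ T c₂ (k:ℕ)).indicator (fun _ => (1:ℝ)) ω := by
        intro ω
        by_cases hω : ω ∈ auxC θ T c₂ (k:ℕ)
        · rw [Set.indicator_of_mem hω, hφdef, Set.indicator_of_mem]
          intro j hj
          exact (auxC_mem.mp hω) j.1 hj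
        · rw [Set.indicator_of_notMem hω, hφdef, Set.indicator_of_notMem]
          intro hmem
          apply hω
          rw [auxC_mem]
          intro j hj
          exact hmem ⟨j, hprev j hj⟩ hj
      have hrw : ∀ u : ℝ,
          (∫ ω in {ω | Real.sign (θ k) * T k ω < u},
            φ (fun i : {i : Fin n // θ i ≠ 0} => Real.sign (θ i.1) * T i.1 ω) ∂Pr)
          = (Pr (auxC θ T c₂ (k:ℕ) ∩ {ω | Real.sign (θ k) * T k ω < u})).toReal := by
        intro u
        simp only [hSind]
        rw [setIntegral_indicator hCmeas, setIntegral_const, Set.inter_comm]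
        simp
        rfl
      have hPRDk :
          (∫ ω in {ω | Real.sign (θ k) * T k ω < -c₂},
            φ (fun i : {i : Fin n // θ i ≠ 0} => Real.sign (θ i.1) * T i.1 ω) ∂Pr)
            / (Pr {ω | Real.sign (θ k) * T k ω < -c₂}).toReal
          ≤ (∫ ω in {ω | Real.sign (θ k) * T k ω < c₂},
            φ (fun i : {i : Fin n // θ i ≠ 0} => Real.sign (θ i.1) * T i.1 ω) ∂Pr)
            / (Pr {ω | Real.sign (θ k) * T k ω < c₂}).toReal :=
        (hPRD ⟨k, hk⟩ φ hφmeas hφmono hφbd (-c₂) c₂ (by linarith)).2 hz hz'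
      rw [hrw, hrw] at hPRDk
      have hp : 0 < (Pr {ω | Real.sign (θ k) * T k ω < -c₂}).toReal :=
        ENNReal.toReal_pos hz (measure_ne_top _ _)
      have hq : 0 < (Pr {ω | Real.sign (θ k) * T k ω < c₂}).toReal :=
        ENNReal.toReal_pos hz' (measure_ne_top _ _)
      have hb0 : 0 ≤ (Pr (auxC θ T c₂ (k:ℕ) ∩ {ω | Real.sign (θ k) * T k ω < c₂})).toReal :=
        ENNReal.toReal_nonneg
      have hpq := hkey k hk
      have h5 : (Pr (auxC θ T c₂ (k:ℕ) ∩ {ω | Real.sign (θ k) * T k ω < -c₂})).toReal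
          ≤ ((Pr (auxC θ T c₂ (k:ℕ) ∩ {ω | Real.sign (θ k) * T k ω < c₂})).toReal
              / (Pr {ω | Real.sign (θ k) * T k ω < c₂}).toReal)
            * (Pr {ω | Real.sign (θ k) * T k ω < -c₂}).toReal := (div_le_iff₀ hp).mp hPRDk
      refine le_trans h5 ?_
      calc ((Pr (auxC θ T c₂ (k:ℕ) ∩ {ω | Real.sign (θ k) * T k ω < c₂})).toReal
              / (Pr {ω | Real.sign (θ k) * T k ω < c₂}).toReal)
            * (Pr {ω | Real.sign (θ k) * T k ω < -c₂}).toReal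
          ≤ ((Pr (auxC θ T c₂ (k:ℕ) ∩ {ω | Real.sign (θ k) * T k ω < c₂})).toReal
              / (Pr {ω | Real.sign (θ k) * T k ω < c₂}).toReal)
            * (α * (Pr {ω | Real.sign (θ k) * T k ω < c₂}).toReal) :=
            mul_le_mul_of_nonneg_left hpq (div_nonneg hb0 hq.le)
        _ = α * (Pr (auxC θ T c₂ (k:ℕ) ∩ {ω | Real.sign (θ k) * T k ω < c₂})).toReal := by
            field_simp

  -- ### Part 5 : summation over the false nulls
  have hsum : ∀ m : ℕ, m ≤ n → (∀ j : Fin n, (j:ℕ) < m → θ j ≠ 0) →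
      (Pr (⋃ k : Fin n, if (k:ℕ) < m then
          auxC θ T c₂ (k:ℕ) ∩ {ω | Real.sign (θ k) * T k ω ≤ -c₂} else ∅)).toReal
        ≤ α * (1 - (Pr (auxC θ T c₂ m)).toReal) := by
    intro m hm hfalse
    have h1 : Pr (⋃ k : Fin n, if (k:ℕ) < m then
        auxC θ T c₂ (k:ℕ) ∩ {ω | Real.sign (θ k) * T k ω ≤ -c₂} else ∅)
        ≤ ∑ k : Fin n, Pr (if (k:ℕ) < m then
          auxC θ T c₂ (k:ℕ) ∩ {ω | Real.sign (θ k) * T k ω ≤ -c₂} else ∅) := by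
      refine le_trans (measure_iUnion_le _) ?_
      rw [tsum_fintype]
    have h2 : (Pr (⋃ k : Fin n, if (k:ℕ) < m then
        auxC θ T c₂ (k:ℕ) ∩ {ω | Real.sign (θ k) * T k ω ≤ -c₂} else ∅)).toReal
        ≤ ∑ k : Fin n, (Pr (if (k:ℕ) < m then
          auxC θ T c₂ (k:ℕ) ∩ {ω | Real.sign (θ k) * T k ω ≤ -c₂} else ∅)).toReal := by
      refine le_trans (ENNReal.toReal_mono ?_ h1) ?_
      · exact (ENNReal.sum_lt_top.mpr (fun a _ => measure_lt_top Pr _)).ne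
      · rw [ENNReal.toReal_sum (fun a _ => measure_ne_top _ _)]
    refine le_trans h2 ?_
    have h3 : ∀ k : Fin n, (Pr (if (k:ℕ) < m then
        auxC θ T c₂ (k:ℕ) ∩ {ω | Real.sign (θ k) * T k ω ≤ -c₂} else ∅)).toReal
        ≤ (fun j : ℕ => if j < m then
            α * ((Pr (auxC θ T c₂ j)).toReal - (Pr (auxC θ T c₂ (j+1))).toReal) else 0) (k:ℕ) := by
      intro k
      by_cases hkm : (k:ℕ) < m
      · simp only [if_pos hkm]
        exact hstep k (hfalse k hkm) (fun j hj => hfalse j (lt_trans hj hkm))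
      · simp only [if_neg hkm, measure_empty, ENNReal.toReal_zero, le_refl]
    calc ∑ k : Fin n, (Pr (if (k:ℕ) < m then
            auxC θ T c₂ (k:ℕ) ∩ {ω | Real.sign (θ k) * T k ω ≤ -c₂} else ∅)).toReal
        ≤ ∑ k : Fin n, (fun j : ℕ => if j < m then
            α * ((Pr (auxC θ T c₂ j)).toReal - (Pr (auxC θ T c₂ (j+1))).toReal) else 0) (k:ℕ) :=
          Finset.sum_le_sum (fun k _ => h3 k)
      _ = ∑ j ∈ Finset.range n, (fun j : ℕ => if j < m then
            α * ((Pr (auxC θ T c₂ j)).toReal - (Pr (auxC θ T c₂ (j+1))).toReal) else 0) j :=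
          by exact Fin.sum_univ_eq_sum_range (fun j : ℕ => if j < m then
            α * ((Pr (auxC θ T c₂ j)).toReal - (Pr (auxC θ T c₂ (j+1))).toReal) else 0) n
      _ = ∑ j ∈ Finset.range m, (fun j : ℕ => if j < m then
            α * ((Pr (auxC θ T c₂ j)).toReal - (Pr (auxC θ T c₂ (j+1))).toReal) else 0) j := by
          refine (Finset.sum_subset (Finset.range_subset_range.mpr hm) ?_).symm
          intro j hjn hjm
          rw [Finset.mem_range] at hjm
          simp only [if_neg hjm]
      _ = ∑ j ∈ Finset.range m,
            α * ((Pr (auxC θ T c₂ j)).toReal - (Pr (auxC θ T c₂ (j+1))).toReal) := by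
          refine Finset.sum_congr rfl (fun j hj => ?_)
          beta_reduce
          rw [if_pos (Finset.mem_range.mp hj)]
      _ = α * ∑ j ∈ Finset.range m,
            ((Pr (auxC θ T c₂ j)).toReal - (Pr (auxC θ T c₂ (j+1))).toReal) :=
          (Finset.mul_sum _ _ _).symm
      _ = α * ((Pr (auxC θ T c₂ 0)).toReal - (Pr (auxC θ T c₂ m)).toReal) := by
          rw [Finset.sum_range_sub' (fun j => (Pr (auxC θ T c₂ j)).toReal) m]
      _ = α * (1 - (Pr (auxC θ T c₂ m)).toReal) := by
          rw [auxC_zero, measure_univ, ENNReal.toReal_one]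

  -- ### Part 6 : case analysis and assembly
  -- common facts used in the containment arguments
  have hSor : ∀ (ω : Ω) (j : Fin n), θ j ≠ 0 → (T j ω ≤ -c₂ ∨ c₂ ≤ T j ω) →
      (Real.sign (θ j) * T j ω ≤ -c₂ ∨ c₂ ≤ Real.sign (θ j) * T j ω) := by
    intro ω j hj hor
    rcases lt_or_gt_of_ne hj with hneg | hpos
    · have hs := Real.sign_of_neg hneg
      rcases hor with h | h
      · right; rw [hs]; linarith
      · left; rw [hs]; linarith
    · have hs := Real.sign_of_pos hpos
      rcases hor with h | h
      · left; rw [hs]; linarith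
      · right; rw [hs]; linarith
  have hD_of : ∀ (ω : Ω) (j : Fin n), θ j ≠ 0 → θ j * T j ω < 0 →
      (T j ω ≤ -c₂ ∨ c₂ ≤ T j ω) → Real.sign (θ j) * T j ω ≤ -c₂ := by
    intro ω j hj h3 hor
    rcases lt_or_gt_of_ne hj with hneg | hpos
    · have hs := Real.sign_of_neg hneg
      have hTpos : 0 < T j ω := by nlinarith
      rcases hor with h | h
      · linarith
      · rw [hs]; linarith
    · have hs := Real.sign_of_pos hpos
      have hTneg : T j ω < 0 := by nlinarith
      rcases hor with h | h
      · rw [hs]; linarith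
      · linarith
  by_cases hex : ∃ i : Fin n, θ i = 0
  · -- Case B : there is a true null hypothesis
    obtain ⟨i₀, hi₀θ, hi₀min⟩ : ∃ i₀ : Fin n, θ i₀ = 0 ∧ ∀ j : Fin n, θ j = 0 → i₀ ≤ j := by
      obtain ⟨i, hi⟩ := hex
      obtain ⟨i₀, hmem, hmin⟩ := Finset.exists_min_image
        (Finset.univ.filter fun i : Fin n => θ i = 0) id ⟨i, by simp [hi]⟩
      refine ⟨i₀, by simpa using hmem, fun j hj => hmin j (by simp [hj])⟩
    have hfalse : ∀ j : Fin n, (j:ℕ) < (i₀:ℕ) → θ j ≠ 0 := by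
      intro j hj h0
      have h1 : (i₀:ℕ) ≤ (j:ℕ) := hi₀min j h0
      omega
    -- containment
    have hsubset : {ω | ∃ i : Fin n,
        (∀ j : Fin n, j ≤ i → 2 * min (F 0 (T j ω)) (1 - F 0 (T j ω)) ≤ α) ∧
        (θ i = 0 ∨ (θ i ≠ 0 ∧ θ i * T i ω < 0))}
        ⊆ (⋃ k : Fin n, if (k:ℕ) < (i₀:ℕ) then
            auxC θ T c₂ (k:ℕ) ∩ {ω | Real.sign (θ k) * T k ω ≤ -c₂} else ∅)
          ∪ (auxC θ T c₂ (i₀:ℕ) ∩ {ω | T i₀ ω ≤ -c₂ ∨ c₂ ≤ T i₀ ω}) := by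
      intro ω hω
      obtain ⟨i, hall_i, herr⟩ := hω
      have hor : ∀ j : Fin n, j ≤ i → (T j ω ≤ -c₂ ∨ c₂ ≤ T j ω) :=
        fun j hj => (pchar (T j ω)).mp (hall_i j hj)
      by_cases hQ : ∃ kk : ℕ, ∃ hkk : kk < n, (⟨kk, hkk⟩ : Fin n) ≤ i ∧ kk < (i₀:ℕ) ∧
          Real.sign (θ ⟨kk, hkk⟩) * T ⟨kk, hkk⟩ ω ≤ -c₂
      · left
        obtain ⟨hk₀n, hk₀i, hk₀m, hk₀D⟩ := Nat.find_spec hQ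
        refine Set.mem_iUnion.mpr ⟨⟨Nat.find hQ, hk₀n⟩, ?_⟩
        rw [if_pos hk₀m]
        refine ⟨?_, hk₀D⟩
        rw [auxC_mem]
        intro j hj
        have hji : j ≤ i := le_trans (le_of_lt (show j < (⟨Nat.find hQ, hk₀n⟩ : Fin n) from hj)) hk₀i
        have hjθ : θ j ≠ 0 := hfalse j (lt_trans hj hk₀m)
        rcases hSor ω j hjθ (hor j hji) with hD | hC
        · exact absurd (⟨j.isLt, hji, lt_trans hj hk₀m, hD⟩ : ∃ hkk : (j:ℕ) < n,
            (⟨(j:ℕ), hkk⟩ : Fin n) ≤ i ∧ (j:ℕ) < (i₀:ℕ) ∧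
            Real.sign (θ ⟨(j:ℕ), hkk⟩) * T ⟨(j:ℕ), hkk⟩ ω ≤ -c₂) (Nat.find_min hQ hj)
        · exact hC
      · right
        have hi₀i : i₀ ≤ i := by
          rcases herr with h0 | ⟨hne, hT3⟩
          · exact hi₀min i h0
          · by_contra hlt
            push_neg at hlt
            have hD : Real.sign (θ i) * T i ω ≤ -c₂ := hD_of ω i hne hT3 (hor i le_rfl)
            exact hQ ⟨(i:ℕ), i.isLt, le_rfl, hlt, hD⟩
        refine ⟨?_, hor i₀ hi₀i⟩
        rw [auxC_mem]
        intro j hj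
        have hji : j ≤ i := le_trans (le_of_lt (show j < i₀ from hj)) hi₀i
        have hjθ : θ j ≠ 0 := hfalse j hj
        rcases hSor ω j hjθ (hor j hji) with hD | hC
        · exact absurd ⟨j.isLt, hji, hj, hD⟩ (fun c => hQ ⟨(j:ℕ), c⟩)
        · exact hC
    -- independence computation
    have hindep' := hindep i₀ hi₀θ (fun j hj => hfalse j hj)
    have hXeq : Pr (auxC θ T c₂ (i₀:ℕ) ∩ {ω | T i₀ ω ≤ -c₂ ∨ c₂ ≤ T i₀ ω})
        = Pr {ω | T i₀ ω ≤ -c₂ ∨ c₂ ≤ T i₀ ω} * Pr (auxC θ T c₂ (i₀:ℕ)) := by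
      have hM : MeasurableSet {y : {j : Fin n // j < i₀} → ℝ |
          ∀ j, c₂ ≤ Real.sign (θ j.1) * y j} := by
        have hM2 : {y : {j : Fin n // j < i₀} → ℝ | ∀ j, c₂ ≤ Real.sign (θ j.1) * y j}
            = ⋂ j : {j : Fin n // j < i₀}, {y | c₂ ≤ Real.sign (θ j.1) * y j} := by
          ext y; simp [Set.mem_iInter]
        rw [hM2]
        exact MeasurableSet.iInter fun j =>
          measurableSet_le measurable_const ((measurable_pi_apply j).const_mul _)
      have hs : MeasurableSet (Set.Iic (-c₂) ∪ Set.Ici c₂ : Set ℝ) :=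
        measurableSet_Iic.union measurableSet_Ici
      have h6 := hindep'.measure_inter_preimage_eq_mul
        (Set.Iic (-c₂) ∪ Set.Ici c₂) _ hs hM
      have e1 : (T i₀) ⁻¹' (Set.Iic (-c₂) ∪ Set.Ici c₂)
          = {ω | T i₀ ω ≤ -c₂ ∨ c₂ ≤ T i₀ ω} := by
        ext ω; simp [Set.mem_union]
      have e2 : (fun ω => fun j : {j : Fin n // j < i₀} => T j.1 ω) ⁻¹'
          {y | ∀ j, c₂ ≤ Real.sign (θ j.1) * y j} = auxC θ T c₂ (i₀:ℕ) := by
        ext ω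
        rw [auxC_mem]
        constructor
        · intro h j hj
          exact h ⟨j, hj⟩
        · intro h j
          exact h j.1 j.2
      rw [e1, e2] at h6
      rw [Set.inter_comm]
      exact h6
    have hXval : (Pr {ω | T i₀ ω ≤ -c₂ ∨ c₂ ≤ T i₀ ω}).toReal = α := by
      have hcdf0 : ∀ x, (Pr {ω | T i₀ ω ≤ x}).toReal = F 0 x := by
        intro x
        rw [hcdf i₀ x, hi₀θ]
      have hdis : Disjoint {ω | T i₀ ω ≤ -c₂} {ω | c₂ ≤ T i₀ ω} := by
        rw [Set.disjoint_left]
        intro ω h1 h2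
        have h1' : T i₀ ω ≤ -c₂ := h1
        have h2' : c₂ ≤ T i₀ ω := h2
        linarith
      have hu : {ω | T i₀ ω ≤ -c₂ ∨ c₂ ≤ T i₀ ω}
          = {ω | T i₀ ω ≤ -c₂} ∪ {ω | c₂ ≤ T i₀ ω} := Set.setOf_or
      rw [hu, measure_union hdis (measurableSet_le measurable_const (hT i₀)),
        ENNReal.toReal_add (measure_ne_top _ _) (measure_ne_top _ _), hcdf0 (-c₂), hc2',
        aux_meas_ge Pr (hT i₀) (hFcont 0) hcdf0 c₂, hc2]
      ring
    -- assembly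
    have hEbound : (Pr {ω | ∃ i : Fin n,
        (∀ j : Fin n, j ≤ i → 2 * min (F 0 (T j ω)) (1 - F 0 (T j ω)) ≤ α) ∧
        (θ i = 0 ∨ (θ i ≠ 0 ∧ θ i * T i ω < 0))}).toReal
        ≤ (Pr (⋃ k : Fin n, if (k:ℕ) < (i₀:ℕ) then
            auxC θ T c₂ (k:ℕ) ∩ {ω | Real.sign (θ k) * T k ω ≤ -c₂} else ∅)).toReal
          + (Pr (auxC θ T c₂ (i₀:ℕ) ∩ {ω | T i₀ ω ≤ -c₂ ∨ c₂ ≤ T i₀ ω})).toReal := by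
      have hh1 : Pr {ω | ∃ i : Fin n,
          (∀ j : Fin n, j ≤ i → 2 * min (F 0 (T j ω)) (1 - F 0 (T j ω)) ≤ α) ∧
          (θ i = 0 ∨ (θ i ≠ 0 ∧ θ i * T i ω < 0))}
          ≤ Pr (⋃ k : Fin n, if (k:ℕ) < (i₀:ℕ) then
              auxC θ T c₂ (k:ℕ) ∩ {ω | Real.sign (θ k) * T k ω ≤ -c₂} else ∅)
            + Pr (auxC θ T c₂ (i₀:ℕ) ∩ {ω | T i₀ ω ≤ -c₂ ∨ c₂ ≤ T i₀ ω}) :=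
        le_trans (measure_mono hsubset) (measure_union_le _ _)
      refine le_trans (ENNReal.toReal_mono ?_ hh1) ?_
      · exact (ENNReal.add_ne_top.mpr ⟨measure_ne_top _ _, measure_ne_top _ _⟩)
      · rw [ENNReal.toReal_add (measure_ne_top _ _) (measure_ne_top _ _)]
    refine le_trans hEbound ?_
    have h2 := hsum (i₀:ℕ) (le_of_lt i₀.isLt) hfalse
    have h3 : (Pr (auxC θ T c₂ (i₀:ℕ) ∩ {ω | T i₀ ω ≤ -c₂ ∨ c₂ ≤ T i₀ ω})).toReal
        = α * (Pr (auxC θ T c₂ (i₀:ℕ))).toReal := by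
      rw [hXeq, ENNReal.toReal_mul, hXval]
    rw [h3]
    linarith
  · -- Case A : all null hypotheses are false
    have hall : ∀ i : Fin n, θ i ≠ 0 := fun i hi0 => hex ⟨i, hi0⟩
    have hsubset : {ω | ∃ i : Fin n,
        (∀ j : Fin n, j ≤ i → 2 * min (F 0 (T j ω)) (1 - F 0 (T j ω)) ≤ α) ∧
        (θ i = 0 ∨ (θ i ≠ 0 ∧ θ i * T i ω < 0))}
        ⊆ (⋃ k : Fin n, if (k:ℕ) < n then
            auxC θ T c₂ (k:ℕ) ∩ {ω | Real.sign (θ k) * T k ω ≤ -c₂} else ∅) := by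
      intro ω hω
      obtain ⟨i, hall_i, herr⟩ := hω
      have hor : ∀ j : Fin n, j ≤ i → (T j ω ≤ -c₂ ∨ c₂ ≤ T j ω) :=
        fun j hj => (pchar (T j ω)).mp (hall_i j hj)
      have herr' : θ i * T i ω < 0 := by
        rcases herr with h0 | ⟨_, h3⟩
        · exact absurd h0 (hall i)
        · exact h3
      have hQ : ∃ kk : ℕ, ∃ hkk : kk < n, (⟨kk, hkk⟩ : Fin n) ≤ i ∧
          Real.sign (θ ⟨kk, hkk⟩) * T ⟨kk, hkk⟩ ω ≤ -c₂ :=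
        ⟨(i:ℕ), i.isLt, le_rfl, hD_of ω i (hall i) herr' (hor i le_rfl)⟩
      obtain ⟨hk₀n, hk₀i, hk₀D⟩ := Nat.find_spec hQ
      refine Set.mem_iUnion.mpr ⟨⟨Nat.find hQ, hk₀n⟩, ?_⟩
      rw [if_pos hk₀n]
      refine ⟨?_, hk₀D⟩
      rw [auxC_mem]
      intro j hj
      have hji : j ≤ i := le_trans (le_of_lt (show j < (⟨Nat.find hQ, hk₀n⟩ : Fin n) from hj)) hk₀i
      rcases hSor ω j (hall j) (hor j hji) with hD | hC
      · exact absurd (⟨j.isLt, hji, hD⟩ : ∃ hkk : (j:ℕ) < n,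
          (⟨(j:ℕ), hkk⟩ : Fin n) ≤ i ∧
          Real.sign (θ ⟨(j:ℕ), hkk⟩) * T ⟨(j:ℕ), hkk⟩ ω ≤ -c₂) (Nat.find_min hQ hj)
      · exact hC
    have h2 := hsum n le_rfl (fun j hj => hall j)
    have h4 : (Pr {ω | ∃ i : Fin n,
        (∀ j : Fin n, j ≤ i → 2 * min (F 0 (T j ω)) (1 - F 0 (T j ω)) ≤ α) ∧
        (θ i = 0 ∨ (θ i ≠ 0 ∧ θ i * T i ω < 0))}).toReal
        ≤ (Pr (⋃ k : Fin n, if (k:ℕ) < n then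
            auxC θ T c₂ (k:ℕ) ∩ {ω | Real.sign (θ k) * T k ω ≤ -c₂} else ∅)).toReal :=
      ENNReal.toReal_mono (measure_ne_top _ _) (measure_mono hsubset)
    have h5 : (0:ℝ) ≤ (Pr (auxC θ T c₂ n)).toReal := ENNReal.toReal_nonneg
    nlinarith [mul_nonneg hα0.le h5]
end

section
/- Suppose θ_i ≠ 0 for every i = 1,…,n (all tested hypotheses are false), the family {F_θ} satisfies the MLR assumption (Assumption 2), and the signed statistics sign(θ_1)·T_1, …, sign(θ_n)·T_n are positively regression dependent (Assumption 3). Then Procedure 2 (the directional fixed sequence procedure with constant critical value α) satisfies mdFWER ≤ α; here the mdFWER equals the probability of making at least one type 3 (directional) error. -/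
open MeasureTheory ProbabilityTheory

open Filter Set


lemma aux_mul_setIntegral_le {g h : ℝ → ℝ} {A B : Set ℝ}
    (hA : MeasurableSet A) (hB : MeasurableSet B)
    (hgA : IntegrableOn g A volume) (hhA : IntegrableOn h A volume)
    (hgB : IntegrableOn g B volume) (hhB : IntegrableOn h B volume)
    (hpt : ∀ s ∈ A, ∀ t ∈ B, g s * h t ≤ h s * g t) :
    (∫ s in A, g s) * (∫ t in B, h t) ≤ (∫ s in A, h s) * (∫ t in B, g t) := by
  set cg : ℝ := ∫ t in B, g t with hcg
  set ch : ℝ := ∫ t in B, h t with hch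
  have e1 : (∫ s in A, g s) * ch = ∫ s in A, g s * ch := (integral_mul_const ch _).symm
  have e2 : (∫ s in A, h s) * cg = ∫ s in A, h s * cg := (integral_mul_const cg _).symm
  rw [e1, e2]
  have key : ∀ s ∈ A, g s * ch ≤ h s * cg := by
    intro s hs
    have e3 : g s * ch = ∫ t in B, g s * h t := (integral_const_mul (g s) _).symm
    have e4 : h s * cg = ∫ t in B, h s * g t := (integral_const_mul (h s) _).symm
    rw [e3, e4]
    exact setIntegral_mono_on (hhB.const_mul (g s)) (hgB.const_mul (h s)) hB
      (fun t ht => hpt s hs t ht)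
  exact setIntegral_mono_on (hgA.mul_const ch) (hhA.mul_const cg) hA key

lemma aux_tendsto_atTop {Ω : Type*} [MeasurableSpace Ω] (Pr : Measure Ω)
    [IsProbabilityMeasure Pr] (X : Ω → ℝ) :
    Tendsto (fun m : ℕ => (Pr {ω | X ω ≤ (m : ℝ)}).toReal) atTop (nhds 1) := by
  have hm : Monotone (fun m : ℕ => {ω | X ω ≤ (m : ℝ)}) := by
    intro a b hab ω hω
    simp only [Set.mem_setOf_eq] at *
    exact le_trans hω (by exact_mod_cast hab)
  have hu : (⋃ m : ℕ, {ω | X ω ≤ (m : ℝ)}) = univ := by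
    ext ω; simp only [mem_iUnion, mem_setOf_eq, mem_univ, iff_true]
    obtain ⟨m, hm'⟩ := exists_nat_ge (X ω)
    exact ⟨m, hm'⟩
  have h := tendsto_measure_iUnion_atTop (μ := Pr) hm
  rw [hu, measure_univ] at h
  have := (ENNReal.tendsto_toReal (by simp)).comp h
  simpa [Function.comp_def] using this

lemma aux_tendsto_atBot {Ω : Type*} [MeasurableSpace Ω] (Pr : Measure Ω)
    [IsProbabilityMeasure Pr] (X : Ω → ℝ) (hX : Measurable X) :
    Tendsto (fun m : ℕ => (Pr {ω | X ω ≤ -(m : ℝ)}).toReal) atTop (nhds 0) := by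
  have hm : Antitone (fun m : ℕ => {ω | X ω ≤ -(m : ℝ)}) := by
    intro a b hab ω hω
    simp only [Set.mem_setOf_eq] at *
    refine le_trans hω (by simp only [neg_le_neg_iff]; exact_mod_cast hab)
  have hi : (⋂ m : ℕ, {ω | X ω ≤ -(m : ℝ)}) = ∅ := by
    ext ω; simp only [mem_iInter, mem_setOf_eq, mem_empty_iff_false, iff_false, not_forall]
    obtain ⟨m, hm'⟩ := exists_nat_ge (-X ω + 1)
    exact ⟨m, by push_neg; linarith⟩
  have h := tendsto_measure_iInter_atTop (μ := Pr)
    (fun m => (hX measurableSet_Iic).nullMeasurableSet) hm ⟨0, measure_ne_top _ _⟩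
  have h' : Tendsto (fun m : ℕ => Pr {ω | X ω ≤ -(m:ℝ)}) atTop (nhds (Pr (∅ : Set Ω))) := by
    rw [← hi]; exact h
  rw [measure_empty] at h'
  have := (ENNReal.tendsto_toReal (by simp)).comp h'
  simpa [Function.comp_def] using this

lemma aux_prob_lt {Ω : Type*} [MeasurableSpace Ω] (Pr : Measure Ω)
    [IsProbabilityMeasure Pr] (X : Ω → ℝ) (Fc : ℝ → ℝ) (hcont : Continuous Fc)
    (h : ∀ x, (Pr {ω | X ω ≤ x}).toReal = Fc x) (x : ℝ) :
    (Pr {ω | X ω < x}).toReal = Fc x := by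
  have hm : Monotone (fun m : ℕ => {ω | X ω ≤ x - 1 / (m + 1)}) := by
    intro a b hab ω hω
    simp only [Set.mem_setOf_eq] at *
    refine le_trans hω ?_
    have h1 : (1 : ℝ) / (b + 1) ≤ 1 / (a + 1) := by
      apply one_div_le_one_div_of_le (by positivity)
      exact_mod_cast by linarith [(Nat.cast_le (α := ℝ)).2 hab]
    linarith
  have hu : (⋃ m : ℕ, {ω | X ω ≤ x - 1 / (m + 1)}) = {ω | X ω < x} := by
    ext ω
    simp only [mem_iUnion, mem_setOf_eq]
    constructor
    · rintro ⟨m, hm'⟩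
      have : (0:ℝ) < 1 / (m + 1) := by positivity
      linarith
    · intro hω
      obtain ⟨m, hm'⟩ := exists_nat_one_div_lt (sub_pos.2 hω)
      exact ⟨m, by linarith⟩
  have htend := tendsto_measure_iUnion_atTop (μ := Pr) hm
  rw [hu] at htend
  have h2 := (ENNReal.tendsto_toReal (measure_ne_top Pr _)).comp htend
  have h3 : Tendsto (fun m : ℕ => Fc (x - 1 / (m + 1))) atTop (nhds (Fc x)) := by
    refine (hcont.tendsto x).comp ?_
    have : Tendsto (fun m : ℕ => 1 / ((m:ℝ) + 1)) atTop (nhds 0) :=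
      tendsto_one_div_add_atTop_nhds_zero_nat
    have := (tendsto_const_nhds (x := x)).sub this
    simpa using this
  have h4 : (fun m : ℕ => ((Pr {ω | X ω ≤ x - 1 / (m + 1)}).toReal)) =
      fun m : ℕ => Fc (x - 1 / (m + 1)) := by
    funext m; exact h _
  have h2' : Tendsto (fun m : ℕ => (Pr {ω | X ω ≤ x - 1 / (m + 1)}).toReal) atTop
      (nhds ((Pr {ω | X ω < x}).toReal)) := h2
  rw [h4] at h2'
  exact tendsto_nhds_unique h2' h3

lemma aux_compl {Ω : Type*} [MeasurableSpace Ω] (Pr : Measure Ω)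
    [IsProbabilityMeasure Pr] {s : Set Ω} (hs : MeasurableSet s) :
    (Pr sᶜ).toReal = 1 - (Pr s).toReal := by
  rw [measure_compl hs (measure_ne_top _ _), measure_univ]
  rw [ENNReal.toReal_sub_of_le prob_le_one (by simp)]
  simp

/-- Corollary 1: When all tested hypotheses are false (θ_i ≠ 0 for all i),
under MLR (Assumption 2) and positive regression dependence of the signed statistics
sign(θ_i)·T_i (Assumption 3), Procedure 2 (constant critical value α) satisfies
mdFWER ≤ α (here only type 3 errors can occur). -/
theorem procedure2_controls_mdFWER_all_false
    {Ω : Type*} [MeasurableSpace Ω] (Pr : Measure Ω) [IsProbabilityMeasure Pr]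
    (F : ℝ → ℝ → ℝ)
    (hFcont : ∀ θ', Continuous (F θ'))
    (hFmono : ∀ θ', Monotone (F θ'))
    (hF0strict : StrictMono (F 0))
    (hFsym : ∀ x : ℝ, F 0 (-x) = 1 - F 0 x)
    (hstoch : ∀ θ' θ'' : ℝ, θ' ≤ θ'' → ∀ x, F θ'' x ≤ F θ' x)
    -- MLR assumption (Assumption 2)
    (f : ℝ → ℝ → ℝ)
    (hf_nonneg : ∀ θ' x, 0 ≤ f θ' x)
    (hf_meas : ∀ θ', Measurable (f θ'))
    (hf_cdf : ∀ θ' x, F θ' x = ∫ t in Set.Iic x, f θ' t)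
    (hMLR : ∀ θ' θ'' : ℝ, θ' < θ'' → ∀ x₁ x₂ : ℝ, x₁ < x₂ →
      f θ'' x₁ * f θ' x₂ ≤ f θ'' x₂ * f θ' x₁)
    (n : ℕ) (θ : Fin n → ℝ) (hθ : ∀ i, θ i ≠ 0)
    (T : Fin n → Ω → ℝ) (hT : ∀ i, Measurable (T i))
    (hcdf : ∀ i x, (Pr {ω | T i ω ≤ x}).toReal = F (θ i) x)
    -- Assumption 3: positive regression dependence of the signed statistics
    (hPRD : ∀ k : Fin n, ∀ φ : (Fin n → ℝ) → ℝ,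
      Measurable φ → Monotone φ → (∃ C, ∀ x, |φ x| ≤ C) →
      ∀ u u' : ℝ, u ≤ u' →
        (Pr {ω | u ≤ Real.sign (θ k) * T k ω} ≠ 0 →
         Pr {ω | u' ≤ Real.sign (θ k) * T k ω} ≠ 0 →
          (∫ ω in {ω | u ≤ Real.sign (θ k) * T k ω},
              φ (fun i => Real.sign (θ i) * T i ω) ∂Pr)
              / (Pr {ω | u ≤ Real.sign (θ k) * T k ω}).toReal
            ≤ (∫ ω in {ω | u' ≤ Real.sign (θ k) * T k ω},
              φ (fun i => Real.sign (θ i) * T i ω) ∂Pr)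
              / (Pr {ω | u' ≤ Real.sign (θ k) * T k ω}).toReal) ∧
        (Pr {ω | Real.sign (θ k) * T k ω < u} ≠ 0 →
         Pr {ω | Real.sign (θ k) * T k ω < u'} ≠ 0 →
          (∫ ω in {ω | Real.sign (θ k) * T k ω < u},
              φ (fun i => Real.sign (θ i) * T i ω) ∂Pr)
              / (Pr {ω | Real.sign (θ k) * T k ω < u}).toReal
            ≤ (∫ ω in {ω | Real.sign (θ k) * T k ω < u'},
              φ (fun i => Real.sign (θ i) * T i ω) ∂Pr)
              / (Pr {ω | Real.sign (θ k) * T k ω < u'}).toReal))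
    (α : ℝ) (hα : α ∈ Set.Ioo (0 : ℝ) 1) :
    (Pr {ω | ∃ i : Fin n,
        (∀ j : Fin n, j ≤ i →
          2 * min (F 0 (T j ω)) (1 - F 0 (T j ω)) ≤ α) ∧
        (θ i = 0 ∨ (θ i ≠ 0 ∧ θ i * T i ω < 0))}).toReal ≤ α := by
  classical
  obtain ⟨hα0, hα1⟩ := hα
  rcases Nat.eq_zero_or_pos n with hn | hn
  · subst hn
    have he : {ω : Ω | ∃ i : Fin 0,
        (∀ j : Fin 0, j ≤ i → 2 * min (F 0 (T j ω)) (1 - F 0 (T j ω)) ≤ α) ∧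
        (θ i = 0 ∨ (θ i ≠ 0 ∧ θ i * T i ω < 0))} = ∅ := by
      ext ω; simp only [mem_setOf_eq, mem_empty_iff_false, iff_false]
      rintro ⟨i, -⟩; exact i.elim0
    rw [he]; simp [hα0.le]
  -- basic facts
  have hSmeas : ∀ j : Fin n, Measurable fun ω => Real.sign (θ j) * T j ω :=
    fun j => (hT j).const_mul _
  have hlt : ∀ (j : Fin n) x, (Pr {ω | T j ω < x}).toReal = F (θ j) x :=
    fun j x => aux_prob_lt Pr (T j) (F (θ j)) (hFcont _) (hcdf j) x
  have hF0 : ∀ (j : Fin n) x, 0 ≤ F (θ j) x := by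
    intro j x; rw [← hcdf j x]; exact ENNReal.toReal_nonneg
  have hF1 : ∀ (j : Fin n) x, F (θ j) x ≤ 1 := by
    intro j x; rw [← hcdf j x]
    exact (ENNReal.toReal_le_of_le_ofReal zero_le_one (by simpa using prob_le_one))
  have hF0nonneg : ∀ x, 0 ≤ F 0 x := by
    intro x; rw [hf_cdf 0 x]
    exact setIntegral_nonneg measurableSet_Iic fun t _ => hf_nonneg 0 t
  have hF0pos : ∀ x, 0 < F 0 x := by
    intro x
    exact lt_of_le_of_lt (hF0nonneg (x - 1)) (hF0strict (by linarith : x - 1 < x))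
  have hF0lt1 : ∀ x, F 0 x < 1 := by
    intro x
    have := hFsym (-x)
    rw [neg_neg] at this
    nlinarith [hF0pos (-x)]
  have hF0half : F 0 0 = 1 / 2 := by
    have := hFsym 0
    rw [neg_zero] at this
    linarith
  have hint0 : ∀ x, IntegrableOn (f 0) (Set.Iic x) volume := by
    intro x
    by_contra hni
    have h0 : F 0 x = 0 := by rw [hf_cdf 0 x]; exact integral_undef hni
    exact absurd h0 (ne_of_gt (hF0pos x))
  have hlimF : ∀ j : Fin n, Tendsto (fun m : ℕ => F (θ j) m) atTop (nhds 1) := by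
    intro j
    have := aux_tendsto_atTop Pr (T j)
    simpa only [hcdf j] using this
  have hintθ : ∀ (j : Fin n) x, IntegrableOn (f (θ j)) (Set.Iic x) volume := by
    intro j x
    have hkey : ∀ y : ℝ, 0 < F (θ j) y → IntegrableOn (f (θ j)) (Set.Iic y) volume := by
      intro y hy
      by_contra hni
      have h0 : F (θ j) y = 0 := by rw [hf_cdf _ y]; exact integral_undef hni
      exact absurd h0 (ne_of_gt hy)
    obtain ⟨m, hm⟩ := ((hlimF j).eventually (eventually_gt_nhds (by norm_num : (1:ℝ)/2 < 1))).exists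
    rcases le_total x m with hx | hx
    · exact (hkey m (by linarith)).mono_set (Set.Iic_subset_Iic.2 hx)
    · exact hkey x (lt_of_lt_of_le (by linarith) (hFmono (θ j) hx))
  -- critical constant
  obtain ⟨c₂, hc₂val, hc₂pos⟩ :
      ∃ c₂ : ℝ, F 0 c₂ = 1 - α / 2 ∧ 0 < c₂ := by
    have j0 : Fin n := ⟨0, hn⟩
    have hb : ∃ b : ℝ, 1 - α / 2 ≤ F 0 b := by
      rcases (hθ j0).lt_or_gt with hneg | hpos
      · have h2 := aux_tendsto_atBot Pr (T j0) (hT j0)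
        have h2' : Tendsto (fun m : ℕ => F (θ j0) (-(m : ℝ))) atTop (nhds 0) := by
          simpa only [hcdf j0] using h2
        obtain ⟨m, hm⟩ := (h2'.eventually (eventually_lt_nhds (by positivity : (0:ℝ) < α/2))).exists
        refine ⟨(m : ℝ), ?_⟩
        have hle : F 0 (-(m : ℝ)) ≤ F (θ j0) (-(m : ℝ)) := hstoch (θ j0) 0 hneg.le _
        have := hFsym (m : ℝ)
        linarith
      · obtain ⟨m, hm⟩ := ((hlimF j0).eventually
          (eventually_gt_nhds (by linarith : 1 - α/2 < 1))).exists
        refine ⟨(m : ℝ), ?_⟩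
        have hle : F (θ j0) (m : ℝ) ≤ F 0 (m : ℝ) := hstoch 0 (θ j0) hpos.le _
        linarith
    obtain ⟨b, hb⟩ := hb
    have h0b : (0:ℝ) ≤ b := by
      by_contra hcon
      push_neg at hcon
      have : F 0 b < F 0 0 := hF0strict hcon
      rw [hF0half] at this
      linarith
    have hmem : (1 - α/2) ∈ Set.Icc (F 0 0) (F 0 b) := by
      constructor
      · rw [hF0half]; linarith
      · exact hb
    obtain ⟨c₂, hc₂mem, hc₂⟩ := intermediate_value_Icc h0b ((hFcont 0).continuousOn) hmem
    refine ⟨c₂, hc₂, ?_⟩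
    have : F 0 0 < F 0 c₂ := by rw [hF0half, hc₂]; linarith
    exact hF0strict.lt_iff_lt.1 this
  have hc₁val : F 0 (-c₂) = α / 2 := by rw [hFsym]; linarith
  -- rejection region
  have hrej : ∀ (j : Fin n) ω, 2 * min (F 0 (T j ω)) (1 - F 0 (T j ω)) ≤ α →
      (Real.sign (θ j) * T j ω ≤ -c₂ ∨ c₂ ≤ Real.sign (θ j) * T j ω) := by
    intro j ω hp
    have hmin : min (F 0 (T j ω)) (1 - F 0 (T j ω)) ≤ α / 2 := by linarith
    have hT' : T j ω ≤ -c₂ ∨ c₂ ≤ T j ω := by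
      rcases min_le_iff.1 hmin with h | h
      · left
        have : F 0 (T j ω) ≤ F 0 (-c₂) := by rw [hc₁val]; exact h
        exact hF0strict.le_iff_le.1 this
      · right
        have : F 0 c₂ ≤ F 0 (T j ω) := by rw [hc₂val]; linarith
        exact hF0strict.le_iff_le.1 this
    rcases (hθ j).lt_or_gt with hneg | hpos
    · rw [Real.sign_of_neg hneg]
      rcases hT' with h | h
      · right; linarith
      · left; linarith
    · rw [Real.sign_of_pos hpos, one_mul]
      exact hT'
  -- the sets
  set G : Fin n → Set Ω := fun i => {ω | ∀ j, j < i → c₂ ≤ Real.sign (θ j) * T j ω} with hG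
  have hGmeas : ∀ i, MeasurableSet (G i) := by
    intro i
    have : G i = ⋂ j, ⋂ (_ : j < i), {ω | c₂ ≤ Real.sign (θ j) * T j ω} := by
      ext ω; simp [hG]
    rw [this]
    exact MeasurableSet.iInter fun j => MeasurableSet.iInter fun _ =>
      (hSmeas j) measurableSet_Ici
  set E : Fin n → Set Ω := fun i => G i ∩ {ω | Real.sign (θ i) * T i ω ≤ -c₂} with hE
  set D : Fin n → Set Ω := fun i => G i ∩ {ω | Real.sign (θ i) * T i ω < c₂} with hD
  have hEmeas : ∀ i, MeasurableSet (E i) := fun i =>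
    (hGmeas i).inter ((hSmeas i) measurableSet_Iic)
  have hDmeas : ∀ i, MeasurableSet (D i) := fun i =>
    (hGmeas i).inter ((hSmeas i) measurableSet_Iio)
  -- event inclusion
  have hsub : {ω | ∃ i : Fin n,
      (∀ j : Fin n, j ≤ i → 2 * min (F 0 (T j ω)) (1 - F 0 (T j ω)) ≤ α) ∧
      (θ i = 0 ∨ (θ i ≠ 0 ∧ θ i * T i ω < 0))} ⊆ ⋃ i, E i := by
    rintro ω ⟨i, hall, hdir⟩
    rcases hdir with h0 | ⟨-, hTdir⟩
    · exact absurd h0 (hθ i)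
    have hSneg : Real.sign (θ i) * T i ω < 0 := by
      rcases (hθ i).lt_or_gt with hneg | hpos
      · rw [Real.sign_of_neg hneg]
        nlinarith
      · rw [Real.sign_of_pos hpos, one_mul]
        nlinarith
    have hSi : Real.sign (θ i) * T i ω ≤ -c₂ := by
      rcases hrej i ω (hall i le_rfl) with h | h
      · exact h
      · linarith
    -- take the minimal index j ≤ i with the signed statistic ≤ -c₂
    set Q : Finset (Fin n) :=
      Finset.univ.filter (fun j => j ≤ i ∧ Real.sign (θ j) * T j ω ≤ -c₂) with hQ
    have hQne : Q.Nonempty := ⟨i, by simp [hQ, hSi]⟩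
    set i' : Fin n := Q.min' hQne with hi'
    have hi'mem : i' ≤ i ∧ Real.sign (θ i') * T i' ω ≤ -c₂ :=
      (Finset.mem_filter.1 (Q.min'_mem hQne)).2
    refine Set.mem_iUnion.2 ⟨i', ?_, hi'mem.2⟩
    intro j hj
    have hjle : j ≤ i := le_trans hj.le hi'mem.1
    rcases hrej j ω (hall j hjle) with h | h
    · exfalso
      have : i' ≤ j := Q.min'_le j (by simp [hQ, hjle, h])
      exact absurd hj (not_lt.2 this)
    · exact h
  -- per-index key bound
  have hkey : ∀ i : Fin n, (Pr (E i)).toReal ≤ α * (Pr (D i)).toReal := by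
    intro i
    -- no atoms / classical cdf identities for the signed statistic
    have hqeq : ∀ x : ℝ, Pr {ω | Real.sign (θ i) * T i ω ≤ x}
        = Pr {ω | Real.sign (θ i) * T i ω < x} := by
      intro x
      have h1 : (Pr {ω | Real.sign (θ i) * T i ω ≤ x}).toReal
          = (Pr {ω | Real.sign (θ i) * T i ω < x}).toReal := by
        rcases (hθ i).lt_or_gt with hneg | hpos
        · rw [Real.sign_of_neg hneg]
          have e1 : {ω | (-1 : ℝ) * T i ω ≤ x} = {ω | T i ω < -x}ᶜ := by
            ext ω; simp only [mem_setOf_eq, mem_compl_iff, not_lt]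
            constructor <;> intro h <;> linarith
          have e2 : {ω | (-1 : ℝ) * T i ω < x} = {ω | T i ω ≤ -x}ᶜ := by
            ext ω; simp only [mem_setOf_eq, mem_compl_iff, not_le]
            constructor <;> intro h <;> linarith
          rw [e1, e2, aux_compl Pr (s := {ω | T i ω < -x}) ((hT i) measurableSet_Iio),
            aux_compl Pr (s := {ω | T i ω ≤ -x}) ((hT i) measurableSet_Iic), hlt i, hcdf i]
        · rw [Real.sign_of_pos hpos]
          simp only [one_mul]
          rw [hcdf i, hlt i]
      exact (ENNReal.toReal_eq_toReal_iff' (measure_ne_top _ _) (measure_ne_top _ _)).1 h1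
    -- marginal inequality : P(S_i < -c₂) ≤ α P(S_i < c₂)
    have hIoc0 : ∫ t in Set.Ioc (-c₂) c₂, f 0 t = 1 - α := by
      have hsplit : F 0 c₂ = F 0 (-c₂) + ∫ t in Set.Ioc (-c₂) c₂, f 0 t := by
        rw [hf_cdf 0 c₂, hf_cdf 0 (-c₂),
          ← setIntegral_union (Set.Iic_disjoint_Ioc le_rfl) measurableSet_Ioc
            (hint0 (-c₂)) ((hint0 c₂).mono_set Set.Ioc_subset_Iic_self),
          Set.Iic_union_Ioc_eq_Iic (by linarith : -c₂ ≤ c₂)]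
      rw [hc₂val, hc₁val] at hsplit
      linarith
    have hIocθ : ∀ a b : ℝ, a ≤ b →
        ∫ t in Set.Ioc a b, f (θ i) t = F (θ i) b - F (θ i) a := by
      intro a b hab
      have hsplit : F (θ i) b = F (θ i) a + ∫ t in Set.Ioc a b, f (θ i) t := by
        rw [hf_cdf (θ i) b, hf_cdf (θ i) a,
          ← setIntegral_union (Set.Iic_disjoint_Ioc le_rfl) measurableSet_Ioc
            (hintθ i a) ((hintθ i b).mono_set Set.Ioc_subset_Iic_self),
          Set.Iic_union_Ioc_eq_Iic hab]
      linarith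
    have hFmono' : F (θ i) (-c₂) ≤ F (θ i) c₂ := hFmono (θ i) (by linarith)
    have hmarg : (Pr {ω | Real.sign (θ i) * T i ω < -c₂}).toReal
        ≤ α * (Pr {ω | Real.sign (θ i) * T i ω < c₂}).toReal := by
      rcases (hθ i).lt_or_gt with hneg | hpos
      · -- θ i < 0 : upper tail comparison via truncation
        rw [Real.sign_of_neg hneg]
        have e1 : {ω | (-1 : ℝ) * T i ω < -c₂} = {ω | T i ω ≤ c₂}ᶜ := by
          ext ω; simp only [mem_setOf_eq, mem_compl_iff, not_le]
          constructor <;> intro h <;> linarith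
        have e2 : {ω | (-1 : ℝ) * T i ω < c₂} = {ω | T i ω ≤ -c₂}ᶜ := by
          ext ω; simp only [mem_setOf_eq, mem_compl_iff, not_le]
          constructor <;> intro h <;> linarith
        rw [e1, e2, aux_compl Pr (s := {ω | T i ω ≤ c₂}) ((hT i) measurableSet_Iic),
          aux_compl Pr (s := {ω | T i ω ≤ -c₂}) ((hT i) measurableSet_Iic), hcdf i, hcdf i]
        have hstep : ∀ m : ℕ, c₂ ≤ (m : ℝ) →
            (F (θ i) m - F (θ i) c₂) * (1 - α) ≤ α / 2 * (F (θ i) c₂ - F (θ i) (-c₂)) := by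
          intro m hm
          have hI0m : ∫ t in Set.Ioc c₂ (m:ℝ), f 0 t = F 0 m - F 0 c₂ := by
            have hsplit : F 0 m = F 0 c₂ + ∫ t in Set.Ioc c₂ (m:ℝ), f 0 t := by
              rw [hf_cdf 0 (m:ℝ), hf_cdf 0 c₂,
                ← setIntegral_union (Set.Iic_disjoint_Ioc le_rfl) measurableSet_Ioc
                  (hint0 c₂) ((hint0 (m:ℝ)).mono_set Set.Ioc_subset_Iic_self),
                Set.Iic_union_Ioc_eq_Iic hm]
            linarith
          have hprod := aux_mul_setIntegral_le (g := f (θ i)) (h := f 0)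
            (A := Set.Ioc c₂ (m:ℝ)) (B := Set.Ioc (-c₂) c₂)
            measurableSet_Ioc measurableSet_Ioc
            ((hintθ i (m:ℝ)).mono_set Set.Ioc_subset_Iic_self)
            ((hint0 (m:ℝ)).mono_set Set.Ioc_subset_Iic_self)
            ((hintθ i c₂).mono_set Set.Ioc_subset_Iic_self)
            ((hint0 c₂).mono_set Set.Ioc_subset_Iic_self)
            (by intro s hs t ht
                have hts : t < s := lt_of_le_of_lt ht.2 hs.1
                exact le_of_eq_of_le (mul_comm _ _) (hMLR (θ i) 0 hneg t s hts))
          rw [hIocθ c₂ (m:ℝ) hm, hIocθ (-c₂) c₂ (by linarith), hIoc0, hI0m] at hprod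
          have hfac : F 0 (m:ℝ) - F 0 c₂ ≤ α / 2 := by
            rw [hc₂val]; linarith [hF0lt1 (m:ℝ)]
          nlinarith [hFmono (θ i) hm, hFmono']
        have hlim2 : Tendsto (fun m : ℕ => (F (θ i) m - F (θ i) c₂) * (1 - α)) atTop
            (nhds ((1 - F (θ i) c₂) * (1 - α))) := by
          have h1 : Tendsto (fun m : ℕ => F (θ i) m - F (θ i) c₂) atTop
              (nhds (1 - F (θ i) c₂)) :=
            (hlimF i).sub (tendsto_const_nhds (x := F (θ i) c₂))
          exact h1.mul_const (1 - α)
        have hineq : (1 - F (θ i) c₂) * (1 - α) ≤ α / 2 * (F (θ i) c₂ - F (θ i) (-c₂)) := by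
          refine le_of_tendsto hlim2 ?_
          obtain ⟨M, hM⟩ := exists_nat_ge c₂
          filter_upwards [eventually_ge_atTop M] with m hm
          exact hstep m (le_trans hM (by exact_mod_cast hm))
        have h6 : 0 ≤ α * (F (θ i) c₂ - F (θ i) (-c₂)) :=
          mul_nonneg hα0.le (by linarith)
        linarith
      · -- θ i > 0 : lower tail comparison
        rw [Real.sign_of_pos hpos]
        simp only [one_mul]
        rw [hlt i, hlt i]
        have hprod := aux_mul_setIntegral_le (g := f (θ i)) (h := f 0)
          (A := Set.Iic (-c₂)) (B := Set.Ioc (-c₂) c₂)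
          measurableSet_Iic measurableSet_Ioc
          (hintθ i (-c₂)) (hint0 (-c₂))
          ((hintθ i c₂).mono_set Set.Ioc_subset_Iic_self)
          ((hint0 c₂).mono_set Set.Ioc_subset_Iic_self)
          (by intro s hs t ht
              have hst : s < t := lt_of_le_of_lt hs ht.1
              exact le_of_le_of_eq (hMLR 0 (θ i) hpos s t hst) (mul_comm _ _))
        rw [← hf_cdf (θ i) (-c₂), ← hf_cdf 0 (-c₂), hIocθ (-c₂) c₂ (by linarith),
          hIoc0, hc₁val] at hprod
        have h6 : 0 ≤ α * (F (θ i) c₂ - F (θ i) (-c₂)) :=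
          mul_nonneg hα0.le (by linarith)
        linarith
    -- boundary has measure zero
    have hbd : Pr (E i) ≤ Pr (G i ∩ {ω | Real.sign (θ i) * T i ω < -c₂}) := by
      have hnull : Pr ({ω | Real.sign (θ i) * T i ω ≤ -c₂}
          \ {ω | Real.sign (θ i) * T i ω < -c₂}) = 0 := by
        rw [measure_diff
          (show {ω | Real.sign (θ i) * T i ω < -c₂} ⊆ {ω | Real.sign (θ i) * T i ω ≤ -c₂}
            from fun ω h => (le_of_lt (h : Real.sign (θ i) * T i ω < -c₂) :
              Real.sign (θ i) * T i ω ≤ -c₂))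
          (((hSmeas i) measurableSet_Iio).nullMeasurableSet) (measure_ne_top _ _),
          hqeq (-c₂), tsub_self]
      have hEs : E i ⊆ (G i ∩ {ω | Real.sign (θ i) * T i ω < -c₂})
          ∪ ({ω | Real.sign (θ i) * T i ω ≤ -c₂} \ {ω | Real.sign (θ i) * T i ω < -c₂}) := by
        rintro ω ⟨h1, h2⟩
        by_cases h3 : Real.sign (θ i) * T i ω < -c₂
        · exact Or.inl ⟨h1, h3⟩
        · exact Or.inr ⟨h2, h3⟩
      calc Pr (E i) ≤ Pr _ := measure_mono hEs
        _ ≤ Pr (G i ∩ {ω | Real.sign (θ i) * T i ω < -c₂}) + Pr _ := measure_union_le _ _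
        _ = Pr (G i ∩ {ω | Real.sign (θ i) * T i ω < -c₂}) := by rw [hnull, add_zero]
    by_cases hne1 : Pr {ω | Real.sign (θ i) * T i ω < -c₂} = 0
    · have hE0 : Pr (E i) = 0 := by
        refine le_antisymm ?_ zero_le
        calc Pr (E i) ≤ Pr {ω | Real.sign (θ i) * T i ω < -c₂} :=
              le_trans hbd (measure_mono Set.inter_subset_right)
          _ = 0 := hne1
      rw [hE0]
      simp only [ENNReal.toReal_zero]
      positivity
    · have hne2 : Pr {ω | Real.sign (θ i) * T i ω < c₂} ≠ 0 := by
        intro h0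
        refine hne1 (le_antisymm ?_ zero_le)
        refine le_trans (measure_mono ?_) h0.le
        intro ω hω
        simp only [mem_setOf_eq] at *
        linarith
      -- the PRD functional
      set setG : Set (Fin n → ℝ) := {x | ∀ j, j < i → c₂ ≤ x j} with hsetG
      have hsetGmeas : MeasurableSet setG := by
        have : setG = ⋂ j, ⋂ (_ : j < i), {x : Fin n → ℝ | c₂ ≤ x j} := by
          ext x; simp [hsetG]
        rw [this]
        exact MeasurableSet.iInter fun j => MeasurableSet.iInter fun _ =>
          (measurable_pi_apply j) measurableSet_Ici
      set φ : (Fin n → ℝ) → ℝ := setG.indicator (fun _ => (1:ℝ)) with hφ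
      have hφmeas : Measurable φ := Measurable.indicator measurable_const hsetGmeas
      have hφmono : Monotone φ := by
        intro x y hxy
        by_cases hx : x ∈ setG
        · have hy : y ∈ setG := fun j hj => le_trans (hx j hj) (hxy j)
          rw [hφ, Set.indicator_of_mem hx, Set.indicator_of_mem hy]
        · rw [hφ, Set.indicator_of_notMem hx]
          exact Set.indicator_nonneg (fun _ _ => zero_le_one) y
      have hφbd : ∃ C, ∀ x, |φ x| ≤ C := by
        refine ⟨1, fun x => ?_⟩
        rw [hφ]
        by_cases hx : x ∈ setG
        · rw [Set.indicator_of_mem hx]; norm_num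
        · rw [Set.indicator_of_notMem hx]; norm_num
      have happ := (hPRD i φ hφmeas hφmono hφbd (-c₂) c₂ (by linarith)).2 hne1 hne2
      have hind : ∀ A : Set Ω, MeasurableSet A →
          (∫ ω in A, φ (fun j => Real.sign (θ j) * T j ω) ∂Pr) = (Pr (A ∩ G i)).toReal := by
        intro A hA
        have hcomp : (fun ω => φ (fun j => Real.sign (θ j) * T j ω))
            = (G i).indicator (fun _ => (1:ℝ)) := by
          funext ω
          by_cases hω : ω ∈ G i
          · rw [Set.indicator_of_mem hω, hφ,
              Set.indicator_of_mem (show (fun j => Real.sign (θ j) * T j ω) ∈ setG from hω)]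
          · rw [Set.indicator_of_notMem hω, hφ,
              Set.indicator_of_notMem (show (fun j => Real.sign (θ j) * T j ω) ∉ setG from hω)]
        rw [hcomp, setIntegral_indicator (hGmeas i), setIntegral_const]
        simp
        rfl
      rw [hind {ω | Real.sign (θ i) * T i ω < -c₂} ((hSmeas i) measurableSet_Iio),
        hind {ω | Real.sign (θ i) * T i ω < c₂} ((hSmeas i) measurableSet_Iio)] at happ
      set p₁ : ℝ := (Pr {ω | Real.sign (θ i) * T i ω < -c₂}).toReal with hp₁def
      set p₂ : ℝ := (Pr {ω | Real.sign (θ i) * T i ω < c₂}).toReal with hp₂def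
      set I₁ : ℝ := (Pr ({ω | Real.sign (θ i) * T i ω < -c₂} ∩ G i)).toReal with hI₁def
      set I₂ : ℝ := (Pr ({ω | Real.sign (θ i) * T i ω < c₂} ∩ G i)).toReal with hI₂def
      have hp₁pos : 0 < p₁ := ENNReal.toReal_pos hne1 (measure_ne_top _ _)
      have hp₂pos : 0 < p₂ := ENNReal.toReal_pos hne2 (measure_ne_top _ _)
      have hI₂nonneg : 0 ≤ I₂ := ENNReal.toReal_nonneg
      have hstep1 : I₁ ≤ I₂ / p₂ * p₁ := (div_le_iff₀ hp₁pos).1 happ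
      have hstep2 : I₂ / p₂ * p₁ ≤ I₂ / p₂ * (α * p₂) :=
        mul_le_mul_of_nonneg_left hmarg (div_nonneg hI₂nonneg hp₂pos.le)
      have hstep3 : I₂ / p₂ * (α * p₂) = α * I₂ := by
        field_simp
      have hfin : (Pr (E i)).toReal ≤ I₁ := by
        refine ENNReal.toReal_mono (measure_ne_top _ _) ?_
        rw [Set.inter_comm]
        exact hbd
      have hfin2 : α * I₂ = α * (Pr (D i)).toReal := by
        rw [hI₂def, Set.inter_comm]
      linarith
  -- disjointness of the D i
  have hdisj : Pairwise (Function.onFun Disjoint D) := by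
    intro i j hij
    simp only [Function.onFun]
    rcases hij.lt_or_gt with h | h
    · rw [Set.disjoint_left]
      rintro ω ⟨-, h2⟩ ⟨h3, -⟩
      exact absurd (h3 i h) (not_le.2 h2)
    · rw [Set.disjoint_left]
      rintro ω ⟨h2, -⟩ ⟨-, h3⟩
      exact absurd (h2 j h) (not_le.2 h3)
  -- put everything together
  have hEsum : Pr {ω | ∃ i : Fin n,
      (∀ j : Fin n, j ≤ i → 2 * min (F 0 (T j ω)) (1 - F 0 (T j ω)) ≤ α) ∧
      (θ i = 0 ∨ (θ i ≠ 0 ∧ θ i * T i ω < 0))} ≤ ∑ i : Fin n, Pr (E i) := by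
    refine le_trans (measure_mono hsub) (le_trans (measure_iUnion_le E) ?_)
    rw [tsum_fintype]
  have hEfin : (∑ i : Fin n, Pr (E i)) ≠ ⊤ := by
    refine ne_of_lt ?_
    refine ENNReal.sum_lt_top.2 fun i _ => measure_lt_top _ _
  have h1 : (Pr {ω | ∃ i : Fin n,
      (∀ j : Fin n, j ≤ i → 2 * min (F 0 (T j ω)) (1 - F 0 (T j ω)) ≤ α) ∧
      (θ i = 0 ∨ (θ i ≠ 0 ∧ θ i * T i ω < 0))}).toReal
      ≤ ∑ i : Fin n, (Pr (E i)).toReal := by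
    rw [← ENNReal.toReal_sum (fun i _ => measure_ne_top _ _)]
    exact ENNReal.toReal_mono hEfin hEsum
  have hDsum : ∑ i : Fin n, (Pr (D i)).toReal ≤ 1 := by
    rw [← ENNReal.toReal_sum (fun i _ => measure_ne_top _ _)]
    have hD1 : ∑ i : Fin n, Pr (D i) ≤ 1 := by
      have hpd : (↑(Finset.univ : Finset (Fin n)) : Set (Fin n)).PairwiseDisjoint D := by
        intro i _ j _ hij
        exact hdisj hij
      have hbu := measure_biUnion_finset (μ := Pr) hpd (fun i _ => hDmeas i)
      rw [← hbu]
      exact prob_le_one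
    calc (∑ i : Fin n, Pr (D i)).toReal ≤ (1 : ENNReal).toReal :=
          ENNReal.toReal_mono (by simp) hD1
      _ = 1 := by simp
  calc (Pr {ω | ∃ i : Fin n,
      (∀ j : Fin n, j ≤ i → 2 * min (F 0 (T j ω)) (1 - F 0 (T j ω)) ≤ α) ∧
      (θ i = 0 ∨ (θ i ≠ 0 ∧ θ i * T i ω < 0))}).toReal
      ≤ ∑ i : Fin n, (Pr (E i)).toReal := h1
    _ ≤ ∑ i : Fin n, α * (Pr (D i)).toReal := Finset.sum_le_sum fun i _ => hkey i
    _ = α * ∑ i : Fin n, (Pr (D i)).toReal := by rw [Finset.mul_sum]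
    _ ≤ α * 1 := mul_le_mul_of_nonneg_left hDsum hα0.le
    _ = α := mul_one α
end

section
/- Suppose the family {F_θ} satisfies the MLR assumption (Assumption 2) and the signed false-null statistics are positively regression dependent (Assumption 3), with no assumption on the dependence between the true-null statistics and the false-null statistics. Then Procedure 2 (the directional fixed sequence procedure with constant critical value α) satisfies mdFWER ≤ 2α; consequently, the directional fixed sequence procedure with common critical constant α/2 at every step satisfies mdFWER ≤ α. -/
open MeasureTheory ProbabilityTheory Filter

lemma setIntegral_prod_mono_aux {g h : ℝ → ℝ} {P Q : Set ℝ}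
    (hP : MeasurableSet P) (hQ : MeasurableSet Q)
    (hgP : IntegrableOn g P volume) (hhP : IntegrableOn h P volume)
    (hgQ : IntegrableOn g Q volume) (hhQ : IntegrableOn h Q volume)
    (hpt : ∀ p ∈ P, ∀ q ∈ Q, g p * h q ≤ h p * g q) :
    (∫ p in P, g p) * (∫ q in Q, h q) ≤ (∫ p in P, h p) * (∫ q in Q, g q) := by
  have key : ∫ p in P, ((∫ q in Q, h q) * g p) ≤ ∫ p in P, ((∫ q in Q, g q) * h p) := by
    refine setIntegral_mono_on (hgP.const_mul _) (hhP.const_mul _) hP ?_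
    intro p hp
    have inner : ∫ q in Q, (h q * g p) ≤ ∫ q in Q, (g q * h p) := by
      refine setIntegral_mono_on (hhQ.mul_const _) (hgQ.mul_const _) hQ ?_
      intro q hq
      linarith [hpt p hp q hq]
    calc (∫ q in Q, h q) * g p = ∫ q in Q, (h q * g p) := (integral_mul_const _ _).symm
      _ ≤ ∫ q in Q, (g q * h p) := inner
      _ = (∫ q in Q, g q) * h p := integral_mul_const _ _
  calc (∫ p in P, g p) * (∫ q in Q, h q) = ∫ p in P, ((∫ q in Q, h q) * g p) := by
        rw [integral_const_mul]; ring
    _ ≤ ∫ p in P, ((∫ q in Q, g q) * h p) := key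
    _ = (∫ p in P, h p) * (∫ q in Q, g q) := by rw [integral_const_mul]; ring

set_option maxHeartbeats 2000000 in
theorem aux_mdFWER
    {Ω : Type*} [MeasurableSpace Ω] (Pr : Measure Ω) [IsProbabilityMeasure Pr]
    (F : ℝ → ℝ → ℝ)
    (hFcont : ∀ θ', Continuous (F θ'))
    (hFmono : ∀ θ', Monotone (F θ'))
    (hF0strict : StrictMono (F 0))
    (hFsym : ∀ x : ℝ, F 0 (-x) = 1 - F 0 x)
    (f : ℝ → ℝ → ℝ)
    (hf_nonneg : ∀ θ' x, 0 ≤ f θ' x)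
    (hf_meas : ∀ θ', Measurable (f θ'))
    (hf_cdf : ∀ θ' x, F θ' x = ∫ t in Set.Iic x, f θ' t)
    (hMLR : ∀ θ' θ'' : ℝ, θ' < θ'' → ∀ x₁ x₂ : ℝ, x₁ < x₂ →
      f θ'' x₁ * f θ' x₂ ≤ f θ'' x₂ * f θ' x₁)
    (n : ℕ) (θ : Fin n → ℝ)
    (T : Fin n → Ω → ℝ) (hT : ∀ i, Measurable (T i))
    (hcdf : ∀ i x, (Pr {ω | T i ω ≤ x}).toReal = F (θ i) x)
    (hPRD : ∀ k : {i : Fin n // θ i ≠ 0},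
      ∀ φ : ({i : Fin n // θ i ≠ 0} → ℝ) → ℝ,
      Measurable φ → Monotone φ → (∃ C, ∀ x, |φ x| ≤ C) →
      ∀ u u' : ℝ, u ≤ u' →
        (Pr {ω | u ≤ Real.sign (θ k.1) * T k.1 ω} ≠ 0 →
         Pr {ω | u' ≤ Real.sign (θ k.1) * T k.1 ω} ≠ 0 →
          (∫ ω in {ω | u ≤ Real.sign (θ k.1) * T k.1 ω},
              φ (fun i => Real.sign (θ i.1) * T i.1 ω) ∂Pr)
              / (Pr {ω | u ≤ Real.sign (θ k.1) * T k.1 ω}).toReal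
            ≤ (∫ ω in {ω | u' ≤ Real.sign (θ k.1) * T k.1 ω},
              φ (fun i => Real.sign (θ i.1) * T i.1 ω) ∂Pr)
              / (Pr {ω | u' ≤ Real.sign (θ k.1) * T k.1 ω}).toReal) ∧
        (Pr {ω | Real.sign (θ k.1) * T k.1 ω < u} ≠ 0 →
         Pr {ω | Real.sign (θ k.1) * T k.1 ω < u'} ≠ 0 →
          (∫ ω in {ω | Real.sign (θ k.1) * T k.1 ω < u},
              φ (fun i => Real.sign (θ i.1) * T i.1 ω) ∂Pr)
              / (Pr {ω | Real.sign (θ k.1) * T k.1 ω < u}).toReal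
            ≤ (∫ ω in {ω | Real.sign (θ k.1) * T k.1 ω < u'},
              φ (fun i => Real.sign (θ i.1) * T i.1 ω) ∂Pr)
              / (Pr {ω | Real.sign (θ k.1) * T k.1 ω < u'}).toReal))
    (a : ℝ) (ha0 : 0 < a) (ha1 : a < 1) :
    (Pr {ω | ∃ i : Fin n,
        (∀ j : Fin n, j ≤ i →
          2 * min (F 0 (T j ω)) (1 - F 0 (T j ω)) ≤ a) ∧
        (θ i = 0 ∨ (θ i ≠ 0 ∧ θ i * T i ω < 0))}).toReal
      ≤ a + a / (2 * (1 - a)) := by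
  classical
  have hPrFin : ∀ s : Set Ω, Pr s ≠ ⊤ := fun s => measure_ne_top Pr s
  have hmle : ∀ (i : Fin n) (x : ℝ), MeasurableSet {ω | T i ω ≤ x} :=
    fun i x => measurableSet_le (hT i) measurable_const
  have hmlt : ∀ (i : Fin n) (x : ℝ), MeasurableSet {ω | T i ω < x} :=
    fun i x => measurableSet_lt (hT i) measurable_const
  have hmge : ∀ (i : Fin n) (x : ℝ), MeasurableSet {ω | x ≤ T i ω} :=
    fun i x => measurableSet_le measurable_const (hT i)
  have hmgt : ∀ (i : Fin n) (x : ℝ), MeasurableSet {ω | x < T i ω} :=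
    fun i x => measurableSet_lt measurable_const (hT i)
  -- basic facts about F
  have hFnn : ∀ θ' x, 0 ≤ F θ' x := fun θ' x => by
    rw [hf_cdf]; exact setIntegral_nonneg measurableSet_Iic (fun t _ => hf_nonneg θ' t)
  have hF00 : F 0 0 = 1/2 := by have h := hFsym 0; rw [neg_zero] at h; linarith
  have hF0le1 : ∀ x, F 0 x ≤ 1 := fun x => by
    have h := hFsym x; have h2 := hFnn 0 (-x); linarith
  -- integrability of the densities on lower rays
  have hIntOn : ∀ θ' : ℝ, (∃ y, 0 < F θ' y) → ∀ x, IntegrableOn (f θ') (Set.Iic x) volume := by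
    rintro θ' ⟨y, hy⟩ x
    have key : ∀ z, 0 < F θ' z → IntegrableOn (f θ') (Set.Iic z) volume := by
      intro z hz
      by_contra hcon
      rw [hf_cdf, integral_undef hcon] at hz
      exact lt_irrefl 0 hz
    have h1 : 0 < F θ' (max x y) := lt_of_lt_of_le hy (hFmono θ' (le_max_right x y))
    exact (key _ h1).mono_set (Set.Iic_subset_Iic.mpr (le_max_left x y))
  have hInt0 : ∀ x, IntegrableOn (f 0) (Set.Iic x) volume :=
    hIntOn 0 ⟨0, by rw [hF00]; norm_num⟩
  have hExPos : ∀ i : Fin n, ∃ y, 0 < F (θ i) y := by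
    intro i
    by_contra hcon
    push_neg at hcon
    have hnull : ∀ m : ℕ, Pr {ω | T i ω ≤ (m : ℝ)} = 0 := by
      intro m
      have h1 := hcdf i (m : ℝ)
      have h3 : (Pr {ω | T i ω ≤ (m : ℝ)}).toReal = 0 :=
        le_antisymm (h1 ▸ hcon (m : ℝ)) ENNReal.toReal_nonneg
      rw [ENNReal.toReal_eq_zero_iff] at h3
      exact h3.resolve_right (hPrFin _)
    have huniv : (⋃ m : ℕ, {ω | T i ω ≤ (m : ℝ)}) = Set.univ := by
      ext ω
      simp only [Set.mem_iUnion, Set.mem_setOf_eq, Set.mem_univ, iff_true]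
      exact exists_nat_ge (T i ω)
    have hz : Pr (⋃ m : ℕ, {ω | T i ω ≤ (m : ℝ)}) = 0 := measure_iUnion_null hnull
    rw [huniv, measure_univ] at hz
    exact one_ne_zero hz
  have hIntθ : ∀ (i : Fin n) (x : ℝ), IntegrableOn (f (θ i)) (Set.Iic x) volume :=
    fun i => hIntOn _ (hExPos i)
  -- Pr (T < x) = F x
  have hlt : ∀ (i : Fin n) (x : ℝ), (Pr {ω | T i ω < x}).toReal = F (θ i) x := by
    intro i x
    have hmono : Monotone (fun m : ℕ => {ω | T i ω ≤ x - 1/(m+1)}) := by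
      intro m₁ m₂ hm ω hω
      simp only [Set.mem_setOf_eq] at *
      have hc : ((m₁:ℝ)+1) ≤ ((m₂:ℝ)+1) := by exact_mod_cast Nat.succ_le_succ hm
      have : (1:ℝ)/(m₂+1) ≤ 1/(m₁+1) := one_div_le_one_div_of_le (by positivity) hc
      linarith
    have hunion : (⋃ m : ℕ, {ω | T i ω ≤ x - 1/(m+1)}) = {ω | T i ω < x} := by
      ext ω
      simp only [Set.mem_iUnion, Set.mem_setOf_eq]
      constructor
      · rintro ⟨m, hm⟩
        have : (0:ℝ) < 1/((m:ℝ)+1) := by positivity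
        linarith
      · intro hω
        obtain ⟨m, hm⟩ := exists_nat_one_div_lt (sub_pos.mpr hω)
        exact ⟨m, by linarith⟩
    have h1 : Tendsto (fun m : ℕ => Pr {ω | T i ω ≤ x - 1/(m+1)}) atTop
        (nhds (Pr {ω | T i ω < x})) := by
      have h := tendsto_measure_iUnion_atTop (μ := Pr) hmono
      rwa [hunion] at h
    have h2 : Tendsto (fun m : ℕ => (Pr {ω | T i ω ≤ x - 1/(m+1)}).toReal) atTop
        (nhds (Pr {ω | T i ω < x}).toReal) :=
      (ENNReal.tendsto_toReal (hPrFin _)).comp h1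
    have h4 : Tendsto (fun m : ℕ => F (θ i) (x - 1/(m+1))) atTop (nhds (F (θ i) x)) := by
      have hx : Tendsto (fun m : ℕ => x - 1/((m:ℝ)+1)) atTop (nhds x) := by
        have h5 := (tendsto_one_div_add_atTop_nhds_zero_nat).const_sub x
        simpa using h5
      exact ((hFcont (θ i)).tendsto x).comp hx
    refine tendsto_nhds_unique ?_ h4
    simpa only [hcdf i] using h2
  -- complements
  have hcompl_lt : ∀ (i : Fin n) (x : ℝ), (Pr {ω | x ≤ T i ω}).toReal = 1 - F (θ i) x := by
    intro i x
    have he : {ω | x ≤ T i ω} = {ω | T i ω < x}ᶜ := by ext ω; simp [not_lt]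
    rw [he, prob_compl_eq_one_sub (hmlt i x),
      ENNReal.toReal_sub_of_le prob_le_one ENNReal.one_ne_top, ENNReal.toReal_one, hlt i x]
  have hcompl_le : ∀ (i : Fin n) (x : ℝ), (Pr {ω | x < T i ω}).toReal = 1 - F (θ i) x := by
    intro i x
    have he : {ω | x < T i ω} = {ω | T i ω ≤ x}ᶜ := by ext ω; simp [not_le]
    rw [he, prob_compl_eq_one_sub (hmle i x),
      ENNReal.toReal_sub_of_le prob_le_one ENNReal.one_ne_top, ENNReal.toReal_one, hcdf i x]
  -- no atoms
  have hatom : ∀ (i : Fin n) (x : ℝ), Pr {ω | T i ω = x} = 0 := by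
    intro i x
    have hsplit : {ω | T i ω ≤ x} = {ω | T i ω < x} ∪ {ω | T i ω = x} := by
      ext ω
      simp only [Set.mem_setOf_eq, Set.mem_union]
      constructor
      · intro h; exact lt_or_eq_of_le h
      · rintro (h | h); exacts [le_of_lt h, le_of_eq h]
    have hdisj : Disjoint {ω | T i ω < x} {ω | T i ω = x} := by
      rw [Set.disjoint_left]
      intro ω h1 h2
      simp only [Set.mem_setOf_eq] at h1 h2
      rw [h2] at h1; exact lt_irrefl _ h1
    have hm : MeasurableSet {ω | T i ω = x} := (hT i) (measurableSet_singleton x)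
    have hu := measure_union (μ := Pr) hdisj hm
    rw [← hsplit] at hu
    have htr : (Pr {ω | T i ω ≤ x}).toReal
        = (Pr {ω | T i ω < x}).toReal + (Pr {ω | T i ω = x}).toReal := by
      rw [hu, ENNReal.toReal_add (hPrFin _) (hPrFin _)]
    rw [hcdf i x, hlt i x] at htr
    have h0 : (Pr {ω | T i ω = x}).toReal = 0 := by linarith
    rw [ENNReal.toReal_eq_zero_iff] at h0
    exact h0.resolve_right (hPrFin _)
  -- F 0 tends to 0 at -infinity (along -1 - m)
  have hlim0 : Tendsto (fun m : ℕ => F 0 (-1 - m)) atTop (nhds 0) := by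
    have hbound : Integrable ((Set.Iic (-1:ℝ)).indicator (f 0)) volume :=
      (hInt0 (-1)).integrable_indicator measurableSet_Iic
    have hgm : ∀ m : ℕ, AEStronglyMeasurable ((Set.Iic (-1 - (m:ℝ))).indicator (f 0)) volume :=
      fun m => ((hf_meas 0).indicator measurableSet_Iic).aestronglyMeasurable
    have h_b : ∀ m : ℕ, ∀ᵐ x : ℝ ∂volume,
        ‖(Set.Iic (-1 - (m:ℝ))).indicator (f 0) x‖ ≤ (Set.Iic (-1:ℝ)).indicator (f 0) x := by
      intro m
      refine Filter.Eventually.of_forall (fun x => ?_)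
      by_cases h1 : x ≤ -1 - (m:ℝ)
      · have h2 : x ≤ (-1:ℝ) := by
          have : (0:ℝ) ≤ m := Nat.cast_nonneg m
          linarith
        rw [Set.indicator_of_mem (Set.mem_Iic.mpr h1), Set.indicator_of_mem (Set.mem_Iic.mpr h2),
          Real.norm_eq_abs, abs_of_nonneg (hf_nonneg 0 x)]
      · rw [Set.indicator_of_notMem (fun hx => h1 (Set.mem_Iic.mp hx))]
        simp only [norm_zero]
        exact Set.indicator_nonneg (fun y _ => hf_nonneg 0 y) x
    have h_lim : ∀ᵐ x : ℝ ∂volume, Tendsto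
        (fun m : ℕ => (Set.Iic (-1 - (m:ℝ))).indicator (f 0) x) atTop (nhds 0) := by
      refine Filter.Eventually.of_forall (fun x => ?_)
      obtain ⟨N, hN⟩ := exists_nat_gt (-1 - x)
      refine tendsto_atTop_of_eventually_const (i₀ := N) (fun m hm => ?_)
      have : ¬ x ≤ -1 - (m:ℝ) := by
        have : (N:ℝ) ≤ m := Nat.cast_le.mpr hm
        push_neg; linarith
      exact Set.indicator_of_notMem (fun hx => this (Set.mem_Iic.mp hx)) _
    have hdct := tendsto_integral_of_dominated_convergence (μ := volume)
      (F := fun m : ℕ => (Set.Iic (-1 - (m:ℝ))).indicator (f 0))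
      (f := fun _ => (0:ℝ)) _ hgm hbound h_b h_lim
    have heq : ∀ m : ℕ, (∫ x, (Set.Iic (-1 - (m:ℝ))).indicator (f 0) x ∂volume) = F 0 (-1 - m) := by
      intro m
      rw [integral_indicator measurableSet_Iic, ← hf_cdf]
    simp only [integral_zero] at hdct
    refine hdct.congr (fun m => heq m)
  -- construct the critical constants
  obtain ⟨c₁, hc₁, hc₁neg⟩ : ∃ c, F 0 c = a/2 ∧ c < 0 := by
    have hev : ∀ᶠ m : ℕ in atTop, F 0 (-1 - m) < a/2 :=
      hlim0.eventually_lt_const (by linarith)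
    obtain ⟨N, hN⟩ := hev.exists
    have hx0 : (-1 - (N:ℝ)) ≤ 0 := by
      have : (0:ℝ) ≤ N := Nat.cast_nonneg N
      linarith
    have hIVT := intermediate_value_Icc hx0 ((hFcont 0).continuousOn)
    have hmem : a/2 ∈ Set.Icc (F 0 (-1 - (N:ℝ))) (F 0 0) := by
      constructor
      · exact le_of_lt hN
      · rw [hF00]; linarith
    obtain ⟨c, _, hc⟩ := hIVT hmem
    refine ⟨c, hc, ?_⟩
    have hlt0 : F 0 c < F 0 0 := by rw [hc, hF00]; linarith
    exact hF0strict.lt_iff_lt.mp hlt0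
  set c₂ : ℝ := -c₁ with hc₂def
  have hc₂ : F 0 c₂ = 1 - a/2 := by rw [hc₂def, hFsym c₁, hc₁]
  have hc₂pos : 0 < c₂ := by rw [hc₂def]; linarith
  have hc₁₂ : c₁ < c₂ := by linarith
  -- rejection at level a means T ≤ c₁ or T ≥ c₂
  have hrej : ∀ (j : Fin n) (ω : Ω),
      2 * min (F 0 (T j ω)) (1 - F 0 (T j ω)) ≤ a → (T j ω ≤ c₁ ∨ c₂ ≤ T j ω) := by
    intro j ω h
    have hmin : min (F 0 (T j ω)) (1 - F 0 (T j ω)) ≤ a/2 := by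
      rcases min_le_iff.mp (le_refl (min (F 0 (T j ω)) (1 - F 0 (T j ω)))) with h1 | h1 <;> linarith
    rcases min_le_iff.mp hmin with h1 | h1
    · left
      exact hF0strict.le_iff_le.mp (by rw [hc₁]; exact h1)
    · right
      exact hF0strict.le_iff_le.mp (by rw [hc₂]; linarith)
  -- F (θ i) tends to 1 at +infinity
  have hlim1 : ∀ (i : Fin n) (x₀ : ℝ),
      Tendsto (fun m : ℕ => F (θ i) (x₀ + m)) atTop (nhds 1) := by
    intro i x₀
    have hmono : Monotone (fun m : ℕ => {ω | T i ω ≤ x₀ + m}) := by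
      intro m₁ m₂ hm ω hω
      simp only [Set.mem_setOf_eq] at *
      have : (m₁:ℝ) ≤ m₂ := Nat.cast_le.mpr hm
      linarith
    have hunion : (⋃ m : ℕ, {ω | T i ω ≤ x₀ + m}) = Set.univ := by
      ext ω
      simp only [Set.mem_iUnion, Set.mem_setOf_eq, Set.mem_univ, iff_true]
      obtain ⟨m, hm⟩ := exists_nat_ge (T i ω - x₀)
      exact ⟨m, by linarith⟩
    have h1 : Tendsto (fun m : ℕ => Pr {ω | T i ω ≤ x₀ + m}) atTop (nhds 1) := by
      have h := tendsto_measure_iUnion_atTop (μ := Pr) hmono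
      rwa [hunion, measure_univ] at h
    have h2 : Tendsto (fun m : ℕ => (Pr {ω | T i ω ≤ x₀ + m}).toReal) atTop (nhds 1) := by
      have h3 := (ENNReal.tendsto_toReal (ENNReal.one_ne_top)).comp h1
      simpa [Function.comp_def] using h3
    refine h2.congr (fun m => hcdf i (x₀ + m))
  -- sign helpers
  have hsucc : ∀ (j : Fin n) (ω : Ω), θ j ≠ 0 → 0 ≤ θ j * T j ω →
      (T j ω ≤ c₁ ∨ c₂ ≤ T j ω) → c₂ ≤ Real.sign (θ j) * T j ω := by
    intro j ω hne hnn hrj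
    rcases hne.lt_or_gt with hn | hp
    · rw [Real.sign_of_neg hn]
      have hTle : T j ω ≤ 0 := by nlinarith
      rcases hrj with h | h
      · rw [hc₂def]; linarith
      · linarith
    · rw [Real.sign_of_pos hp]
      have hTge : 0 ≤ T j ω := by nlinarith
      rcases hrj with h | h
      · linarith
      · linarith
  have hwrong : ∀ (i : Fin n) (ω : Ω), θ i ≠ 0 → θ i * T i ω < 0 →
      (T i ω ≤ c₁ ∨ c₂ ≤ T i ω) → Real.sign (θ i) * T i ω ≤ c₁ := by
    intro i ω hne hlt0 hrj
    rcases hne.lt_or_gt with hn | hp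
    · rw [Real.sign_of_neg hn]
      have hTpos : 0 < T i ω := by nlinarith
      rcases hrj with h | h
      · linarith
      · rw [hc₂def] at h; linarith
    · rw [Real.sign_of_pos hp]
      have hTneg : T i ω < 0 := by nlinarith
      rcases hrj with h | h
      · linarith
      · linarith
  -- no atoms for signed statistics
  have hatomS : ∀ (l : Fin n) (x : ℝ), θ l ≠ 0 → Pr {ω | Real.sign (θ l) * T l ω = x} = 0 := by
    intro l x hne
    rcases hne.lt_or_gt with hn | hp
    · have he : {ω | Real.sign (θ l) * T l ω = x} = {ω | T l ω = -x} := by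
        ext ω
        simp only [Set.mem_setOf_eq, Real.sign_of_neg hn]
        constructor <;> intro h <;> linarith
      rw [he]; exact hatom l (-x)
    · have he : {ω | Real.sign (θ l) * T l ω = x} = {ω | T l ω = x} := by
        ext ω
        simp only [Set.mem_setOf_eq, Real.sign_of_pos hp, one_mul]
      rw [he]; exact hatom l x
  -- split of measure at the middle interval (generic)
  have hsplitm : ∀ (l : Fin n) (G : Set Ω), MeasurableSet G →
      (Pr (G ∩ {ω | Real.sign (θ l) * T l ω < c₂})).toReal
        = (Pr (G ∩ {ω | Real.sign (θ l) * T l ω < c₁})).toReal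
          + (Pr (G ∩ {ω | c₁ ≤ Real.sign (θ l) * T l ω ∧ Real.sign (θ l) * T l ω < c₂})).toReal := by
    intro l G hG
    have he : G ∩ {ω | Real.sign (θ l) * T l ω < c₂}
        = (G ∩ {ω | Real.sign (θ l) * T l ω < c₁})
          ∪ (G ∩ {ω | c₁ ≤ Real.sign (θ l) * T l ω ∧ Real.sign (θ l) * T l ω < c₂}) := by
      ext ω
      simp only [Set.mem_inter_iff, Set.mem_union, Set.mem_setOf_eq]
      constructor
      · rintro ⟨hg, hlt2⟩
        rcases lt_or_ge (Real.sign (θ l) * T l ω) c₁ with h | h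
        · exact Or.inl ⟨hg, h⟩
        · exact Or.inr ⟨hg, h, hlt2⟩
      · rintro (⟨hg, h⟩ | ⟨hg, h1, h2⟩)
        · exact ⟨hg, lt_trans h hc₁₂⟩
        · exact ⟨hg, h2⟩
    have hdisj : Disjoint (G ∩ {ω | Real.sign (θ l) * T l ω < c₁})
        (G ∩ {ω | c₁ ≤ Real.sign (θ l) * T l ω ∧ Real.sign (θ l) * T l ω < c₂}) := by
      rw [Set.disjoint_left]
      rintro ω ⟨_, h1⟩ ⟨_, h2, _⟩
      exact absurd h1 (not_lt.mpr h2)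
    have hSm : Measurable (fun ω => Real.sign (θ l) * T l ω) := (hT l).const_mul _
    have hm2 : MeasurableSet (G ∩ {ω | c₁ ≤ Real.sign (θ l) * T l ω ∧ Real.sign (θ l) * T l ω < c₂}) := by
      refine hG.inter ?_
      exact (measurableSet_le measurable_const hSm).inter (measurableSet_lt hSm measurable_const)
    rw [he, measure_union hdisj hm2, ENNReal.toReal_add (hPrFin _) (hPrFin _)]
  -- integral over Ioc
  have hIoc : ∀ (θ'' : ℝ), (∀ x, IntegrableOn (f θ'') (Set.Iic x) volume) → ∀ u v : ℝ, u ≤ v →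
      (∫ t in Set.Ioc u v, f θ'' t) = F θ'' v - F θ'' u := by
    intro θ'' hi u v huv
    have hdisj : Disjoint (Set.Iic u) (Set.Ioc u v) := by
      rw [Set.disjoint_left]; intro x hx hx2; exact absurd hx2.1 (not_lt.mpr hx)
    have hu := setIntegral_union (f := f θ'') (μ := volume) hdisj measurableSet_Ioc
      (hi u) ((hi v).mono_set Set.Ioc_subset_Iic_self)
    rw [Set.Iic_union_Ioc_eq_Iic huv] at hu
    rw [← hf_cdf, ← hf_cdf] at hu
    linarith
  have hFm0c1 : F 0 (-c₁) = 1 - a/2 := by rw [hFsym, hc₁]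
  have hFm0c2 : F 0 (-c₂) = a/2 := by rw [hc₂def, neg_neg, hc₁]
  -- the key marginal MLR inequality
  have hL1 : ∀ l : Fin n, θ l ≠ 0 →
      (Pr {ω | Real.sign (θ l) * T l ω < c₁}).toReal * (1 - a)
        ≤ a/2 * (Pr {ω | c₁ ≤ Real.sign (θ l) * T l ω ∧ Real.sign (θ l) * T l ω < c₂}).toReal := by
    intro l hne
    have hVWM := hsplitm l Set.univ MeasurableSet.univ
    simp only [Set.univ_inter] at hVWM
    rcases hne.lt_or_gt with hn | hp
    · -- θ l < 0
      have eW : {ω | Real.sign (θ l) * T l ω < c₁} = {ω | -c₁ < T l ω} := by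
        ext ω; simp only [Set.mem_setOf_eq, Real.sign_of_neg hn]
        constructor <;> intro h <;> linarith
      have eV : {ω | Real.sign (θ l) * T l ω < c₂} = {ω | -c₂ < T l ω} := by
        ext ω; simp only [Set.mem_setOf_eq, Real.sign_of_neg hn]
        constructor <;> intro h <;> linarith
      rw [eW, eV] at hVWM
      rw [eW]
      rw [hcompl_le l (-c₁), hcompl_le l (-c₂)] at hVWM
      rw [hcompl_le l (-c₁)]
      -- hVWM : 1 - F θl (-c₂) = (1 - F θl (-c₁)) + mid
      have hmc : -c₂ ≤ -c₁ := by linarith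
      have hprod : ∀ m : ℕ,
          (F (θ l) (-c₁ + m) - F (θ l) (-c₁)) * (1 - a)
            ≤ a/2 * (F (θ l) (-c₁) - F (θ l) (-c₂)) := by
        intro m
        have hm0 : (-c₁ : ℝ) ≤ -c₁ + m := by
          have : (0:ℝ) ≤ m := Nat.cast_nonneg m
          linarith
        have hpr := setIntegral_prod_mono_aux (g := f (θ l)) (h := f 0)
          (P := Set.Ioc (-c₁) (-c₁ + m)) (Q := Set.Ioc (-c₂) (-c₁))
          measurableSet_Ioc measurableSet_Ioc
          ((hIntθ l _).mono_set Set.Ioc_subset_Iic_self)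
          ((hInt0 _).mono_set Set.Ioc_subset_Iic_self)
          ((hIntθ l _).mono_set Set.Ioc_subset_Iic_self)
          ((hInt0 _).mono_set Set.Ioc_subset_Iic_self)
          (by
            intro p hp q hq
            have hqp : q < p := lt_of_le_of_lt hq.2 hp.1
            have := hMLR (θ l) 0 hn q p hqp
            linarith)
        rw [hIoc (θ l) (hIntθ l) _ _ hm0, hIoc 0 hInt0 _ _ hm0,
          hIoc (θ l) (hIntθ l) _ _ hmc, hIoc 0 hInt0 _ _ hmc,
          hFm0c1, hFm0c2] at hpr
        -- hpr : (Fθ(-c₁+m) - Fθ(-c₁)) * ((1-a/2) - a/2) ≤ (F0(-c₁+m) - (1-a/2)) * midθ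
        have hb1 : F 0 (-c₁ + m) ≤ 1 := hF0le1 _
        have hb2 : 0 ≤ F (θ l) (-c₁) - F (θ l) (-c₂) := by
          have := hFmono (θ l) hmc; linarith
        nlinarith
      have htend : Tendsto (fun m : ℕ => (F (θ l) (-c₁ + m) - F (θ l) (-c₁)) * (1 - a))
          atTop (nhds ((1 - F (θ l) (-c₁)) * (1 - a))) :=
        ((hlim1 l (-c₁)).sub_const _).mul_const _
      have hfin : (1 - F (θ l) (-c₁)) * (1 - a) ≤ a/2 * (F (θ l) (-c₁) - F (θ l) (-c₂)) :=
        le_of_tendsto htend (Filter.Eventually.of_forall hprod)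
      have hmid : (Pr {ω | c₁ ≤ Real.sign (θ l) * T l ω ∧ Real.sign (θ l) * T l ω < c₂}).toReal
          = F (θ l) (-c₁) - F (θ l) (-c₂) := by linarith
      rw [hmid]
      linarith
    · -- θ l > 0
      have eW : {ω | Real.sign (θ l) * T l ω < c₁} = {ω | T l ω < c₁} := by
        ext ω; simp only [Set.mem_setOf_eq, Real.sign_of_pos hp, one_mul]
      have eV : {ω | Real.sign (θ l) * T l ω < c₂} = {ω | T l ω < c₂} := by
        ext ω; simp only [Set.mem_setOf_eq, Real.sign_of_pos hp, one_mul]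
      rw [eW, eV] at hVWM
      rw [eW]
      rw [hlt l c₁, hlt l c₂] at hVWM
      rw [hlt l c₁]
      have hpr := setIntegral_prod_mono_aux (g := f (θ l)) (h := f 0)
        (P := Set.Iic c₁) (Q := Set.Ioc c₁ c₂)
        measurableSet_Iic measurableSet_Ioc
        (hIntθ l _) (hInt0 _)
        ((hIntθ l _).mono_set Set.Ioc_subset_Iic_self)
        ((hInt0 _).mono_set Set.Ioc_subset_Iic_self)
        (by
          intro p hp' q hq'
          have hpq : p < q := lt_of_le_of_lt hp' hq'.1
          have := hMLR 0 (θ l) hp p q hpq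
          linarith)
      rw [hIoc (θ l) (hIntθ l) _ _ hc₁₂.le, hIoc 0 hInt0 _ _ hc₁₂.le,
        ← hf_cdf, ← hf_cdf, hc₁, hc₂] at hpr
      have hmid : (Pr {ω | c₁ ≤ Real.sign (θ l) * T l ω ∧ Real.sign (θ l) * T l ω < c₂}).toReal
          = F (θ l) c₂ - F (θ l) c₁ := by linarith
      rw [hmid]
      linarith
  -- rho
  set ρ : ℝ := a / (2 * (1 - a)) with hρdef
  have hρnn : 0 ≤ ρ := div_nonneg ha0.le (by linarith)
  have hSm : ∀ l : Fin n, Measurable (fun ω => Real.sign (θ l) * T l ω) :=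
    fun l => (hT l).const_mul _
  have hmG : ∀ l : Fin n, MeasurableSet {ω | ∀ j, j < l → c₂ ≤ Real.sign (θ j) * T j ω} := by
    intro l
    have he : {ω | ∀ j, j < l → c₂ ≤ Real.sign (θ j) * T j ω}
        = ⋂ (j : Fin n), ⋂ (_ : j < l), {ω | c₂ ≤ Real.sign (θ j) * T j ω} := by
      ext ω; simp
    rw [he]
    exact MeasurableSet.iInter fun j => MeasurableSet.iInter fun _ =>
      measurableSet_le measurable_const (hSm j)
  -- the key per-index PRD bound
  have hDl : ∀ l : Fin n,
      (Pr {ω | ((∀ j, j < l → θ j ≠ 0) ∧ θ l ≠ 0) ∧ (∀ j, j < l → c₂ ≤ Real.sign (θ j) * T j ω) ∧ Real.sign (θ l) * T l ω ≤ c₁}).toReal ≤ ρ * (Pr {ω | ((∀ j, j < l → θ j ≠ 0) ∧ θ l ≠ 0) ∧ (∀ j, j < l → c₂ ≤ Real.sign (θ j) * T j ω) ∧ (c₁ ≤ Real.sign (θ l) * T l ω ∧ Real.sign (θ l) * T l ω < c₂)}).toReal := by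
    intro l
    by_cases hb : (∀ j, j < l → θ j ≠ 0) ∧ θ l ≠ 0
    swap
    · have hD0 : {ω | ((∀ j, j < l → θ j ≠ 0) ∧ θ l ≠ 0) ∧ (∀ j, j < l → c₂ ≤ Real.sign (θ j) * T j ω) ∧ Real.sign (θ l) * T l ω ≤ c₁} = (∅ : Set Ω) :=
        Set.eq_empty_iff_forall_notMem.mpr (fun ω h => hb h.1)
      rw [hD0]
      simp only [measure_empty, ENNReal.toReal_zero]
      exact mul_nonneg hρnn ENNReal.toReal_nonneg
    obtain ⟨hprev, hl⟩ := hb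
    have hDeq : {ω | ((∀ j, j < l → θ j ≠ 0) ∧ θ l ≠ 0) ∧ (∀ j, j < l → c₂ ≤ Real.sign (θ j) * T j ω) ∧ Real.sign (θ l) * T l ω ≤ c₁}
        = {ω | ∀ j, j < l → c₂ ≤ Real.sign (θ j) * T j ω} ∩ {ω | Real.sign (θ l) * T l ω ≤ c₁} := by
      ext ω
      simp only [Set.mem_setOf_eq, Set.mem_inter_iff]
      exact ⟨fun h => ⟨h.2.1, h.2.2⟩, fun h => ⟨⟨hprev, hl⟩, h.1, h.2⟩⟩
    have hAeq : {ω | ((∀ j, j < l → θ j ≠ 0) ∧ θ l ≠ 0) ∧ (∀ j, j < l → c₂ ≤ Real.sign (θ j) * T j ω) ∧ (c₁ ≤ Real.sign (θ l) * T l ω ∧ Real.sign (θ l) * T l ω < c₂)} = {ω | ∀ j, j < l → c₂ ≤ Real.sign (θ j) * T j ω} ∩ {ω | c₁ ≤ Real.sign (θ l) * T l ω ∧ Real.sign (θ l) * T l ω < c₂} := by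
      ext ω
      simp only [Set.mem_setOf_eq, Set.mem_inter_iff]
      exact ⟨fun h => ⟨h.2.1, h.2.2⟩, fun h => ⟨⟨hprev, hl⟩, h.1, h.2⟩⟩
    -- the monotone bounded indicator functional
    have hφmeas : Measurable (fun x : {i : Fin n // θ i ≠ 0} → ℝ => if ∀ j : {i : Fin n // θ i ≠ 0}, (j : Fin n) < l → c₂ ≤ x j then (1:ℝ) else 0) := by
      have he : (fun x : {i : Fin n // θ i ≠ 0} → ℝ => if ∀ j : {i : Fin n // θ i ≠ 0}, (j : Fin n) < l → c₂ ≤ x j then (1:ℝ) else 0) = Set.indicator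
          {x : {i : Fin n // θ i ≠ 0} → ℝ | ∀ j : {i : Fin n // θ i ≠ 0}, (j : Fin n) < l → c₂ ≤ x j}
          (fun _ => (1:ℝ)) := by
        funext x
        rw [Set.indicator_apply]
        rfl
      rw [he]
      refine Measurable.indicator measurable_const ?_
      have he2 : {x : {i : Fin n // θ i ≠ 0} → ℝ | ∀ j : {i : Fin n // θ i ≠ 0}, (j : Fin n) < l → c₂ ≤ x j}
          = ⋂ (j : {i : Fin n // θ i ≠ 0}), ⋂ (_ : (j : Fin n) < l), {x : {i : Fin n // θ i ≠ 0} → ℝ | c₂ ≤ x j} := by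
        ext x; simp
      rw [he2]
      exact MeasurableSet.iInter fun j => MeasurableSet.iInter fun _ =>
        measurableSet_le measurable_const (measurable_pi_apply j)
    have hφmono : Monotone (fun x : {i : Fin n // θ i ≠ 0} → ℝ => if ∀ j : {i : Fin n // θ i ≠ 0}, (j : Fin n) < l → c₂ ≤ x j then (1:ℝ) else 0) := by
      intro x y hxy
      by_cases hx : ∀ j : {i : Fin n // θ i ≠ 0}, (j : Fin n) < l → c₂ ≤ x j
      · have hy : ∀ j : {i : Fin n // θ i ≠ 0}, (j : Fin n) < l → c₂ ≤ y j :=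
          fun j hj => le_trans (hx j hj) (hxy j)
        simp only [if_pos hx, if_pos hy, le_refl]
      · simp only [if_neg hx]
        split_ifs <;> norm_num
    have hφbdd : ∃ C, ∀ x, |(fun x : {i : Fin n // θ i ≠ 0} → ℝ => if ∀ j : {i : Fin n // θ i ≠ 0}, (j : Fin n) < l → c₂ ≤ x j then (1:ℝ) else 0) x| ≤ C := by
      refine ⟨1, fun x => ?_⟩
      dsimp only
      split_ifs <;> norm_num
    -- the integral of the indicator functional
    have hint : ∀ A' : Set Ω,
        (∫ ω in A', (fun x : {i : Fin n // θ i ≠ 0} → ℝ => if ∀ j : {i : Fin n // θ i ≠ 0}, (j : Fin n) < l → c₂ ≤ x j then (1:ℝ) else 0) (fun i => Real.sign (θ i.1) * T i.1 ω) ∂Pr)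
          = (Pr ({ω | ∀ j, j < l → c₂ ≤ Real.sign (θ j) * T j ω} ∩ A')).toReal := by
      intro A'
      have hfun : (fun ω => (fun x : {i : Fin n // θ i ≠ 0} → ℝ => if ∀ j : {i : Fin n // θ i ≠ 0}, (j : Fin n) < l → c₂ ≤ x j then (1:ℝ) else 0) (fun i => Real.sign (θ i.1) * T i.1 ω))
          = ({ω | ∀ j, j < l → c₂ ≤ Real.sign (θ j) * T j ω} : Set Ω).indicator (fun _ => (1:ℝ)) := by
        funext ω
        dsimp only
        rw [Set.indicator_apply]
        by_cases hω : ω ∈ ({ω | ∀ j, j < l → c₂ ≤ Real.sign (θ j) * T j ω} : Set Ω)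
        · have h2 : ∀ j : {i : Fin n // θ i ≠ 0}, (j : Fin n) < l →
              c₂ ≤ Real.sign (θ j.1) * T j.1 ω := fun j hj => hω j.1 hj
          rw [if_pos h2, if_pos hω]
        · have h2 : ¬ ∀ j : {i : Fin n // θ i ≠ 0}, (j : Fin n) < l →
              c₂ ≤ Real.sign (θ j.1) * T j.1 ω :=
            fun hall => hω (fun j hj => hall ⟨j, hprev j hj⟩ hj)
          rw [if_neg h2, if_neg hω]
      rw [hfun, integral_indicator_const (1:ℝ) (hmG l), measureReal_def, Measure.restrict_apply (hmG l),
        smul_eq_mul, mul_one]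
    by_cases hW0 : Pr {ω | Real.sign (θ l) * T l ω < c₁} = 0
    · -- degenerate case: wrong-tail has probability zero
      have hsub2 : {ω | ((∀ j, j < l → θ j ≠ 0) ∧ θ l ≠ 0) ∧ (∀ j, j < l → c₂ ≤ Real.sign (θ j) * T j ω) ∧ Real.sign (θ l) * T l ω ≤ c₁} ⊆ {ω | Real.sign (θ l) * T l ω < c₁} ∪ {ω | Real.sign (θ l) * T l ω = c₁} := by
        intro ω hω
        rcases lt_or_eq_of_le hω.2.2 with h | h
        · exact Or.inl h
        · exact Or.inr h
      have hD0 : Pr {ω | ((∀ j, j < l → θ j ≠ 0) ∧ θ l ≠ 0) ∧ (∀ j, j < l → c₂ ≤ Real.sign (θ j) * T j ω) ∧ Real.sign (θ l) * T l ω ≤ c₁} = 0 := by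
        refine le_antisymm ?_ zero_le
        calc Pr {ω | ((∀ j, j < l → θ j ≠ 0) ∧ θ l ≠ 0) ∧ (∀ j, j < l → c₂ ≤ Real.sign (θ j) * T j ω) ∧ Real.sign (θ l) * T l ω ≤ c₁} ≤ Pr ({ω | Real.sign (θ l) * T l ω < c₁} ∪ {ω | Real.sign (θ l) * T l ω = c₁}) := measure_mono hsub2
          _ ≤ Pr {ω | Real.sign (θ l) * T l ω < c₁} + Pr {ω | Real.sign (θ l) * T l ω = c₁} := measure_union_le _ _
          _ = 0 := by rw [hW0, hatomS l c₁ hl, add_zero]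
      rw [hD0]
      simp only [ENNReal.toReal_zero]
      exact mul_nonneg hρnn ENNReal.toReal_nonneg
    have hV0 : Pr {ω | Real.sign (θ l) * T l ω < c₂} ≠ 0 :=
      fun h => hW0 (measure_mono_null (fun ω hω => lt_trans hω hc₁₂) h)
    have hineq :
        (∫ ω in {ω | Real.sign (θ l) * T l ω < c₁}, (fun x : {i : Fin n // θ i ≠ 0} → ℝ => if ∀ j : {i : Fin n // θ i ≠ 0}, (j : Fin n) < l → c₂ ≤ x j then (1:ℝ) else 0) (fun i => Real.sign (θ i.1) * T i.1 ω) ∂Pr)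
            / (Pr {ω | Real.sign (θ l) * T l ω < c₁}).toReal
          ≤ (∫ ω in {ω | Real.sign (θ l) * T l ω < c₂}, (fun x : {i : Fin n // θ i ≠ 0} → ℝ => if ∀ j : {i : Fin n // θ i ≠ 0}, (j : Fin n) < l → c₂ ≤ x j then (1:ℝ) else 0) (fun i => Real.sign (θ i.1) * T i.1 ω) ∂Pr)
            / (Pr {ω | Real.sign (θ l) * T l ω < c₂}).toReal :=
      (hPRD ⟨l, hl⟩ (fun x : {i : Fin n // θ i ≠ 0} → ℝ => if ∀ j : {i : Fin n // θ i ≠ 0}, (j : Fin n) < l → c₂ ≤ x j then (1:ℝ) else 0) hφmeas hφmono hφbdd c₁ c₂ hc₁₂.le).2 hW0 hV0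
    rw [hint {ω | Real.sign (θ l) * T l ω < c₁}, hint {ω | Real.sign (θ l) * T l ω < c₂}] at hineq
    have hWpos : 0 < (Pr {ω | Real.sign (θ l) * T l ω < c₁}).toReal := ENNReal.toReal_pos hW0 (hPrFin _)
    have hVpos : 0 < (Pr {ω | Real.sign (θ l) * T l ω < c₂}).toReal := ENNReal.toReal_pos hV0 (hPrFin _)
    have hdiv : (Pr ({ω | ∀ j, j < l → c₂ ≤ Real.sign (θ j) * T j ω} ∩ {ω | Real.sign (θ l) * T l ω < c₁})).toReal * (Pr {ω | Real.sign (θ l) * T l ω < c₂}).toReal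
        ≤ (Pr ({ω | ∀ j, j < l → c₂ ≤ Real.sign (θ j) * T j ω} ∩ {ω | Real.sign (θ l) * T l ω < c₂})).toReal * (Pr {ω | Real.sign (θ l) * T l ω < c₁}).toReal :=
      (div_le_div_iff₀ hWpos hVpos).mp hineq
    have hVW := hsplitm l Set.univ MeasurableSet.univ
    simp only [Set.univ_inter] at hVW
    have hvw := hsplitm l {ω | ∀ j, j < l → c₂ ≤ Real.sign (θ j) * T j ω} (hmG l)
    have hL1l := hL1 l hl
    rw [hVW, hvw] at hdiv
    set W : ℝ := (Pr {ω | Real.sign (θ l) * T l ω < c₁}).toReal with hWdef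
    set Mg : ℝ := (Pr {ω | c₁ ≤ Real.sign (θ l) * T l ω ∧ Real.sign (θ l) * T l ω < c₂}).toReal with hMgdef
    set w : ℝ := (Pr ({ω | ∀ j, j < l → c₂ ≤ Real.sign (θ j) * T j ω} ∩ {ω | Real.sign (θ l) * T l ω < c₁})).toReal with hwdef
    set uu : ℝ := (Pr ({ω | ∀ j, j < l → c₂ ≤ Real.sign (θ j) * T j ω} ∩ {ω | c₁ ≤ Real.sign (θ l) * T l ω ∧ Real.sign (θ l) * T l ω < c₂})).toReal with huudef
    clear hVW hvw hineq hint hφmeas hφmono hφbdd hDeq hV0 hW0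
    have hMgpos : 0 < Mg := by
      nlinarith [mul_pos hWpos (show (0:ℝ) < 1 - a by linarith)]
    have hu_nn : 0 ≤ uu := huudef ▸ ENNReal.toReal_nonneg
    have hWle : W ≤ ρ * Mg := by
      rw [hρdef, div_mul_eq_mul_div, le_div_iff₀ (by linarith : (0:ℝ) < 2*(1-a))]
      linarith
    have hfinal : w ≤ ρ * uu := by
      have h2 : uu * W ≤ uu * (ρ * Mg) := mul_le_mul_of_nonneg_left hWle hu_nn
      nlinarith [hdiv, h2, hMgpos]
    have hsub2 : {ω | ((∀ j, j < l → θ j ≠ 0) ∧ θ l ≠ 0) ∧ (∀ j, j < l → c₂ ≤ Real.sign (θ j) * T j ω) ∧ Real.sign (θ l) * T l ω ≤ c₁} ⊆ ({ω | ∀ j, j < l → c₂ ≤ Real.sign (θ j) * T j ω} ∩ {ω | Real.sign (θ l) * T l ω < c₁}) ∪ {ω | Real.sign (θ l) * T l ω = c₁} := by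
      intro ω hω
      rcases lt_or_eq_of_le hω.2.2 with h | h
      · exact Or.inl ⟨hω.2.1, h⟩
      · exact Or.inr h
    have hDle : Pr {ω | ((∀ j, j < l → θ j ≠ 0) ∧ θ l ≠ 0) ∧ (∀ j, j < l → c₂ ≤ Real.sign (θ j) * T j ω) ∧ Real.sign (θ l) * T l ω ≤ c₁} ≤ Pr ({ω | ∀ j, j < l → c₂ ≤ Real.sign (θ j) * T j ω} ∩ {ω | Real.sign (θ l) * T l ω < c₁}) := by
      calc Pr {ω | ((∀ j, j < l → θ j ≠ 0) ∧ θ l ≠ 0) ∧ (∀ j, j < l → c₂ ≤ Real.sign (θ j) * T j ω) ∧ Real.sign (θ l) * T l ω ≤ c₁} ≤ Pr (({ω | ∀ j, j < l → c₂ ≤ Real.sign (θ j) * T j ω} ∩ {ω | Real.sign (θ l) * T l ω < c₁}) ∪ {ω | Real.sign (θ l) * T l ω = c₁}) :=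
            measure_mono hsub2
        _ ≤ Pr ({ω | ∀ j, j < l → c₂ ≤ Real.sign (θ j) * T j ω} ∩ {ω | Real.sign (θ l) * T l ω < c₁}) + Pr {ω | Real.sign (θ l) * T l ω = c₁} := measure_union_le _ _
        _ = Pr ({ω | ∀ j, j < l → c₂ ≤ Real.sign (θ j) * T j ω} ∩ {ω | Real.sign (θ l) * T l ω < c₁}) := by rw [hatomS l c₁ hl, add_zero]
    calc (Pr {ω | ((∀ j, j < l → θ j ≠ 0) ∧ θ l ≠ 0) ∧ (∀ j, j < l → c₂ ≤ Real.sign (θ j) * T j ω) ∧ Real.sign (θ l) * T l ω ≤ c₁}).toReal ≤ w :=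
          hwdef ▸ ENNReal.toReal_mono (hPrFin _) hDle
      _ ≤ ρ * uu := hfinal
      _ = ρ * (Pr {ω | ((∀ j, j < l → θ j ≠ 0) ∧ θ l ≠ 0) ∧ (∀ j, j < l → c₂ ≤ Real.sign (θ j) * T j ω) ∧ (c₁ ≤ Real.sign (θ l) * T l ω ∧ Real.sign (θ l) * T l ω < c₂)}).toReal := by rw [huudef, hAeq]
  -- measurability of the A events
  have hmA : ∀ l : Fin n, MeasurableSet
      {ω | ((∀ j, j < l → θ j ≠ 0) ∧ θ l ≠ 0) ∧ (∀ j, j < l → c₂ ≤ Real.sign (θ j) * T j ω) ∧ (c₁ ≤ Real.sign (θ l) * T l ω ∧ Real.sign (θ l) * T l ω < c₂)} := by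
    intro l
    by_cases hb : (∀ j, j < l → θ j ≠ 0) ∧ θ l ≠ 0
    · have he : {ω | ((∀ j, j < l → θ j ≠ 0) ∧ θ l ≠ 0) ∧ (∀ j, j < l → c₂ ≤ Real.sign (θ j) * T j ω) ∧ (c₁ ≤ Real.sign (θ l) * T l ω ∧ Real.sign (θ l) * T l ω < c₂)} = {ω | ∀ j, j < l → c₂ ≤ Real.sign (θ j) * T j ω} ∩ {ω | c₁ ≤ Real.sign (θ l) * T l ω ∧ Real.sign (θ l) * T l ω < c₂} := by
        ext ω
        simp only [Set.mem_setOf_eq, Set.mem_inter_iff]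
        exact ⟨fun h => ⟨h.2.1, h.2.2⟩, fun h => ⟨hb, h.1, h.2⟩⟩
      rw [he]
      exact (hmG l).inter ((measurableSet_le measurable_const (hSm l)).inter
        (measurableSet_lt (hSm l) measurable_const))
    · have he : {ω | ((∀ j, j < l → θ j ≠ 0) ∧ θ l ≠ 0) ∧ (∀ j, j < l → c₂ ≤ Real.sign (θ j) * T j ω) ∧ (c₁ ≤ Real.sign (θ l) * T l ω ∧ Real.sign (θ l) * T l ω < c₂)} = (∅ : Set Ω) :=
        Set.eq_empty_iff_forall_notMem.mpr (fun ω h => hb h.1)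
      rw [he]
      exact MeasurableSet.empty
  -- the A events are pairwise disjoint
  have hAkey : ∀ l l' : Fin n, l < l' →
      Disjoint ({ω | ((∀ j, j < l → θ j ≠ 0) ∧ θ l ≠ 0) ∧ (∀ j, j < l → c₂ ≤ Real.sign (θ j) * T j ω) ∧ (c₁ ≤ Real.sign (θ l) * T l ω ∧ Real.sign (θ l) * T l ω < c₂)} : Set Ω)
        ({ω | ((∀ j, j < l' → θ j ≠ 0) ∧ θ l' ≠ 0) ∧ (∀ j, j < l' → c₂ ≤ Real.sign (θ j) * T j ω) ∧ (c₁ ≤ Real.sign (θ l') * T l' ω ∧ Real.sign (θ l') * T l' ω < c₂)} : Set Ω) := by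
    intro l l' hll
    rw [Set.disjoint_left]
    rintro ω ⟨hb, hpre, hmid⟩ ⟨hb', hpre', hmid'⟩
    exact absurd (hpre' l hll) (not_le.mpr hmid.2)
  -- the sum of the A probabilities is at most one
  have hsumA : ∑ l : Fin n, (Pr {ω | ((∀ j, j < l → θ j ≠ 0) ∧ θ l ≠ 0) ∧ (∀ j, j < l → c₂ ≤ Real.sign (θ j) * T j ω) ∧ (c₁ ≤ Real.sign (θ l) * T l ω ∧ Real.sign (θ l) * T l ω < c₂)}).toReal ≤ 1 := by
    have hmeq : Pr (⋃ l : Fin n, {ω | ((∀ j, j < l → θ j ≠ 0) ∧ θ l ≠ 0) ∧ (∀ j, j < l → c₂ ≤ Real.sign (θ j) * T j ω) ∧ (c₁ ≤ Real.sign (θ l) * T l ω ∧ Real.sign (θ l) * T l ω < c₂)})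
        = ∑' l : Fin n, Pr {ω | ((∀ j, j < l → θ j ≠ 0) ∧ θ l ≠ 0) ∧ (∀ j, j < l → c₂ ≤ Real.sign (θ j) * T j ω) ∧ (c₁ ≤ Real.sign (θ l) * T l ω ∧ Real.sign (θ l) * T l ω < c₂)} :=
      measure_iUnion
        (fun l l' hne => hne.lt_or_gt.elim (hAkey l l') (fun hh => (hAkey l' l hh).symm)) hmA
    rw [tsum_fintype] at hmeq
    calc ∑ l : Fin n, (Pr {ω | ((∀ j, j < l → θ j ≠ 0) ∧ θ l ≠ 0) ∧ (∀ j, j < l → c₂ ≤ Real.sign (θ j) * T j ω) ∧ (c₁ ≤ Real.sign (θ l) * T l ω ∧ Real.sign (θ l) * T l ω < c₂)}).toReal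
        = (∑ l : Fin n, Pr {ω | ((∀ j, j < l → θ j ≠ 0) ∧ θ l ≠ 0) ∧ (∀ j, j < l → c₂ ≤ Real.sign (θ j) * T j ω) ∧ (c₁ ≤ Real.sign (θ l) * T l ω ∧ Real.sign (θ l) * T l ω < c₂)}).toReal :=
          (ENNReal.toReal_sum (fun _ _ => hPrFin _)).symm
      _ = (Pr (⋃ l : Fin n, {ω | ((∀ j, j < l → θ j ≠ 0) ∧ θ l ≠ 0) ∧ (∀ j, j < l → c₂ ≤ Real.sign (θ j) * T j ω) ∧ (c₁ ≤ Real.sign (θ l) * T l ω ∧ Real.sign (θ l) * T l ω < c₂)})).toReal := by rw [hmeq]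
      _ ≤ 1 := by
          have h : Pr (⋃ l : Fin n, {ω | ((∀ j, j < l → θ j ≠ 0) ∧ θ l ≠ 0) ∧ (∀ j, j < l → c₂ ≤ Real.sign (θ j) * T j ω) ∧ (c₁ ≤ Real.sign (θ l) * T l ω ∧ Real.sign (θ l) * T l ω < c₂)}) ≤ 1 := prob_le_one
          have h2 := ENNReal.toReal_mono ENNReal.one_ne_top h
          simpa using h2
  -- bound on the union of the D events
  have hUD : (Pr (⋃ l : Fin n, {ω | ((∀ j, j < l → θ j ≠ 0) ∧ θ l ≠ 0) ∧ (∀ j, j < l → c₂ ≤ Real.sign (θ j) * T j ω) ∧ Real.sign (θ l) * T l ω ≤ c₁})).toReal ≤ ρ := by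
    have hsumne : (∑ l : Fin n, Pr {ω | ((∀ j, j < l → θ j ≠ 0) ∧ θ l ≠ 0) ∧ (∀ j, j < l → c₂ ≤ Real.sign (θ j) * T j ω) ∧ Real.sign (θ l) * T l ω ≤ c₁}) ≠ ⊤ :=
      (ENNReal.sum_lt_top.mpr (fun l _ => measure_lt_top Pr _)).ne
    calc (Pr (⋃ l : Fin n, {ω | ((∀ j, j < l → θ j ≠ 0) ∧ θ l ≠ 0) ∧ (∀ j, j < l → c₂ ≤ Real.sign (θ j) * T j ω) ∧ Real.sign (θ l) * T l ω ≤ c₁})).toReal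
        ≤ (∑ l : Fin n, Pr {ω | ((∀ j, j < l → θ j ≠ 0) ∧ θ l ≠ 0) ∧ (∀ j, j < l → c₂ ≤ Real.sign (θ j) * T j ω) ∧ Real.sign (θ l) * T l ω ≤ c₁}).toReal :=
          ENNReal.toReal_mono hsumne (measure_iUnion_fintype_le Pr _)
      _ = ∑ l : Fin n, (Pr {ω | ((∀ j, j < l → θ j ≠ 0) ∧ θ l ≠ 0) ∧ (∀ j, j < l → c₂ ≤ Real.sign (θ j) * T j ω) ∧ Real.sign (θ l) * T l ω ≤ c₁}).toReal :=
          ENNReal.toReal_sum (fun _ _ => hPrFin _)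
      _ ≤ ∑ l : Fin n, ρ * (Pr {ω | ((∀ j, j < l → θ j ≠ 0) ∧ θ l ≠ 0) ∧ (∀ j, j < l → c₂ ≤ Real.sign (θ j) * T j ω) ∧ (c₁ ≤ Real.sign (θ l) * T l ω ∧ Real.sign (θ l) * T l ω < c₂)}).toReal :=
          Finset.sum_le_sum (fun l _ => hDl l)
      _ = ρ * ∑ l : Fin n, (Pr {ω | ((∀ j, j < l → θ j ≠ 0) ∧ θ l ≠ 0) ∧ (∀ j, j < l → c₂ ≤ Real.sign (θ j) * T j ω) ∧ (c₁ ≤ Real.sign (θ l) * T l ω ∧ Real.sign (θ l) * T l ω < c₂)}).toReal :=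
          (Finset.mul_sum _ _ _).symm
      _ ≤ ρ * 1 := mul_le_mul_of_nonneg_left hsumA hρnn
      _ = ρ := mul_one ρ
  -- the key containment
  have hEkey : ∀ ω : Ω, (∃ i : Fin n,
      (∀ j : Fin n, j ≤ i → 2 * min (F 0 (T j ω)) (1 - F 0 (T j ω)) ≤ a) ∧
      (θ i = 0 ∨ (θ i ≠ 0 ∧ θ i * T i ω < 0))) →
      (∃ i : Fin n, θ i = 0 ∧
        (∀ j : Fin n, j ≤ i → 2 * min (F 0 (T j ω)) (1 - F 0 (T j ω)) ≤ a))
      ∨ ω ∈ ⋃ l : Fin n, {ω | ((∀ j, j < l → θ j ≠ 0) ∧ θ l ≠ 0) ∧ (∀ j, j < l → c₂ ≤ Real.sign (θ j) * T j ω) ∧ Real.sign (θ l) * T l ω ≤ c₁} := by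
    intro ω hω
    obtain ⟨i, hi⟩ := hω
    have hne : (Finset.univ.filter (fun i : Fin n =>
        (∀ j : Fin n, j ≤ i → 2 * min (F 0 (T j ω)) (1 - F 0 (T j ω)) ≤ a) ∧
        (θ i = 0 ∨ (θ i ≠ 0 ∧ θ i * T i ω < 0)))).Nonempty := by
      refine ⟨i, ?_⟩
      simp only [Finset.mem_filter, Finset.mem_univ, true_and]
      exact hi
    obtain ⟨hrejAll, herr⟩ : (∀ j : Fin n,
          j ≤ (Finset.univ.filter (fun i : Fin n =>
            (∀ j : Fin n, j ≤ i → 2 * min (F 0 (T j ω)) (1 - F 0 (T j ω)) ≤ a) ∧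
            (θ i = 0 ∨ (θ i ≠ 0 ∧ θ i * T i ω < 0)))).min' hne →
            2 * min (F 0 (T j ω)) (1 - F 0 (T j ω)) ≤ a) ∧ _ := by
      have h := Finset.min'_mem _ hne
      simpa only [Finset.mem_filter, Finset.mem_univ, true_and] using h
    set i₀ : Fin n := (Finset.univ.filter (fun i : Fin n =>
        (∀ j : Fin n, j ≤ i → 2 * min (F 0 (T j ω)) (1 - F 0 (T j ω)) ≤ a) ∧
        (θ i = 0 ∨ (θ i ≠ 0 ∧ θ i * T i ω < 0)))).min' hne with hi₀def
    have hmin : ∀ j : Fin n, j < i₀ → ¬(θ j = 0 ∨ (θ j ≠ 0 ∧ θ j * T j ω < 0)) := by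
      intro j hj herrj
      have hjS : j ∈ Finset.univ.filter (fun i : Fin n =>
          (∀ j : Fin n, j ≤ i → 2 * min (F 0 (T j ω)) (1 - F 0 (T j ω)) ≤ a) ∧
          (θ i = 0 ∨ (θ i ≠ 0 ∧ θ i * T i ω < 0))) := by
        simp only [Finset.mem_filter, Finset.mem_univ, true_and]
        exact ⟨fun k hk => hrejAll k (le_trans hk hj.le), herrj⟩
      exact absurd (Finset.min'_le _ j hjS) (not_le.mpr hj)
    rcases herr with h0 | ⟨hneq, hlt3⟩
    · exact Or.inl ⟨i₀, h0, hrejAll⟩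
    · refine Or.inr (Set.mem_iUnion.mpr ⟨i₀, ?_⟩)
      have hprev : ∀ j, j < i₀ → θ j ≠ 0 :=
        fun j hj h0j => hmin j hj (Or.inl h0j)
      refine ⟨⟨hprev, hneq⟩, ?_, ?_⟩
      · intro j hj
        have hh := hmin j hj
        push_neg at hh
        exact hsucc j ω hh.1 (hh.2 hh.1) (hrej j ω (hrejAll j hj.le))
      · exact hwrong i₀ ω hneq hlt3 (hrej i₀ ω (hrejAll i₀ le_rfl))
  -- conclude
  by_cases hex : ∃ i : Fin n, θ i = 0
  · obtain ⟨i', hi'⟩ := hex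
    have hexN : ∃ t : ℕ, ∃ h : t < n, θ ⟨t, h⟩ = 0 :=
      ⟨i'.1, i'.isLt, by rw [Fin.eta]; exact hi'⟩
    set m₀ : Fin n := ⟨Nat.find hexN, (Nat.find_spec hexN).1⟩ with hm₀def
    have hm₀ : θ m₀ = 0 := (Nat.find_spec hexN).2
    have hm₀min : ∀ i : Fin n, θ i = 0 → m₀ ≤ i := by
      intro i hi
      have h := Nat.find_min' hexN (m := i.1) ⟨i.isLt, by rw [Fin.eta]; exact hi⟩
      exact h
    have hBle : (Pr {ω | T m₀ ω ≤ c₁ ∨ c₂ ≤ T m₀ ω}).toReal ≤ a := by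
      have he : {ω | T m₀ ω ≤ c₁ ∨ c₂ ≤ T m₀ ω}
          = {ω | T m₀ ω ≤ c₁} ∪ {ω | c₂ ≤ T m₀ ω} := Set.setOf_or
      rw [he]
      calc (Pr ({ω | T m₀ ω ≤ c₁} ∪ {ω | c₂ ≤ T m₀ ω})).toReal
          ≤ (Pr {ω | T m₀ ω ≤ c₁} + Pr {ω | c₂ ≤ T m₀ ω}).toReal :=
            ENNReal.toReal_mono (ENNReal.add_ne_top.mpr ⟨hPrFin _, hPrFin _⟩)
              (measure_union_le _ _)
        _ = (Pr {ω | T m₀ ω ≤ c₁}).toReal + (Pr {ω | c₂ ≤ T m₀ ω}).toReal :=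
            ENNReal.toReal_add (hPrFin _) (hPrFin _)
        _ = a := by
            rw [hcdf m₀ c₁, hcompl_lt m₀ c₂, hm₀, hc₁, hc₂]; ring
    have hEsub : {ω | ∃ i : Fin n,
        (∀ j : Fin n, j ≤ i → 2 * min (F 0 (T j ω)) (1 - F 0 (T j ω)) ≤ a) ∧
        (θ i = 0 ∨ (θ i ≠ 0 ∧ θ i * T i ω < 0))}
        ⊆ {ω | T m₀ ω ≤ c₁ ∨ c₂ ≤ T m₀ ω} ∪ ⋃ l : Fin n, {ω | ((∀ j, j < l → θ j ≠ 0) ∧ θ l ≠ 0) ∧ (∀ j, j < l → c₂ ≤ Real.sign (θ j) * T j ω) ∧ Real.sign (θ l) * T l ω ≤ c₁} := by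
      intro ω hω
      rcases hEkey ω hω with ⟨i, h0, hrejAll⟩ | hD
      · exact Or.inl (hrej m₀ ω (hrejAll m₀ (hm₀min i h0)))
      · exact Or.inr hD
    calc (Pr {ω | ∃ i : Fin n,
        (∀ j : Fin n, j ≤ i → 2 * min (F 0 (T j ω)) (1 - F 0 (T j ω)) ≤ a) ∧
        (θ i = 0 ∨ (θ i ≠ 0 ∧ θ i * T i ω < 0))}).toReal
        ≤ (Pr {ω | T m₀ ω ≤ c₁ ∨ c₂ ≤ T m₀ ω} + Pr (⋃ l : Fin n, {ω | ((∀ j, j < l → θ j ≠ 0) ∧ θ l ≠ 0) ∧ (∀ j, j < l → c₂ ≤ Real.sign (θ j) * T j ω) ∧ Real.sign (θ l) * T l ω ≤ c₁})).toReal :=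
          ENNReal.toReal_mono (ENNReal.add_ne_top.mpr ⟨hPrFin _, hPrFin _⟩)
            (le_trans (measure_mono hEsub) (measure_union_le _ _))
      _ = (Pr {ω | T m₀ ω ≤ c₁ ∨ c₂ ≤ T m₀ ω}).toReal
            + (Pr (⋃ l : Fin n, {ω | ((∀ j, j < l → θ j ≠ 0) ∧ θ l ≠ 0) ∧ (∀ j, j < l → c₂ ≤ Real.sign (θ j) * T j ω) ∧ Real.sign (θ l) * T l ω ≤ c₁})).toReal :=
          ENNReal.toReal_add (hPrFin _) (hPrFin _)
      _ ≤ a + ρ := add_le_add hBle hUD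
  · have hEsub : {ω | ∃ i : Fin n,
        (∀ j : Fin n, j ≤ i → 2 * min (F 0 (T j ω)) (1 - F 0 (T j ω)) ≤ a) ∧
        (θ i = 0 ∨ (θ i ≠ 0 ∧ θ i * T i ω < 0))}
        ⊆ ⋃ l : Fin n, {ω | ((∀ j, j < l → θ j ≠ 0) ∧ θ l ≠ 0) ∧ (∀ j, j < l → c₂ ≤ Real.sign (θ j) * T j ω) ∧ Real.sign (θ l) * T l ω ≤ c₁} := by
      intro ω hω
      rcases hEkey ω hω with ⟨i, h0, _⟩ | hD
      · exact absurd ⟨i, h0⟩ hex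
      · exact hD
    calc (Pr {ω | ∃ i : Fin n,
        (∀ j : Fin n, j ≤ i → 2 * min (F 0 (T j ω)) (1 - F 0 (T j ω)) ≤ a) ∧
        (θ i = 0 ∨ (θ i ≠ 0 ∧ θ i * T i ω < 0))}).toReal
        ≤ (Pr (⋃ l : Fin n, {ω | ((∀ j, j < l → θ j ≠ 0) ∧ θ l ≠ 0) ∧ (∀ j, j < l → c₂ ≤ Real.sign (θ j) * T j ω) ∧ Real.sign (θ l) * T l ω ≤ c₁})).toReal :=
          ENNReal.toReal_mono (hPrFin _) (measure_mono hEsub)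
      _ ≤ ρ := hUD
      _ ≤ a + ρ := by linarith

set_option maxHeartbeats 1000000 in
/-- Remark 3: Under MLR (Assumption 2) and positive regression
dependence of the signed false-null statistics (Assumption 3), with no assumption on
the dependence between true-null and false-null statistics, Procedure 2 satisfies
mdFWER ≤ 2α; consequently the directional fixed sequence procedure with common
critical constant α/2 satisfies mdFWER ≤ α. -/
theorem procedure2_mdFWER_le_two_alpha_no_indep
    {Ω : Type*} [MeasurableSpace Ω] (Pr : Measure Ω) [IsProbabilityMeasure Pr]
    (F : ℝ → ℝ → ℝ)
    (hFcont : ∀ θ', Continuous (F θ'))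
    (hFmono : ∀ θ', Monotone (F θ'))
    (hF0strict : StrictMono (F 0))
    (hFsym : ∀ x : ℝ, F 0 (-x) = 1 - F 0 x)
    (hstoch : ∀ θ' θ'' : ℝ, θ' ≤ θ'' → ∀ x, F θ'' x ≤ F θ' x)
    -- MLR assumption (Assumption 2)
    (f : ℝ → ℝ → ℝ)
    (hf_nonneg : ∀ θ' x, 0 ≤ f θ' x)
    (hf_meas : ∀ θ', Measurable (f θ'))
    (hf_cdf : ∀ θ' x, F θ' x = ∫ t in Set.Iic x, f θ' t)
    (hMLR : ∀ θ' θ'' : ℝ, θ' < θ'' → ∀ x₁ x₂ : ℝ, x₁ < x₂ →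
      f θ'' x₁ * f θ' x₂ ≤ f θ'' x₂ * f θ' x₁)
    (n : ℕ) (θ : Fin n → ℝ)
    (T : Fin n → Ω → ℝ) (hT : ∀ i, Measurable (T i))
    (hcdf : ∀ i x, (Pr {ω | T i ω ≤ x}).toReal = F (θ i) x)
    -- Assumption 3: positive regression dependence of the signed false-null statistics
    (hPRD : ∀ k : {i : Fin n // θ i ≠ 0},
      ∀ φ : ({i : Fin n // θ i ≠ 0} → ℝ) → ℝ,
      Measurable φ → Monotone φ → (∃ C, ∀ x, |φ x| ≤ C) →
      ∀ u u' : ℝ, u ≤ u' →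
        (Pr {ω | u ≤ Real.sign (θ k.1) * T k.1 ω} ≠ 0 →
         Pr {ω | u' ≤ Real.sign (θ k.1) * T k.1 ω} ≠ 0 →
          (∫ ω in {ω | u ≤ Real.sign (θ k.1) * T k.1 ω},
              φ (fun i => Real.sign (θ i.1) * T i.1 ω) ∂Pr)
              / (Pr {ω | u ≤ Real.sign (θ k.1) * T k.1 ω}).toReal
            ≤ (∫ ω in {ω | u' ≤ Real.sign (θ k.1) * T k.1 ω},
              φ (fun i => Real.sign (θ i.1) * T i.1 ω) ∂Pr)
              / (Pr {ω | u' ≤ Real.sign (θ k.1) * T k.1 ω}).toReal) ∧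
        (Pr {ω | Real.sign (θ k.1) * T k.1 ω < u} ≠ 0 →
         Pr {ω | Real.sign (θ k.1) * T k.1 ω < u'} ≠ 0 →
          (∫ ω in {ω | Real.sign (θ k.1) * T k.1 ω < u},
              φ (fun i => Real.sign (θ i.1) * T i.1 ω) ∂Pr)
              / (Pr {ω | Real.sign (θ k.1) * T k.1 ω < u}).toReal
            ≤ (∫ ω in {ω | Real.sign (θ k.1) * T k.1 ω < u'},
              φ (fun i => Real.sign (θ i.1) * T i.1 ω) ∂Pr)
              / (Pr {ω | Real.sign (θ k.1) * T k.1 ω < u'}).toReal))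
    (α : ℝ) (hα : α ∈ Set.Ioo (0 : ℝ) 1) :
    (Pr {ω | ∃ i : Fin n,
        (∀ j : Fin n, j ≤ i →
          2 * min (F 0 (T j ω)) (1 - F 0 (T j ω)) ≤ α) ∧
        (θ i = 0 ∨ (θ i ≠ 0 ∧ θ i * T i ω < 0))}).toReal ≤ 2 * α
    ∧
    (Pr {ω | ∃ i : Fin n,
        (∀ j : Fin n, j ≤ i →
          2 * min (F 0 (T j ω)) (1 - F 0 (T j ω)) ≤ α / 2) ∧
        (θ i = 0 ∨ (θ i ≠ 0 ∧ θ i * T i ω < 0))}).toReal ≤ α := by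
  obtain ⟨hα0, hα1⟩ := hα
  constructor
  · rcases le_or_gt α (1/2) with h | h
    · have h2 := aux_mdFWER Pr F hFcont hFmono hF0strict hFsym f hf_nonneg hf_meas hf_cdf hMLR
        n θ T hT hcdf hPRD α hα0 hα1
      have h3 : α / (2*(1-α)) ≤ α := by
        rw [div_le_iff₀ (by linarith : (0:ℝ) < 2*(1-α))]
        nlinarith
      linarith
    · calc (Pr {ω | ∃ i : Fin n,
          (∀ j : Fin n, j ≤ i →
            2 * min (F 0 (T j ω)) (1 - F 0 (T j ω)) ≤ α) ∧
          (θ i = 0 ∨ (θ i ≠ 0 ∧ θ i * T i ω < 0))}).toReal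
          ≤ (1 : ENNReal).toReal := ENNReal.toReal_mono ENNReal.one_ne_top prob_le_one
        _ = 1 := by simp
        _ ≤ 2 * α := by linarith
  · have h2 := aux_mdFWER Pr F hFcont hFmono hF0strict hFsym f hf_nonneg hf_meas hf_cdf hMLR
      n θ T hT hcdf hPRD (α/2) (by linarith) (by linarith)
    have h3 : α/2 / (2*(1-α/2)) ≤ α/2 := div_le_self (by linarith) (by linarith)
    linarith
end
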